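/- arXiv:1312.3834 — 9 statements merged into one kernel-verified Lean document; each statement's English description precedes it below -/
import Mathlib

section
/- Let τ be a polyhedral cone in ℝ^n and {v_i : i ∈ ℕ} a sequence in τ. Then there exists a face σ of τ and a subsequence {u_j} of {v_i} such that σ is the minimum face of boundedness of every subsequence of {u_j}. -/
open Filter

/-- The polyhedral cone in `ℝ^n` defined by a finite set `Ψ` of linear functionals. -/
def polyCone (n : ℕ) (Ψ : Finset ((Fin n → ℝ) →ₗ[ℝ] ℝ)) : Set (Fin n → ℝ) :=
  {x | ∀ ψ ∈ Ψ, 0 ≤ ψ x}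

/-- The face of the polyhedral cone `polyCone n Ψ` cut out by a subset `S ⊆ Ψ` of the
defining functionals. -/
def polyFace (n : ℕ) (Ψ S : Finset ((Fin n → ℝ) →ₗ[ℝ] ℝ)) : Set (Fin n → ℝ) :=
  {x | (∀ ψ ∈ Ψ, 0 ≤ ψ x) ∧ ∀ ψ ∈ S, ψ x = 0}

/-- A sequence is `σ`-bounded if every linear functional vanishing on `σ` is bounded on
the sequence. -/
def SigmaBounded (n : ℕ) (σ : Set (Fin n → ℝ)) (v : ℕ → (Fin n → ℝ)) : Prop :=
  ∀ ψ : (Fin n → ℝ) →ₗ[ℝ] ℝ, (∀ x ∈ σ, ψ x = 0) → ∃ M : ℝ, ∀ i, |ψ (v i)| ≤ M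

namespace MFBAux

variable {n : ℕ}

/-- The vector of values of a functional on the standard basis. -/
noncomputable def vecL : ((Fin n → ℝ) →ₗ[ℝ] ℝ) →ₗ[ℝ] (Fin n → ℝ) where
  toFun φ := fun i => φ (Pi.single i 1)
  map_add' φ φ' := by funext i; simp
  map_smul' c φ := by funext i; simp

lemma single_eq (i : Fin n) : (fun j => if i = j then (1:ℝ) else 0) = Pi.single i 1 := by
  funext j
  simp [Pi.single_apply, eq_comm]

lemma apply_eq_sum (φ : (Fin n → ℝ) →ₗ[ℝ] ℝ) (x : Fin n → ℝ) :
    φ x = ∑ i, x i * vecL φ i := by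
  rw [LinearMap.pi_apply_eq_sum_univ φ x]
  refine Finset.sum_congr rfl fun i _ => ?_
  rw [single_eq, smul_eq_mul]
  rfl

lemma vecL_injective : Function.Injective (vecL (n := n)) := by
  intro φ φ' hh
  refine LinearMap.ext fun x => ?_
  rw [apply_eq_sum φ x, apply_eq_sum φ' x, hh]

/-- The cone of nonnegative combinations of a finite set of vectors. -/
def coneComb (B : Finset (Fin n → ℝ)) : Set (Fin n → ℝ) :=
  {x | ∃ lam : (Fin n → ℝ) → ℝ, (∀ w, 0 ≤ lam w) ∧ x = ∑ w ∈ B, lam w • w}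

lemma coneComb_mono {B' B : Finset (Fin n → ℝ)} (h : B' ⊆ B) : coneComb B' ⊆ coneComb B := by
  classical
  rintro x ⟨lam, h0, rfl⟩
  refine ⟨fun w => if w ∈ B' then lam w else 0, fun w => by by_cases hw : w ∈ B' <;> simp [hw, h0 w], ?_⟩
  rw [← Finset.sum_subset h (fun w _ hw => by simp [hw])]
  exact Finset.sum_congr rfl fun w hw => by simp [hw]

lemma convex_coneComb (B : Finset (Fin n → ℝ)) : Convex ℝ (coneComb B) := by
  rintro x ⟨l1, h1, rfl⟩ y ⟨l2, h2, rfl⟩ a b ha hb _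
  refine ⟨fun w => a * l1 w + b * l2 w, fun w => add_nonneg (mul_nonneg ha (h1 w)) (mul_nonneg hb (h2 w)), ?_⟩
  rw [Finset.smul_sum, Finset.smul_sum, ← Finset.sum_add_distrib]
  refine Finset.sum_congr rfl fun w _ => ?_
  rw [add_smul, mul_smul, mul_smul]

lemma caratheodory (B : Finset (Fin n → ℝ)) :
    ∀ lam : (Fin n → ℝ) → ℝ, (∀ w, 0 ≤ lam w) →
    ∃ B', B' ⊆ B ∧ LinearIndependent ℝ ((↑) : ↥B' → (Fin n → ℝ)) ∧
      (∑ w ∈ B, lam w • w) ∈ coneComb B' := by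
  classical
  induction B using Finset.strongInduction with
  | _ B ih =>
    intro lam h0
    by_cases hli : LinearIndependent ℝ ((↑) : ↥B → (Fin n → ℝ))
    · exact ⟨B, Finset.Subset.refl B, hli, lam, h0, rfl⟩
    · rw [Fintype.linearIndependent_iff] at hli
      push_neg at hli
      obtain ⟨g, hgsum, i0, hgi0⟩ := hli
      have hrel : ∃ c : (Fin n → ℝ) → ℝ, (∑ w ∈ B, c w • w = 0) ∧ ∃ w ∈ B, 0 < c w := by
        by_cases hpos : ∃ i : ↥B, 0 < g i
        · obtain ⟨i, hi⟩ := hpos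
          refine ⟨fun w => if hw : w ∈ B then g ⟨w, hw⟩ else 0, ?_, i, i.2, by simp [i.2, hi]⟩
          rw [← hgsum, ← Finset.sum_attach B (fun w => (if hw : w ∈ B then g ⟨w, hw⟩ else 0) • w)]
          exact Finset.sum_congr rfl fun w _ => by simp [w.2]
        · push_neg at hpos
          refine ⟨fun w => if hw : w ∈ B then -g ⟨w, hw⟩ else 0, ?_, i0, i0.2, ?_⟩
          · rw [← Finset.sum_attach B (fun w => (if hw : w ∈ B then -g ⟨w, hw⟩ else 0) • w)]
            simp only [Subtype.coe_eta]
            have : ∑ w ∈ B.attach, (if hw : (w : Fin n → ℝ) ∈ B then -g ⟨w, hw⟩ else 0) • (w : Fin n → ℝ) = -∑ w : ↥B, g w • (w : Fin n → ℝ) := by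
              rw [← Finset.sum_neg_distrib]
              exact Finset.sum_congr rfl fun w _ => by simp [w.2]
            rw [this, hgsum, neg_zero]
          · simp only [i0.2, dif_pos]
            have := lt_of_le_of_ne (hpos i0) hgi0
            simpa using this
      obtain ⟨c, hcsum, w1, hw1B, hw1pos⟩ := hrel
      set P := B.filter (fun w => 0 < c w) with hP
      have hPne : P.Nonempty := ⟨w1, Finset.mem_filter.mpr ⟨hw1B, hw1pos⟩⟩
      obtain ⟨w0, hw0P, hw0min⟩ := P.exists_min_image (fun w => lam w / c w) hPne
      have hw0B : w0 ∈ B := (Finset.mem_filter.mp hw0P).1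
      have hcw0 : 0 < c w0 := (Finset.mem_filter.mp hw0P).2
      set t := lam w0 / c w0 with ht
      have ht0 : 0 ≤ t := div_nonneg (h0 w0) hcw0.le
      set lam' : (Fin n → ℝ) → ℝ := fun w => if w ∈ B.erase w0 then lam w - t * c w else 0 with hlam'
      have hlam'0 : ∀ w, 0 ≤ lam' w := by
        intro w
        rw [hlam']
        dsimp only
        split_ifs with hw
        · have hwB : w ∈ B := Finset.mem_of_mem_erase hw
          rcases lt_or_ge 0 (c w) with hc | hc
          · have : t ≤ lam w / c w := hw0min w (Finset.mem_filter.mpr ⟨hwB, hc⟩)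
            have := (le_div_iff₀ hc).mp this
            linarith
          · nlinarith [h0 w]
        · exact le_refl 0
      have hsum : ∑ w ∈ B, lam w • w = ∑ w ∈ B.erase w0, lam' w • w := by
        have h1 : ∑ w ∈ B.erase w0, lam' w • w = ∑ w ∈ B.erase w0, (lam w - t * c w) • w :=
          Finset.sum_congr rfl fun w hw => by rw [hlam']; simp [hw]
        have h2 : ∑ w ∈ B, (lam w - t * c w) • w = ∑ w ∈ B.erase w0, (lam w - t * c w) • w := by
          rw [Finset.sum_erase]
          rw [ht]
          have : lam w0 - lam w0 / c w0 * c w0 = 0 := by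
            rw [div_mul_cancel₀ _ hcw0.ne', sub_self]
          rw [this, zero_smul]
        have h3 : ∑ w ∈ B, (lam w - t * c w) • w = ∑ w ∈ B, lam w • w := by
          simp only [sub_smul, Finset.sum_sub_distrib]
          have : ∑ w ∈ B, (t * c w) • w = t • ∑ w ∈ B, c w • w := by
            rw [Finset.smul_sum]
            exact Finset.sum_congr rfl fun w _ => by rw [mul_smul]
          rw [this, hcsum, smul_zero, sub_zero]
        rw [h1, ← h2, h3]
      obtain ⟨B', hB'sub, hB'li, hB'mem⟩ := ih (B.erase w0) (Finset.erase_ssubset hw0B) lam' hlam'0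
      refine ⟨B', hB'sub.trans (Finset.erase_subset _ _), hB'li, ?_⟩
      rwa [hsum]

lemma isClosed_coneComb_of_li (B : Finset (Fin n → ℝ))
    (hB : LinearIndependent ℝ ((↑) : ↥B → (Fin n → ℝ))) :
    IsClosed (coneComb B) := by
  classical
  let f : (↥B → ℝ) →ₗ[ℝ] (Fin n → ℝ) :=
    { toFun := fun lam => ∑ i : ↥B, lam i • (i : Fin n → ℝ)
      map_add' := by
        intro x y
        simp only [Pi.add_apply, add_smul, Finset.sum_add_distrib]
      map_smul' := by
        intro c x
        simp only [Pi.smul_apply, smul_eq_mul, RingHom.id_apply, Finset.smul_sum, mul_smul] }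
  have hinj : Function.Injective f := by
    rw [injective_iff_map_eq_zero]
    intro lam hlam
    funext i
    exact Fintype.linearIndependent_iff.mp hB lam hlam i
  have hemb := LinearMap.isClosedEmbedding_of_injective (f := f) (by
    rw [LinearMap.ker_eq_bot]; exact hinj)
  have hC : IsClosed {lam : ↥B → ℝ | ∀ i, 0 ≤ lam i} := by
    have : {lam : ↥B → ℝ | ∀ i, 0 ≤ lam i} = ⋂ i, {lam | 0 ≤ lam i} := by
      ext lam; simp [Set.mem_iInter]
    rw [this]
    exact isClosed_iInter fun i => isClosed_le continuous_const (continuous_apply i)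
  have himg : coneComb B = f '' {lam : ↥B → ℝ | ∀ i, 0 ≤ lam i} := by
    ext x
    constructor
    · rintro ⟨lam, h0, rfl⟩
      refine ⟨fun i => lam i, fun i => h0 i, ?_⟩
      show ∑ i : ↥B, lam i • (i : Fin n → ℝ) = _
      rw [← Finset.sum_coe_sort B (fun w => lam w • w)]
    · rintro ⟨lam, h0, rfl⟩
      refine ⟨fun w => if hw : w ∈ B then lam ⟨w, hw⟩ else 0,
        fun w => by by_cases hw : w ∈ B <;> simp [hw, h0 _], ?_⟩
      show f lam = _
      rw [← Finset.sum_attach B (fun w => (if hw : w ∈ B then lam ⟨w, hw⟩ else 0) • w)]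
      show ∑ i : ↥B, lam i • (i : Fin n → ℝ) = _
      exact Finset.sum_congr rfl fun w _ => by simp [w.2]
  rw [himg]
  exact hemb.isClosedMap _ hC

lemma isClosed_coneComb (B : Finset (Fin n → ℝ)) : IsClosed (coneComb B) := by
  classical
  have hun : coneComb B = ⋃ B' ∈ (B.powerset.filter
      (fun B' : Finset (Fin n → ℝ) => LinearIndependent ℝ ((↑) : ↥B' → (Fin n → ℝ)))), coneComb B' := by
    ext x
    constructor
    · rintro ⟨lam, h0, rfl⟩
      obtain ⟨B', hB'B, hli, hx⟩ := caratheodory B lam h0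
      exact Set.mem_biUnion (Finset.mem_filter.mpr ⟨Finset.mem_powerset.mpr hB'B, hli⟩) hx
    · intro hx
      obtain ⟨B', hB', hxB'⟩ := Set.mem_iUnion₂.mp hx
      exact coneComb_mono (Finset.mem_powerset.mp (Finset.mem_filter.mp hB').1) hxB'
  rw [hun]
  exact Set.Finite.isClosed_biUnion (Finset.finite_toSet _)
    (fun B' hB' => isClosed_coneComb_of_li B' (Finset.mem_filter.mp hB').2)

/-- Farkas' lemma for polyhedral cones in `ℝ^n`. -/
lemma farkas (A : Finset ((Fin n → ℝ) →ₗ[ℝ] ℝ)) (ψ : (Fin n → ℝ) →ₗ[ℝ] ℝ)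
    (h : ∀ x : Fin n → ℝ, (∀ a ∈ A, 0 ≤ a x) → 0 ≤ ψ x) :
    ∃ lam : ((Fin n → ℝ) →ₗ[ℝ] ℝ) → ℝ, (∀ a, 0 ≤ lam a) ∧ ψ = ∑ a ∈ A, lam a • a := by
  classical
  by_cases hmem : vecL ψ ∈ coneComb (A.image vecL)
  · obtain ⟨mu, hmu0, hmu⟩ := hmem
    refine ⟨fun a => mu (vecL a), fun a => hmu0 _, vecL_injective ?_⟩
    rw [map_sum]
    simp only [map_smul]
    rw [hmu, Finset.sum_image (fun x _ y _ hxy => vecL_injective hxy)]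
  · exfalso
    obtain ⟨f, u, hfu, hb⟩ := geometric_hahn_banach_point_closed
      (convex_coneComb (A.image vecL)) (isClosed_coneComb (A.image vecL)) hmem
    have h0K : (0 : Fin n → ℝ) ∈ coneComb (A.image vecL) :=
      ⟨fun _ => 0, fun _ => le_refl 0, by simp⟩
    have hu0 : u < 0 := by simpa using hb 0 h0K
    have hW0 : ∀ w ∈ A.image vecL, 0 ≤ f w := by
      intro w hw
      by_contra hneg
      push_neg at hneg
      have htmem : ∀ t : ℝ, 0 ≤ t → t • w ∈ coneComb (A.image vecL) := by
        intro t htt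
        refine ⟨fun w' => if w' = w then t else 0,
          fun w' => by by_cases hw' : w' = w <;> simp [hw', htt], ?_⟩
        rw [Finset.sum_eq_single_of_mem w hw (fun w' _ hw' => by simp [hw'])]
        simp
      have hcontr := hb _ (htmem (u / f w) (div_nonneg_iff.mpr (Or.inr ⟨hu0.le, hneg.le⟩)))
      rw [map_smul, smul_eq_mul, div_mul_cancel₀ u hneg.ne] at hcontr
      exact lt_irrefl u hcontr
    set x0 : Fin n → ℝ := fun i => f (Pi.single i 1) with hx0
    have key : ∀ φ : (Fin n → ℝ) →ₗ[ℝ] ℝ, φ x0 = f (vecL φ) := by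
      intro φ
      have hf := LinearMap.pi_apply_eq_sum_univ (f : (Fin n → ℝ) →ₗ[ℝ] ℝ) (vecL φ)
      rw [apply_eq_sum φ x0,
        show (f (vecL φ) : ℝ) = (f : (Fin n → ℝ) →ₗ[ℝ] ℝ) (vecL φ) from rfl, hf]
      refine Finset.sum_congr rfl fun i _ => ?_
      rw [single_eq, smul_eq_mul, mul_comm]
      rfl
    have hA0 : ∀ a ∈ A, 0 ≤ a x0 := fun a ha =>
      (key a) ▸ hW0 (vecL a) (Finset.mem_image_of_mem _ ha)
    have hψx0 : ψ x0 < 0 := by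
      rw [key ψ]
      exact hfu.trans hu0
    exact absurd (h x0 hA0) (not_le.mpr hψx0)

/-- Subsequence extraction: along a subsequence, every functional in a finite set is either
bounded above or tends to infinity. -/
lemma exists_subseq (Ψ : Finset ((Fin n → ℝ) →ₗ[ℝ] ℝ)) (v : ℕ → (Fin n → ℝ)) :
    ∃ g : ℕ → ℕ, StrictMono g ∧ ∀ φ ∈ Ψ,
      (∃ M : ℝ, ∀ j, φ (v (g j)) ≤ M) ∨ Tendsto (fun j => φ (v (g j))) atTop atTop := by
  classical
  induction Ψ using Finset.induction_on with
  | empty => exact ⟨id, strictMono_id, fun φ hφ => absurd hφ (Finset.notMem_empty φ)⟩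
  | @insert φ s hφs ih =>
    obtain ⟨g, hg, hgs⟩ := ih
    by_cases htop : Tendsto (fun j => φ (v (g j))) atTop atTop
    · refine ⟨g, hg, fun φ' hφ' => ?_⟩
      rcases Finset.mem_insert.mp hφ' with rfl | h'
      · exact Or.inr htop
      · exact hgs φ' h'
    · rw [tendsto_atTop] at htop
      push_neg at htop
      obtain ⟨M, hM⟩ := htop
      have hM' : ∃ᶠ j in atTop, φ (v (g j)) < M := hM
      obtain ⟨h, hmono, hh⟩ := Filter.extraction_of_frequently_atTop hM'
      refine ⟨g ∘ h, hg.comp hmono, fun φ' hφ' => ?_⟩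
      rcases Finset.mem_insert.mp hφ' with rfl | h'
      · exact Or.inl ⟨M, fun j => (hh j).le⟩
      · rcases hgs φ' h' with ⟨M', hM'b⟩ | htop'
        · exact Or.inl ⟨M', fun j => hM'b (h j)⟩
        · exact Or.inr (htop'.comp hmono.tendsto_atTop)

end MFBAux

open MFBAux in
/-- Given a sequence in a polyhedral cone `τ`, there is a face `σ` of `τ` and a
subsequence such that `σ` is the minimum face of boundedness of every subsequence of
that subsequence. -/
theorem exists_subseq_with_min_face_of_boundedness (n : ℕ)
    (Ψ : Finset ((Fin n → ℝ) →ₗ[ℝ] ℝ)) (v : ℕ → (Fin n → ℝ))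
    (hv : ∀ i, v i ∈ polyCone n Ψ) :
    ∃ (S : Finset ((Fin n → ℝ) →ₗ[ℝ] ℝ)), S ⊆ Ψ ∧
      ∃ g : ℕ → ℕ, StrictMono g ∧
        ∀ h : ℕ → ℕ, StrictMono h →
          SigmaBounded n (polyFace n Ψ S) (v ∘ g ∘ h) ∧
          ∀ T : Finset ((Fin n → ℝ) →ₗ[ℝ] ℝ), T ⊆ Ψ →
            SigmaBounded n (polyFace n Ψ T) (v ∘ g ∘ h) →
            polyFace n Ψ S ⊆ polyFace n Ψ T := by
  classical
  obtain ⟨g, hg, hdich⟩ := exists_subseq Ψ v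
  set S := Ψ.filter (fun φ => ∃ M : ℝ, ∀ j, φ (v (g j)) ≤ M) with hS
  have hSΨ : S ⊆ Ψ := Finset.filter_subset _ _
  refine ⟨S, hSΨ, g, hg, fun h hh => ?_⟩
  have hnonneg : ∀ φ ∈ Ψ, ∀ i, 0 ≤ φ (v i) := fun φ hφ i => hv i φ hφ
  have htop : ∀ φ ∈ Ψ, φ ∉ S → Tendsto (fun j => φ (v (g j))) atTop atTop := by
    intro φ hφ hφS
    rcases hdich φ hφ with hb | ht
    · exact absurd (Finset.mem_filter.mpr ⟨hφ, hb⟩) hφS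
    · exact ht
  constructor
  · -- SigmaBounded
    intro ψ hψ
    set A : Finset ((Fin n → ℝ) →ₗ[ℝ] ℝ) := Ψ ∪ S.image (fun φ => -φ) with hA
    have hAchar : ∀ x : Fin n → ℝ, (∀ a ∈ A, 0 ≤ a x) → x ∈ polyFace n Ψ S := by
      intro x hx
      refine ⟨fun φ hφ => hx φ (Finset.mem_union_left _ hφ), fun φ hφ => ?_⟩
      have h1 := hx φ (Finset.mem_union_left _ (hSΨ hφ))
      have h2 := hx (-φ) (Finset.mem_union_right _ (Finset.mem_image_of_mem _ hφ))
      rw [LinearMap.neg_apply] at h2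
      linarith
    have hfk1 : ∀ x : Fin n → ℝ, (∀ a ∈ A, 0 ≤ a x) → 0 ≤ ψ x := fun x hx =>
      (hψ x (hAchar x hx)).ge
    have hfk2 : ∀ x : Fin n → ℝ, (∀ a ∈ A, 0 ≤ a x) → 0 ≤ (-ψ) x := fun x hx => by
      rw [LinearMap.neg_apply, hψ x (hAchar x hx), neg_zero]
    obtain ⟨lam, hlam0, hlam⟩ := farkas A ψ hfk1
    obtain ⟨mu, hmu0, hmu⟩ := farkas A (-ψ) hfk2
    have hlb : ∀ a ∈ A, ∃ M : ℝ, 0 ≤ M ∧ ∀ j, -M ≤ a (v (g j)) := by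
      intro a ha
      rcases Finset.mem_union.mp ha with haΨ | haN
      · exact ⟨0, le_refl 0, fun j => by simpa using hnonneg a haΨ (g j)⟩
      · obtain ⟨φ, hφS, rfl⟩ := Finset.mem_image.mp haN
        obtain ⟨M, hM⟩ := (Finset.mem_filter.mp hφS).2
        have hM0 : 0 ≤ M := le_trans (hnonneg φ (hSΨ hφS) (g 0)) (hM 0)
        refine ⟨M, hM0, fun j => ?_⟩
        rw [LinearMap.neg_apply]
        exact neg_le_neg (hM j)
    choose! Mf hMf0 hMf using hlb
    set C := ∑ a ∈ A, (lam a + mu a) * Mf a with hC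
    refine ⟨C, fun j => ?_⟩
    have e1 : ψ (v (g (h j))) = ∑ a ∈ A, lam a * a (v (g (h j))) := by
      conv_lhs => rw [hlam]
      simp [LinearMap.sum_apply, LinearMap.smul_apply, smul_eq_mul]
    have e2 : -ψ (v (g (h j))) = ∑ a ∈ A, mu a * a (v (g (h j))) := by
      conv_lhs => rw [show -ψ (v (g (h j))) = (-ψ) (v (g (h j))) from rfl, hmu]
      simp [LinearMap.sum_apply, LinearMap.smul_apply, smul_eq_mul]
    have hterm : ∀ (nu : ((Fin n → ℝ) →ₗ[ℝ] ℝ) → ℝ), (∀ a, 0 ≤ nu a) →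
        -(∑ a ∈ A, nu a * Mf a) ≤ ∑ a ∈ A, nu a * a (v (g (h j))) := by
      intro nu hnu
      rw [← Finset.sum_neg_distrib]
      refine Finset.sum_le_sum fun a ha => ?_
      have := hMf a ha (h j)
      nlinarith [hnu a]
    have hCsplit : C = ∑ a ∈ A, lam a * Mf a + ∑ a ∈ A, mu a * Mf a := by
      rw [hC, ← Finset.sum_add_distrib]
      exact Finset.sum_congr rfl fun a _ => by ring
    have hlow : -C ≤ ψ ((v ∘ g ∘ h) j) := by
      show -C ≤ ψ (v (g (h j)))
      rw [e1]
      refine le_trans ?_ (hterm lam hlam0)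
      rw [hCsplit]
      have : 0 ≤ ∑ a ∈ A, mu a * Mf a :=
        Finset.sum_nonneg fun a ha => mul_nonneg (hmu0 a) (hMf0 a ha)
      linarith
    have hhigh : ψ ((v ∘ g ∘ h) j) ≤ C := by
      show ψ (v (g (h j))) ≤ C
      have := hterm mu hmu0
      rw [← e2] at this
      rw [hCsplit]
      have h0' : 0 ≤ ∑ a ∈ A, lam a * Mf a :=
        Finset.sum_nonneg fun a ha => mul_nonneg (hlam0 a) (hMf0 a ha)
      linarith
    exact abs_le.mpr ⟨hlow, hhigh⟩
  · -- minimality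
    intro T hTΨ hTbdd
    have hTS : ∀ φ ∈ T, φ ∈ S := by
      intro φ hφT
      by_contra hφS
      have ht := (htop φ (hTΨ hφT) hφS).comp hh.tendsto_atTop
      obtain ⟨M, hM⟩ := hTbdd φ (fun x hx => hx.2 φ hφT)
      obtain ⟨j, hj⟩ := (tendsto_atTop.mp ht (M + 1)).exists
      have h1 := hM j
      have h2 : M + 1 ≤ φ (v (g (h j))) := hj
      have h4 : |φ ((v ∘ g ∘ h) j)| ≤ M := h1
      have h5 : φ (v (g (h j))) ≤ |φ (v (g (h j)))| := le_abs_self _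
      exact absurd (le_trans h2 (le_trans h5 h4)) (by linarith)
    intro x hx
    exact ⟨hx.1, fun φ hφT => hx.2 φ (hTS φ hφT)⟩
end

section
/- If a sequence {v_i} in a polyhedral cone τ ⊂ ℝ^n is both σ-bounded and ρ-bounded for faces σ, ρ of τ, then it is (σ ∩ ρ)-bounded. -/
open Finset

section ConeLemmas

set_option linter.unusedSectionVars false

variable {E : Type*} [NormedAddCommGroup E] [InnerProductSpace ℝ E] [FiniteDimensional ℝ E]

/-- The set of nonnegative combinations of elements of a finite set. -/
def coneOf (G : Finset E) : Set E :=
  {x | ∃ c : E → ℝ, (∀ g, 0 ≤ c g) ∧ ∑ g ∈ G, c g • g = x}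

theorem coneOf_mono {G₁ G₂ : Finset E} (h : G₁ ⊆ G₂) : coneOf G₁ ⊆ coneOf G₂ := by
  classical
  rintro x ⟨c, hc, rfl⟩
  refine ⟨fun g => if g ∈ G₁ then c g else 0, fun g => ?_, ?_⟩
  · dsimp only; split_ifs; exacts [hc g, le_rfl]
  · rw [← Finset.sum_subset h (fun g _ hg => by simp [hg])]
    exact Finset.sum_congr rfl fun g hg => by simp [hg]

theorem zero_mem_coneOf (G : Finset E) : (0 : E) ∈ coneOf G :=
  ⟨fun _ => 0, fun _ => le_rfl, by simp⟩

theorem mem_coneOf_self {G : Finset E} {g : E} (hg : g ∈ G) : g ∈ coneOf G := by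
  classical
  refine ⟨fun y => if y = g then 1 else 0, fun y => by dsimp only; split_ifs <;> norm_num, ?_⟩
  simp [ite_smul, Finset.sum_ite_eq', hg]

theorem coneOf_reduce [DecidableEq E] (G : Finset E) (x : E) (c : E → ℝ) (hc : ∀ y, 0 ≤ c y)
    (hsum : ∑ y ∈ G, c y • y = x) (g : {y // y ∈ G} → ℝ)
    (hg : ∑ i, g i • (i : E) = 0) (i₁ : {y // y ∈ G}) (hi₁ : 0 < g i₁) :
    ∃ y₀ ∈ G, x ∈ coneOf (G.erase y₀) := by
  classical
  set P : Finset {y // y ∈ G} := Finset.univ.filter (fun i => 0 < g i) with hP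
  have hPne : P.Nonempty := ⟨i₁, by simp [hP, hi₁]⟩
  obtain ⟨istar, histarP, hmin⟩ := P.exists_min_image (fun i => c ↑i / g i) hPne
  have histar : 0 < g istar := by simpa [hP] using histarP
  set r : ℝ := c ↑istar / g istar with hr
  have hr0 : 0 ≤ r := div_nonneg (hc _) histar.le
  set d : E → ℝ := fun y => if h : y ∈ G then g ⟨y, h⟩ else 0 with hd
  have hdsum : ∑ y ∈ G, d y • y = 0 := by
    rw [← Finset.sum_attach G (fun y => d y • y), ← hg, Finset.univ_eq_attach]
    exact Finset.sum_congr rfl fun i _ => by simp [hd, i.2]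
  set c' : E → ℝ := fun y => c y - r * d y with hc'
  have hc'0 : ∀ y, 0 ≤ c' y := by
    intro y
    by_cases hy : y ∈ G
    · rw [hc']; dsimp only; rw [hd]; dsimp only; rw [dif_pos hy]
      rcases le_or_gt (g ⟨y, hy⟩) 0 with h0 | h0
      · nlinarith [hc y]
      · have hm := hmin ⟨y, hy⟩ (by simp [hP, h0])
        have h2 : r * g ⟨y, hy⟩ ≤ c y := (le_div_iff₀ h0).mp hm
        linarith
    · rw [hc']; dsimp only; rw [hd]; dsimp only; rw [dif_neg hy]
      simpa using hc y
  have hcstar : c' ↑istar = 0 := by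
    rw [hc']; dsimp only; rw [hd]; dsimp only; rw [dif_pos istar.2]
    have : (⟨↑istar, istar.2⟩ : {y // y ∈ G}) = istar := Subtype.coe_eta _ _
    rw [this, hr, div_mul_cancel₀ _ (ne_of_gt histar)]
    ring
  have hsum' : ∑ y ∈ G, c' y • y = x := by
    have heq : ∀ y, c' y • y = c y • y - r • (d y • y) := by
      intro y; rw [hc']; dsimp only; rw [sub_smul, smul_smul]
    calc ∑ y ∈ G, c' y • y = ∑ y ∈ G, (c y • y - r • (d y • y)) :=
          Finset.sum_congr rfl fun y _ => heq y
      _ = (∑ y ∈ G, c y • y) - r • ∑ y ∈ G, d y • y := by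
          rw [Finset.sum_sub_distrib, Finset.smul_sum]
      _ = x := by rw [hsum, hdsum, smul_zero, sub_zero]
  exact ⟨↑istar, istar.2, ⟨c', hc'0, by
    rw [Finset.sum_erase _ (by rw [hcstar, zero_smul])]; exact hsum'⟩⟩

theorem coneOf_caratheodory [DecidableEq E] (G : Finset E) :
    ∀ x ∈ coneOf G, ∃ t : Finset E, t ⊆ G ∧
      LinearIndependent ℝ (fun i : {y // y ∈ t} => (i : E)) ∧ x ∈ coneOf t := by
  classical
  induction G using Finset.strongInductionOn with
  | _ G ih =>
    intro x hx
    by_cases hli : LinearIndependent ℝ (fun i : {y // y ∈ G} => (i : E))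
    · exact ⟨G, Finset.Subset.refl G, hli, hx⟩
    · obtain ⟨g, hg0, i₀, hi₀⟩ := Fintype.not_linearIndependent_iff.mp hli
      obtain ⟨c, hc, hsum⟩ := hx
      have hred : ∃ y₀ ∈ G, x ∈ coneOf (G.erase y₀) := by
        rcases lt_or_gt_of_ne hi₀ with hneg | hpos
        · refine coneOf_reduce G x c hc hsum (fun i => -g i) ?_ i₀ (by simp only [neg_pos]; exact hneg)
          rw [Finset.univ_eq_attach] at hg0 ⊢
          simp only [neg_smul, Finset.sum_neg_distrib, hg0, neg_zero]
        · exact coneOf_reduce G x c hc hsum g hg0 i₀ hpos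
      obtain ⟨y₀, hy₀, hxe⟩ := hred
      obtain ⟨t, ht, hli', hxt⟩ := ih (G.erase y₀) (Finset.erase_ssubset hy₀) x hxe
      exact ⟨t, ht.trans (Finset.erase_subset _ _), hli', hxt⟩

theorem isClosed_coneOf_of_linearIndependent (t : Finset E)
    (hli : LinearIndependent ℝ (fun i : {y // y ∈ t} => (i : E))) :
    IsClosed (coneOf t) := by
  classical
  set L : ({y // y ∈ t} → ℝ) →ₗ[ℝ] E :=
    { toFun := fun c => ∑ i, c i • (i : E),
      map_add' := by intro a b; simp [add_smul, Finset.sum_add_distrib],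
      map_smul' := by intro m a; simp [smul_smul, Finset.smul_sum] } with hL
  have hker : LinearMap.ker L = ⊥ := by
    rw [LinearMap.ker_eq_bot']
    intro m hm
    funext i
    exact Fintype.linearIndependent_iff.mp hli m hm i
  have hemb : Topology.IsClosedEmbedding L := LinearMap.isClosedEmbedding_of_injective hker
  have horth : IsClosed {c : {y // y ∈ t} → ℝ | ∀ i, 0 ≤ c i} := by
    have : {c : {y // y ∈ t} → ℝ | ∀ i, 0 ≤ c i} = ⋂ i, {c | 0 ≤ c i} := by
      ext c; simp [Set.mem_iInter]
    rw [this]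
    exact isClosed_iInter fun i => isClosed_le continuous_const (continuous_apply i)
  have himg : coneOf t = L '' {c : {y // y ∈ t} → ℝ | ∀ i, 0 ≤ c i} := by
    ext x
    constructor
    · rintro ⟨c, hc, rfl⟩
      refine ⟨fun i => c ↑i, fun i => hc _, ?_⟩
      show ∑ i : {y // y ∈ t}, c ↑i • (i : E) = _
      rw [Finset.univ_eq_attach, Finset.sum_attach t (fun y => c y • y)]
    · rintro ⟨c, hc, rfl⟩
      refine ⟨fun y => if h : y ∈ t then c ⟨y, h⟩ else 0, fun y => ?_, ?_⟩
      · dsimp only; split_ifs; exacts [hc _, le_rfl]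
      · show _ = ∑ i : {y // y ∈ t}, c i • (i : E)
        rw [Finset.univ_eq_attach, ← Finset.sum_attach t
          (fun y => (if h : y ∈ t then c ⟨y, h⟩ else 0) • y)]
        exact Finset.sum_congr rfl fun i _ => by simp [i.2]
  rw [himg]
  exact hemb.isClosedMap _ horth

theorem isClosed_coneOf (G : Finset E) : IsClosed (coneOf G) := by
  classical
  have hun : coneOf G = ⋃ t ∈ {t : Finset E | t ⊆ G ∧
      LinearIndependent ℝ (fun i : {y // y ∈ t} => (i : E))}, coneOf t := by
    ext x
    simp only [Set.mem_iUnion, Set.mem_setOf_eq]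
    constructor
    · intro hx
      obtain ⟨t, ht, hli, hxt⟩ := coneOf_caratheodory G x hx
      exact ⟨t, ⟨ht, hli⟩, hxt⟩
    · rintro ⟨t, ⟨ht, _⟩, hxt⟩
      exact coneOf_mono ht hxt
  rw [hun]
  refine Set.Finite.isClosed_biUnion ?_ fun t ht => isClosed_coneOf_of_linearIndependent t ht.2
  exact Set.Finite.subset (G.powerset.finite_toSet)
    (fun t ht => Finset.mem_coe.mpr (Finset.mem_powerset.mpr ht.1))

/-- `coneOf G` as a convex cone. -/
def coneOfCone (G : Finset E) : ConvexCone ℝ E where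
  carrier := coneOf G
  smul_mem' := by
    rintro r hr x ⟨c, hc, rfl⟩
    exact ⟨fun y => r * c y, fun y => mul_nonneg hr.le (hc y), by
      rw [Finset.smul_sum]; exact Finset.sum_congr rfl fun y _ => (smul_smul r (c y) y).symm⟩
  add_mem' := by
    rintro x ⟨c, hc, rfl⟩ y ⟨c', hc', rfl⟩
    exact ⟨fun y => c y + c' y, fun y => add_nonneg (hc y) (hc' y), by
      rw [← Finset.sum_add_distrib]; exact Finset.sum_congr rfl fun y _ => add_smul _ _ _⟩

open scoped RealInnerProductSpace in
theorem farkas_inner [CompleteSpace E] (G : Finset E) (b : E)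
    (h : ∀ y : E, (∀ g ∈ G, 0 ≤ ⟪g, y⟫) → 0 ≤ ⟪b, y⟫) : b ∈ coneOf G := by
  by_contra hb
  obtain ⟨y, hy1, hy2⟩ :=
    ProperCone.hyperplane_separation' (x₀ := b) (⟨(coneOfCone G).toPointedCone (zero_mem_coneOf G), isClosed_coneOf G⟩ :
      ProperCone ℝ E) hb
  have h1 : 0 ≤ ⟪b, y⟫ := h y fun g hg => hy1 g (mem_coneOf_self hg)
  linarith

end ConeLemmas

open scoped RealInnerProductSpace

/-- The vector in `EuclideanSpace ℝ (Fin n)` representing a linear functional. -/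
noncomputable def vecOf (n : ℕ) (ψ : (Fin n → ℝ) →ₗ[ℝ] ℝ) : EuclideanSpace ℝ (Fin n) :=
  (WithLp.equiv 2 (Fin n → ℝ)).symm (fun i => ψ fun j => if i = j then 1 else 0)

theorem inner_vecOf (n : ℕ) (ψ : (Fin n → ℝ) →ₗ[ℝ] ℝ) (x : Fin n → ℝ) :
    ⟪vecOf n ψ, (WithLp.equiv 2 (Fin n → ℝ)).symm x⟫ = ψ x := by
  rw [PiLp.inner_apply]
  simp only [vecOf, WithLp.equiv_symm_apply, PiLp.toLp_apply, RCLike.inner_apply, conj_trivial]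
  rw [LinearMap.pi_apply_eq_sum_univ ψ x]
  exact Finset.sum_congr rfl fun i _ => by rw [smul_eq_mul, mul_comm]

theorem vecOf_injective (n : ℕ) : Function.Injective (vecOf n) := by
  intro φ φ' h
  refine LinearMap.ext fun x => ?_
  rw [← inner_vecOf n φ x, ← inner_vecOf n φ' x, h]

theorem farkas_fun (n : ℕ) (Φ : Finset ((Fin n → ℝ) →ₗ[ℝ] ℝ)) (f : (Fin n → ℝ) →ₗ[ℝ] ℝ)
    (h : ∀ x : Fin n → ℝ, (∀ φ ∈ Φ, 0 ≤ φ x) → 0 ≤ f x) :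
    ∃ c : ((Fin n → ℝ) →ₗ[ℝ] ℝ) → ℝ, (∀ φ, 0 ≤ c φ) ∧
      ∀ x, f x = ∑ φ ∈ Φ, c φ * φ x := by
  classical
  have hb : vecOf n f ∈ coneOf (Φ.image (vecOf n)) := by
    apply farkas_inner
    intro y hy
    have hyx : (WithLp.equiv 2 (Fin n → ℝ)).symm (WithLp.equiv 2 (Fin n → ℝ) y) = y :=
      (WithLp.equiv 2 (Fin n → ℝ)).symm_apply_apply y
    have hx : ∀ φ ∈ Φ, 0 ≤ φ (WithLp.equiv 2 (Fin n → ℝ) y) := by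
      intro φ hφ
      have := hy (vecOf n φ) (Finset.mem_image_of_mem _ hφ)
      rwa [← hyx, inner_vecOf] at this
    have := h _ hx
    rwa [← inner_vecOf n f (WithLp.equiv 2 (Fin n → ℝ) y), hyx] at this
  obtain ⟨c, hc, hsum⟩ := hb
  refine ⟨fun φ => c (vecOf n φ), fun φ => hc _, fun x => ?_⟩
  have key := congrArg (fun b => ⟪b, (WithLp.equiv 2 (Fin n → ℝ)).symm x⟫) hsum
  rw [inner_vecOf, sum_inner] at key
  rw [← key, Finset.sum_image (fun a _ b _ hab => vecOf_injective n hab)]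
  exact Finset.sum_congr rfl fun φ _ => by rw [real_inner_smul_left, inner_vecOf]

theorem exists_bound_sum {α : Type*} (t : Finset α) (F : α → ℕ → ℝ)
    (h : ∀ a ∈ t, ∃ M, ∀ i, F a i ≤ M) : ∃ M, ∀ i, ∑ a ∈ t, F a i ≤ M := by
  classical
  induction t using Finset.induction with
  | empty => exact ⟨0, by simp⟩
  | insert _ _ ha ih =>
    rename_i a s
    obtain ⟨Ma, hMa⟩ := h a (Finset.mem_insert_self a s)
    obtain ⟨M, hM⟩ := ih fun b hb => h b (Finset.mem_insert_of_mem hb)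
    refine ⟨Ma + M, fun i => ?_⟩
    rw [Finset.sum_insert ha]
    exact add_le_add (hMa i) (hM i)


/-- If a sequence in a polyhedral cone `τ` is both `σ`-bounded and `ρ`-bounded for faces
`σ, ρ` of `τ`, then it is `(σ ∩ ρ)`-bounded. -/
theorem sigmaBounded_inter (n : ℕ)
    (Ψ S T : Finset ((Fin n → ℝ) →ₗ[ℝ] ℝ)) (hS : S ⊆ Ψ) (hT : T ⊆ Ψ)
    (v : ℕ → (Fin n → ℝ)) (hv : ∀ i, v i ∈ polyCone n Ψ)
    (hSbdd : SigmaBounded n (polyFace n Ψ S) v)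
    (hTbdd : SigmaBounded n (polyFace n Ψ T) v) :
    SigmaBounded n (polyFace n Ψ S ∩ polyFace n Ψ T) v := by
  classical
  have key : ∀ ψ : (Fin n → ℝ) →ₗ[ℝ] ℝ,
      (∀ x ∈ polyFace n Ψ S ∩ polyFace n Ψ T, ψ x = 0) → ∃ M, ∀ i, ψ (v i) ≤ M := by
    intro ψ hψ
    set Φ : Finset ((Fin n → ℝ) →ₗ[ℝ] ℝ) := Ψ ∪ (S ∪ T).image (fun φ => -φ) with hΦ
    have hfar : ∀ x : Fin n → ℝ, (∀ φ ∈ Φ, 0 ≤ φ x) → 0 ≤ (-ψ) x := by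
      intro x hx
      have hxτ : ∀ φ ∈ Ψ, 0 ≤ φ x := fun φ hφ => hx φ (Finset.mem_union_left _ hφ)
      have hzero : ∀ φ ∈ S ∪ T, φ x = 0 := by
        intro φ hφ
        have h1 : 0 ≤ φ x := by
          rcases Finset.mem_union.mp hφ with h | h
          exacts [hxτ φ (hS h), hxτ φ (hT h)]
        have h2 : 0 ≤ (-φ) x := hx _ (Finset.mem_union_right _ (Finset.mem_image_of_mem _ hφ))
        simp only [LinearMap.neg_apply] at h2
        linarith
      have hmem : x ∈ polyFace n Ψ S ∩ polyFace n Ψ T :=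
        ⟨⟨hxτ, fun φ hφ => hzero φ (Finset.mem_union_left _ hφ)⟩,
         ⟨hxτ, fun φ hφ => hzero φ (Finset.mem_union_right _ hφ)⟩⟩
      simp [LinearMap.neg_apply, hψ x hmem]
    obtain ⟨c, hc, hsum⟩ := farkas_fun n Φ (-ψ) hfar
    have hterm : ∀ φ ∈ Φ, ∃ M, ∀ i, -(c φ * φ (v i)) ≤ M := by
      intro φ hφ
      rcases Finset.mem_union.mp hφ with hφΨ | hφneg
      · exact ⟨0, fun i => by nlinarith [mul_nonneg (hc φ) (hv i φ hφΨ)]⟩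
      · obtain ⟨φ₀, hφ₀, rfl⟩ := Finset.mem_image.mp hφneg
        have hbdd : ∃ M, ∀ i, |φ₀ (v i)| ≤ M := by
          rcases Finset.mem_union.mp hφ₀ with h0 | h0
          · exact hSbdd φ₀ fun x hx => hx.2 φ₀ h0
          · exact hTbdd φ₀ fun x hx => hx.2 φ₀ h0
        obtain ⟨M, hM⟩ := hbdd
        refine ⟨c (-φ₀) * M, fun i => ?_⟩
        have h1 : φ₀ (v i) ≤ M := (abs_le.mp (hM i)).2
        have h2 := hc (-φ₀)
        simp only [LinearMap.neg_apply]
        nlinarith [mul_le_mul_of_nonneg_left h1 h2]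
    obtain ⟨M, hM⟩ := exists_bound_sum Φ (fun φ i => -(c φ * φ (v i))) hterm
    refine ⟨M, fun i => ?_⟩
    have heq := hsum (v i)
    simp only [LinearMap.neg_apply] at heq
    have hrw : ψ (v i) = ∑ φ ∈ Φ, -(c φ * φ (v i)) := by
      rw [Finset.sum_neg_distrib]
      linarith
    rw [hrw]
    exact hM i
  intro ψ hψ
  obtain ⟨M₁, h₁⟩ := key ψ hψ
  obtain ⟨M₂, h₂⟩ := key (-ψ) (fun x hx => by simp [LinearMap.neg_apply, hψ x hx])
  refine ⟨max M₁ M₂, fun i => abs_le.mpr ⟨?_, le_trans (h₁ i) (le_max_left _ _)⟩⟩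
  have hb := h₂ i
  simp only [LinearMap.neg_apply] at hb
  have := le_max_right M₁ M₂
  linarith
end

section
/- Let 𝒜 ⊂ ℝ^d be a finite set affinely spanning ℝ^d, λ ∈ ℝ^𝒜, and let 𝒮_λ be the regular subdivision of 𝒜 induced by λ (via upper faces of the lifted polytope P_λ = conv{(a, λ(a)) : a ∈ 𝒜}). If {a, b} ⊂ 𝒜 is not a subset of any face of 𝒮_λ, then there exist a facet 𝒢 of 𝒮_λ, coefficients β_a, β_b > 0 with β_a + β_b = 1, and coefficients α_g ≥ 0 for g ∈ 𝒢 with Σ α_g = 1, such that β_a·a + β_b·b = Σ_{g∈𝒢} α_g·g, and moreover β_a λ(a) + β_b λ(b) < Σ_{g∈𝒢} α_g λ(g). -/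
open Finset

private lemma nonpos_of_forall_mul_lt {x u : ℝ} (h : ∀ t : ℝ, 0 ≤ t → t * x < u) : x ≤ 0 := by
  by_contra hx
  push_neg at hx
  have hu : 0 < u := by simpa using h 0 le_rfl
  have := h ((u + 1) / x) (by positivity)
  rw [div_mul_cancel₀ _ (ne_of_gt hx)] at this
  linarith

private lemma exists_linIndep_rep_aux {F : Type*} [AddCommGroup F] [Module ℝ F]
    {κ : Type*} [Fintype κ] [DecidableEq κ] (v : κ → F) :
    ∀ (n : ℕ) (s : Finset κ) (c : κ → ℝ), s.card ≤ n → (∀ i, 0 ≤ c i) → (∀ i ∉ s, c i = 0) →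
    ∃ (t : Finset κ) (c' : κ → ℝ), LinearIndependent ℝ (fun i : t => v i) ∧
      (∀ i, 0 ≤ c' i) ∧ (∀ i ∉ t, c' i = 0) ∧ ∑ i, c' i • v i = ∑ i, c i • v i := by
  intro n
  induction n with
  | zero =>
    intro s c hcard hc hsupp
    have hs : s = ∅ := Finset.card_eq_zero.mp (Nat.le_zero.mp hcard)
    subst hs
    exact ⟨∅, c, linearIndependent_empty_type, hc, hsupp, rfl⟩
  | succ n ih =>
    intro s c hcard hc hsupp
    by_cases hli : LinearIndependent ℝ (fun i : s => v i)
    · exact ⟨s, c, hli, hc, hsupp, rfl⟩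
    · obtain ⟨g, hg0, i₁, hi₁⟩ := Fintype.not_linearIndependent_iff.mp hli
      set dd : κ → ℝ := fun i => if h : i ∈ s then g ⟨i, h⟩ else 0 with hdd
      have hddsum : ∑ i, dd i • v i = 0 := by
        rw [← Finset.sum_subset (Finset.subset_univ s)
            (fun x _ hx => by simp [hdd, hx])]
        rw [← Finset.sum_attach s (fun i => dd i • v i)]
        simpa [hdd] using hg0
      have hddsupp : ∀ i ∉ s, dd i = 0 := fun i hi => by simp [hdd, hi]
      -- get a dd with a positive entry
      have key : ∀ d2 : κ → ℝ, (∑ i, d2 i • v i = 0) → (∀ i ∉ s, d2 i = 0) →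
          (∃ i, 0 < d2 i) → ∃ (t : Finset κ) (c' : κ → ℝ),
          LinearIndependent ℝ (fun i : t => v i) ∧ (∀ i, 0 ≤ c' i) ∧ (∀ i ∉ t, c' i = 0) ∧
          ∑ i, c' i • v i = ∑ i, c i • v i := by
        intro d2 hd2sum hd2supp hd2pos
        have hTne : (s.filter (fun i => 0 < d2 i)).Nonempty := by
          obtain ⟨i, hi⟩ := hd2pos
          refine ⟨i, Finset.mem_filter.mpr ⟨?_, hi⟩⟩
          by_contra his
          rw [hd2supp i his] at hi; exact lt_irrefl 0 hi
        obtain ⟨i₀, hi₀T, hi₀min⟩ := Finset.exists_min_image _ (fun i => c i / d2 i) hTne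
        rw [Finset.mem_filter] at hi₀T
        obtain ⟨hi₀s, hi₀pos⟩ := hi₀T
        set tm : ℝ := c i₀ / d2 i₀ with htm
        have htm0 : 0 ≤ tm := div_nonneg (hc i₀) (le_of_lt hi₀pos)
        set c'' : κ → ℝ := fun i => c i - tm * d2 i with hc''
        have hc''0 : ∀ i, 0 ≤ c'' i := by
          intro i
          by_cases hpos : 0 < d2 i
          · have his : i ∈ s := by
              by_contra his; rw [hd2supp i his] at hpos; exact lt_irrefl 0 hpos
            have := hi₀min i (Finset.mem_filter.mpr ⟨his, hpos⟩)
            have : tm * d2 i ≤ c i := by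
              rw [htm]
              calc c i₀ / d2 i₀ * d2 i ≤ c i / d2 i * d2 i := by
                    exact mul_le_mul_of_nonneg_right this (le_of_lt hpos)
                _ = c i := div_mul_cancel₀ _ (ne_of_gt hpos)
            simp [hc'', sub_nonneg, this]
          · push_neg at hpos
            have : tm * d2 i ≤ 0 := mul_nonpos_of_nonneg_of_nonpos htm0 hpos
            have := hc i
            simp only [hc'']
            linarith
        have hc''supp : ∀ i ∉ s.erase i₀, c'' i = 0 := by
          intro i hi
          by_cases h1 : i = i₀
          · subst h1
            simp [hc'', htm, div_mul_cancel₀ _ (ne_of_gt hi₀pos)]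
          · have h2 : i ∉ s := fun his => hi (Finset.mem_erase.mpr ⟨h1, his⟩)
            simp [hc'', hsupp i h2, hd2supp i h2]
        have hc''sum : ∑ i, c'' i • v i = ∑ i, c i • v i := by
          simp only [hc'', sub_smul, Finset.sum_sub_distrib, mul_smul, ← Finset.smul_sum,
            hd2sum, smul_zero, sub_zero]
        have hcard' : (s.erase i₀).card ≤ n := by
          have := Finset.card_erase_of_mem hi₀s
          omega
        obtain ⟨t, c', h1, h2, h3, h4⟩ := ih (s.erase i₀) c'' hcard' hc''0 hc''supp
        exact ⟨t, c', h1, h2, h3, h4.trans hc''sum⟩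
      by_cases hpos : ∃ i, 0 < dd i
      · exact key dd hddsum hddsupp hpos
      · refine key (fun i => -dd i) (by simpa using hddsum) (fun i hi => by simp [hddsupp i hi]) ?_
        push_neg at hpos
        refine ⟨i₁, ?_⟩
        show 0 < -dd (i₁ : κ)
        have h1 : dd (i₁ : κ) = g i₁ := by simp [hdd, i₁.2]
        have h2 := hpos (i₁ : κ)
        rw [neg_pos]
        rcases lt_or_eq_of_le h2 with h | h
        · exact h
        · rw [h1] at h; exact absurd h hi₁

private lemma not_mem_erase_iff' {κ : Type*} [DecidableEq κ] {i i₀ : κ} {s : Finset κ} : True := trivial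
private lemma cone_isClosed {F : Type*} [NormedAddCommGroup F] [NormedSpace ℝ F]
    [FiniteDimensional ℝ F] {κ : Type*} [Fintype κ] (v : κ → F) :
    IsClosed {x : F | ∃ c : κ → ℝ, (∀ i, 0 ≤ c i) ∧ x = ∑ i, c i • v i} := by
  classical
  have hrep : {x : F | ∃ c : κ → ℝ, (∀ i, 0 ≤ c i) ∧ x = ∑ i, c i • v i} =
      ⋃ s : Finset κ, {x : F | LinearIndependent ℝ (fun i : s => v i) ∧
        ∃ c : κ → ℝ, (∀ i, 0 ≤ c i) ∧ (∀ i ∉ s, c i = 0) ∧ x = ∑ i, c i • v i} := by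
    ext x
    simp only [Set.mem_setOf_eq, Set.mem_iUnion]
    constructor
    · rintro ⟨c, hc, rfl⟩
      obtain ⟨t, c', h1, h2, h3, h4⟩ := exists_linIndep_rep_aux v (Finset.univ.card) Finset.univ c
        le_rfl hc (fun i hi => absurd (Finset.mem_univ i) hi)
      exact ⟨t, h1, c', h2, h3, h4.symm⟩
    · rintro ⟨s, _, c, hc, _, rfl⟩
      exact ⟨c, hc, rfl⟩
  rw [hrep]
  apply isClosed_iUnion_of_finite
  intro s
  by_cases hli : LinearIndependent ℝ (fun i : s => v i)
  · set L : ((i : s) → ℝ) →ₗ[ℝ] F := ∑ i : s, (LinearMap.proj i).smulRight (v ↑i) with hL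
    have hLapp : ∀ q : s → ℝ, L q = ∑ i : s, q i • v ↑i := by
      intro q
      simp [hL, LinearMap.sum_apply, LinearMap.smulRight_apply, LinearMap.proj_apply]
    have hinj : LinearMap.ker L = ⊥ := by
      rw [Submodule.eq_bot_iff]
      intro q hq
      rw [LinearMap.mem_ker, hLapp] at hq
      funext i
      exact Fintype.linearIndependent_iff.mp hli q hq i
    have hsum_eq : ∀ c : κ → ℝ, (∀ i ∉ s, c i = 0) →
        ∑ i : s, c ↑i • v ↑i = ∑ i : κ, c i • v i := by
      intro c hcs
      rw [Finset.univ_eq_attach, Finset.sum_attach s (fun i => c i • v i)]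
      exact Finset.sum_subset (Finset.subset_univ s) (fun x _ hx => by simp [hcs x hx])
    have himg : {x : F | LinearIndependent ℝ (fun i : s => v i) ∧
        ∃ c : κ → ℝ, (∀ i, 0 ≤ c i) ∧ (∀ i ∉ s, c i = 0) ∧ x = ∑ i, c i • v i} =
        L '' {q : s → ℝ | ∀ i, 0 ≤ q i} := by
      ext x
      constructor
      · rintro ⟨-, c, hc, hcs, rfl⟩
        refine ⟨fun i => c ↑i, fun i => hc ↑i, ?_⟩
        rw [hLapp]
        exact hsum_eq c hcs
      · rintro ⟨q, hq, rfl⟩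
        refine ⟨hli, fun i => if h : i ∈ s then q ⟨i, h⟩ else 0, ?_, ?_, ?_⟩
        · intro i; by_cases h : i ∈ s <;> simp [h, hq _]
        · intro i hi; simp [hi]
        · rw [hLapp, ← hsum_eq _ (fun i hi => by simp [hi])]
          exact (Finset.sum_congr rfl (fun i _ => by simp)).symm
    rw [himg]
    have horth : IsClosed {q : s → ℝ | ∀ i, 0 ≤ q i} := by
      have : {q : s → ℝ | ∀ i, 0 ≤ q i} = ⋂ i, {q : s → ℝ | 0 ≤ q i} := by
        ext q; simp [Set.mem_iInter]
      rw [this]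
      exact isClosed_iInter (fun i => isClosed_le continuous_const (continuous_apply i))
    exact (LinearMap.isClosedEmbedding_of_injective hinj).isClosedMap _ horth
  · convert isClosed_empty
    ext x
    simp only [Set.mem_setOf_eq, Set.mem_empty_iff_false, iff_false, not_and]
    exact fun h => absurd h hli

private lemma farkas {E : Type*} [NormedAddCommGroup E] [NormedSpace ℝ E]
    [FiniteDimensional ℝ E] {ι : Type*} [Fintype ι] (w : ι → E) (β : ι → ℝ)
    (hcert : ¬ ∃ ν : ι → ℝ, (∀ i, 0 ≤ ν i) ∧ ∑ i, ν i • w i = 0 ∧ 0 < ∑ i, ν i * β i) :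
    ∃ y : E →ₗ[ℝ] ℝ, ∀ i, β i ≤ y (w i) := by
  classical
  set v : Option ι → E × ℝ := fun o => Option.elim o ((0 : E), (-1 : ℝ)) (fun i => (w i, β i))
    with hv
  set C : Set (E × ℝ) := {x | ∃ c : Option ι → ℝ, (∀ i, 0 ≤ c i) ∧ x = ∑ i, c i • v i} with hC
  have hCclosed : IsClosed C := cone_isClosed v
  have hCconv : Convex ℝ C := by
    rintro x ⟨cx, hcx, rfl⟩ y ⟨cy, hcy, rfl⟩ p q hp hq hpq
    refine ⟨fun i => p * cx i + q * cy i, fun i => add_nonneg (mul_nonneg hp (hcx i)) (mul_nonneg hq (hcy i)), ?_⟩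
    rw [Finset.smul_sum, Finset.smul_sum, ← Finset.sum_add_distrib]
    refine Finset.sum_congr rfl (fun i _ => ?_)
    simp [add_smul, mul_smul]
  have memC : ∀ o : Option ι, ∀ t : ℝ, 0 ≤ t → t • v o ∈ C := by
    intro o t ht
    refine ⟨fun i => if i = o then t else 0, fun i => by dsimp only; split <;> simp [ht], ?_⟩
    simp [ite_smul, Finset.sum_ite_eq']
  by_cases hz : (((0 : E), (1 : ℝ)) : E × ℝ) ∈ C
  · exfalso
    apply hcert
    obtain ⟨c, hc, hsum⟩ := hz
    rw [Fintype.sum_option] at hsum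
    refine ⟨fun i => c (some i), fun i => hc _, ?_, ?_⟩
    · have h1 := congrArg Prod.fst hsum
      simp only [hv, Option.elim, Prod.fst_add, Prod.smul_fst, Prod.fst_sum, smul_zero,
        zero_add] at h1
      exact h1.symm
    · have h2 := congrArg Prod.snd hsum
      simp only [hv, Option.elim, Prod.snd_add, Prod.smul_snd, Prod.snd_sum,
        smul_eq_mul, mul_neg, mul_one] at h2
      have := hc none
      have h3 : ∑ i, c (some i) * β i = 1 + c none := by linarith
      rw [h3]; linarith
  · obtain ⟨f, u, hfC, hfz⟩ := geometric_hahn_banach_closed_point hCconv hCclosed hz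
    have h0C : (0 : E × ℝ) ∈ C := ⟨fun _ => 0, fun _ => le_rfl, by simp⟩
    have hu0 : 0 < u := by simpa using hfC 0 h0C
    have hgen : ∀ o : Option ι, f (v o) ≤ 0 := by
      intro o
      apply nonpos_of_forall_mul_lt (u := u)
      intro t ht
      have := hfC (t • v o) (memC o t ht)
      simpa [map_smul, smul_eq_mul] using this
    have hs : 0 < f ((0 : E), (1 : ℝ)) := lt_trans hu0 hfz
    set s0 : ℝ := f ((0 : E), (1 : ℝ)) with hs0
    refine ⟨(1 / s0) • ((-(f : E × ℝ →ₗ[ℝ] ℝ)) ∘ₗ LinearMap.inl ℝ E ℝ), ?_⟩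
    intro i
    have hfi : f (w i, β i) ≤ 0 := by simpa [hv] using hgen (some i)
    have hsplit : f (w i, β i) = f ((w i, 0) : E × ℝ) + β i * s0 := by
      have hdecomp : ((w i, β i) : E × ℝ) = ((w i, (0 : ℝ)) : E × ℝ) + β i • ((0 : E), (1 : ℝ)) := by
        simp [Prod.ext_iff]
      rw [hdecomp, map_add, map_smul, smul_eq_mul, hs0]
    have hkey : β i * s0 ≤ -f ((w i, 0) : E × ℝ) := by linarith
    show β i ≤ (1 / s0) * ((-(f : E × ℝ →ₗ[ℝ] ℝ)) ((LinearMap.inl ℝ E ℝ) (w i)))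
    rw [LinearMap.inl_apply, LinearMap.neg_apply]
    have : ((f : E × ℝ →ₗ[ℝ] ℝ) ((w i, 0) : E × ℝ)) = f ((w i, 0) : E × ℝ) := rfl
    rw [this, one_div, inv_mul_eq_div, le_div_iff₀ hs]
    linarith

/-- `F` is a face of the regular subdivision `𝒮_λ` of `𝒜` induced by `lam`: the points
of `𝒜` whose lifts lie on some upper face of the lifted polytope, i.e. those where an
affine function dominating `lam` on `𝒜` achieves equality. -/
def IsFaceOfRegSubdiv (d : ℕ) (A : Finset (Fin d → ℝ)) (lam : (Fin d → ℝ) → ℝ)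
    (F : Finset (Fin d → ℝ)) : Prop :=
  F ⊆ A ∧ ∃ (c : Fin d → ℝ) (b : ℝ),
    (∀ a ∈ A, lam a ≤ (∑ j, c j * a j) + b) ∧
    (∀ a ∈ A, (lam a = (∑ j, c j * a j) + b ↔ a ∈ F))

/-- If `{a, b} ⊆ 𝒜` is not a subset of any face of the regular subdivision `𝒮_λ`, then
some point of the open segment between `a` and `b` is a convex combination of the points
of a facet `𝒢` of `𝒮_λ`, and the corresponding combination of lifted values satisfies a
strict inequality. -/
theorem segment_meets_facet_of_non_face (d : ℕ) (A : Finset (Fin d → ℝ))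
    (hspan : affineSpan ℝ (A : Set (Fin d → ℝ)) = ⊤)
    (lam : (Fin d → ℝ) → ℝ) (a b : Fin d → ℝ) (ha : a ∈ A) (hb : b ∈ A)
    (hnotface : ∀ F : Finset (Fin d → ℝ),
      IsFaceOfRegSubdiv d A lam F → ¬(a ∈ F ∧ b ∈ F)) :
    ∃ G : Finset (Fin d → ℝ), IsFaceOfRegSubdiv d A lam G ∧
      affineSpan ℝ (G : Set (Fin d → ℝ)) = ⊤ ∧
      ∃ (βa βb : ℝ) (α : (Fin d → ℝ) → ℝ),
        0 < βa ∧ 0 < βb ∧ βa + βb = 1 ∧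
        (∀ g ∈ G, 0 ≤ α g) ∧ (∑ g ∈ G, α g = 1) ∧
        βa • a + βb • b = ∑ g ∈ G, α g • g ∧
        βa * lam a + βb * lam b < ∑ g ∈ G, α g * lam g := by
  classical
  set m : Fin d → ℝ := (1/2 : ℝ) • a + (1/2 : ℝ) • b with hm
  -- ===== The improvement step =====
  have improve : ∀ (c : Fin d → ℝ) (bb : ℝ),
      (∀ x ∈ A, lam x ≤ (∑ j, c j * x j) + bb) →
      affineSpan ℝ ((A.filter (fun x => lam x = (∑ j, c j * x j) + bb) : Finset (Fin d → ℝ)) :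
        Set (Fin d → ℝ)) ≠ ⊤ →
      ∃ (c' : Fin d → ℝ) (bb' : ℝ),
        (∀ x ∈ A, lam x ≤ (∑ j, c' j * x j) + bb') ∧
        (∀ x ∈ A, lam x = (∑ j, c j * x j) + bb → lam x = (∑ j, c' j * x j) + bb') ∧
        ∃ x₀ ∈ A, lam x₀ ≠ (∑ j, c j * x₀ j) + bb ∧ lam x₀ = (∑ j, c' j * x₀ j) + bb' := by
    intro c bb hdom hnsp
    set F : Finset (Fin d → ℝ) := A.filter (fun x => lam x = (∑ j, c j * x j) + bb) with hF
    have hfun : ∃ (u : (Fin d → ℝ) →ₗ[ℝ] ℝ) (r : ℝ),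
        (∀ g ∈ F, u g = r) ∧ ∃ a' ∈ A, u a' < r := by
      by_cases hFe : F = ∅
      · exact ⟨0, 1, by simp [hFe], a, ha, by simp⟩
      · obtain ⟨z, hz⟩ := Finset.nonempty_iff_ne_empty.mpr hFe
        have hex : ∃ a' ∈ A, a' ∉ affineSpan ℝ (F : Set (Fin d → ℝ)) := by
          by_contra hcon
          push_neg at hcon
          apply hnsp
          refine le_antisymm le_top ?_
          rw [← hspan]
          exact affineSpan_le.mpr (fun x hx => hcon x hx)
        obtain ⟨a', ha'A, ha'⟩ := hex
        have hzspan : z ∈ affineSpan ℝ (F : Set (Fin d → ℝ)) :=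
          subset_affineSpan ℝ _ (Finset.mem_coe.mpr hz)
        set V0 := vectorSpan ℝ (F : Set (Fin d → ℝ)) with hV0
        have hvs : a' - z ∉ V0 := by
          intro hmem
          apply ha'
          rw [hV0, ← direction_affineSpan] at hmem
          exact (AffineSubspace.vsub_right_mem_direction_iff_mem hzspan a').mp hmem
        have hq : (Submodule.Quotient.mk (a' - z) : (Fin d → ℝ) ⧸ V0) ≠ 0 := by
          rw [Ne, Submodule.Quotient.mk_eq_zero]; exact hvs
        obtain ⟨φ, hφ⟩ : ∃ φ : Module.Dual ℝ ((Fin d → ℝ) ⧸ V0),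
            φ (Submodule.Quotient.mk (a' - z)) ≠ 0 := by
          by_contra hcon; push_neg at hcon
          exact hq ((Module.forall_dual_apply_eq_zero_iff ℝ _).mp hcon)
        set u0 : (Fin d → ℝ) →ₗ[ℝ] ℝ := φ ∘ₗ V0.mkQ with hu0
        have hu0sub : ∀ g : Fin d → ℝ, g - z ∈ V0 → u0 g = u0 z := by
          intro g hmem
          have h0 : u0 (g - z) = 0 := by
            rw [hu0, LinearMap.comp_apply, Submodule.mkQ_apply,
              (Submodule.Quotient.mk_eq_zero V0).mpr hmem, map_zero]
          rw [map_sub] at h0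
          linarith
        have hu0F : ∀ g ∈ F, u0 g = u0 z := by
          intro g hg
          exact hu0sub g (vsub_mem_vectorSpan ℝ (Finset.mem_coe.mpr hg) (Finset.mem_coe.mpr hz))
        have hu0a' : u0 a' ≠ u0 z := by
          intro heq
          apply hφ
          have h0 : u0 (a' - z) = 0 := by rw [map_sub, heq, sub_self]
          rw [hu0, LinearMap.comp_apply, Submodule.mkQ_apply] at h0
          exact h0
        rcases lt_or_gt_of_ne hu0a' with hlt | hgt
        · exact ⟨u0, u0 z, hu0F, a', ha'A, hlt⟩
        · refine ⟨-u0, -u0 z, fun g hg => by simp [hu0F g hg], a', ha'A, ?_⟩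
          simp only [LinearMap.neg_apply]
          linarith
    obtain ⟨u, r, huF, a', ha'A, ha'lt⟩ := hfun
    set ratio : (Fin d → ℝ) → ℝ := fun x => ((∑ j, c j * x j) + bb - lam x) / (r - u x)
      with hratio
    set T : Finset (Fin d → ℝ) := A.filter (fun x => u x < r) with hT
    have hTne : T.Nonempty := ⟨a', Finset.mem_filter.mpr ⟨ha'A, ha'lt⟩⟩
    obtain ⟨x₀, hx₀T, hx₀min⟩ := Finset.exists_min_image T ratio hTne
    rw [hT, Finset.mem_filter] at hx₀T
    obtain ⟨hx₀A, hx₀u⟩ := hx₀T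
    have hx₀F : x₀ ∉ F := fun hmem => absurd (huF x₀ hmem) (ne_of_lt hx₀u)
    have hx₀lt : lam x₀ < (∑ j, c j * x₀ j) + bb :=
      lt_of_le_of_ne (hdom x₀ hx₀A) (fun h => hx₀F (Finset.mem_filter.mpr ⟨hx₀A, h⟩))
    have hrx₀ : 0 < r - u x₀ := sub_pos.mpr hx₀u
    set t : ℝ := ratio x₀ with htdef
    have ht0 : 0 < t := by
      rw [htdef, hratio]
      exact div_pos (by linarith) hrx₀
    set c' : Fin d → ℝ := fun j => c j + t * u (Pi.single j 1) with hc'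
    set bb' : ℝ := bb + t * (-r) with hbb'
    have hux : ∀ x : Fin d → ℝ, u x = ∑ j, x j • u (Pi.single j 1) := by
      intro x
      have hsingle : ∀ j : Fin d, (Pi.single j (1:ℝ) : Fin d → ℝ)
          = fun k => if j = k then 1 else 0 := by
        intro j; funext k; simp [Pi.single_apply, eq_comm]
      rw [LinearMap.pi_apply_eq_sum_univ u x]
      exact Finset.sum_congr rfl (fun j _ => by rw [hsingle j])
    have hlin : ∀ x : Fin d → ℝ,
        (∑ j, c' j * x j) + bb' = ((∑ j, c j * x j) + bb) + t * (u x - r) := by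
      intro x
      have h1 : ∑ j, (c j + t * u (Pi.single j 1)) * x j
          = (∑ j, c j * x j) + t * ∑ j, x j • u (Pi.single j 1) := by
        rw [Finset.mul_sum, ← Finset.sum_add_distrib]
        exact Finset.sum_congr rfl (fun j _ => by simp only [smul_eq_mul]; ring)
      simp only [hc', hbb']
      rw [h1, ← hux x]
      ring
    have hdom' : ∀ x ∈ A, lam x ≤ (∑ j, c' j * x j) + bb' := by
      intro x hx
      rw [hlin x]
      by_cases hneg : u x < r
      · have hmin := hx₀min x (Finset.mem_filter.mpr ⟨hx, hneg⟩)
        have h2 : 0 < r - u x := sub_pos.mpr hneg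
        have h3 : t * (r - u x) ≤ (∑ j, c j * x j) + bb - lam x := by
          have hle : t ≤ ((∑ j, c j * x j) + bb - lam x) / (r - u x) := by
            rw [htdef]; exact hmin
          calc t * (r - u x) ≤ (((∑ j, c j * x j) + bb - lam x) / (r - u x)) * (r - u x) :=
                mul_le_mul_of_nonneg_right hle (le_of_lt h2)
            _ = (∑ j, c j * x j) + bb - lam x := div_mul_cancel₀ _ (ne_of_gt h2)
        have h4 : t * (u x - r) = -(t * (r - u x)) := by ring
        linarith
      · push_neg at hneg
        have h5 := hdom x hx
        have h6 : 0 ≤ t * (u x - r) := mul_nonneg (le_of_lt ht0) (by linarith)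
        linarith
    have htight : ∀ x ∈ A, lam x = (∑ j, c j * x j) + bb →
        lam x = (∑ j, c' j * x j) + bb' := by
      intro x hx hxt
      have hxF : x ∈ F := Finset.mem_filter.mpr ⟨hx, hxt⟩
      rw [hlin x, huF x hxF, sub_self, mul_zero, add_zero]
      exact hxt
    have hx₀new : lam x₀ = (∑ j, c' j * x₀ j) + bb' := by
      rw [hlin x₀]
      have h5 : t * (r - u x₀) = (∑ j, c j * x₀ j) + bb - lam x₀ := by
        rw [htdef, hratio]
        exact div_mul_cancel₀ _ (ne_of_gt hrx₀)
      have h6 : t * (u x₀ - r) = -(t * (r - u x₀)) := by ring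
      linarith
    exact ⟨c', bb', hdom', htight, x₀, hx₀A, ne_of_lt hx₀lt, hx₀new⟩
  -- ===== The growth induction =====
  have grow : ∀ (n : ℕ) (c : Fin d → ℝ) (bb : ℝ),
      (∀ x ∈ A, lam x ≤ (∑ j, c j * x j) + bb) →
      (A.filter (fun x => lam x ≠ (∑ j, c j * x j) + bb)).card ≤ n →
      ∃ (c' : Fin d → ℝ) (bb' : ℝ),
        (∀ x ∈ A, lam x ≤ (∑ j, c' j * x j) + bb') ∧
        (∀ x ∈ A, lam x = (∑ j, c j * x j) + bb → lam x = (∑ j, c' j * x j) + bb') ∧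
        affineSpan ℝ ((A.filter (fun x => lam x = (∑ j, c' j * x j) + bb') :
          Finset (Fin d → ℝ)) : Set (Fin d → ℝ)) = ⊤ := by
    intro n
    induction n with
    | zero =>
      intro c bb hdom hcard
      refine ⟨c, bb, hdom, fun x _ h => h, ?_⟩
      have hfe : A.filter (fun x => lam x ≠ (∑ j, c j * x j) + bb) = ∅ :=
        Finset.card_eq_zero.mp (Nat.le_zero.mp hcard)
      have hAll : A.filter (fun x => lam x = (∑ j, c j * x j) + bb) = A := by
        rw [Finset.filter_eq_self]
        intro x hx
        by_contra hne
        have hmem : x ∈ A.filter (fun x => lam x ≠ (∑ j, c j * x j) + bb) :=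
          Finset.mem_filter.mpr ⟨hx, hne⟩
        rw [hfe] at hmem
        exact absurd hmem (Finset.notMem_empty x)
      rw [hAll]
      exact hspan
    | succ n ih =>
      intro c bb hdom hcard
      by_cases hsp : affineSpan ℝ ((A.filter (fun x => lam x = (∑ j, c j * x j) + bb) :
          Finset (Fin d → ℝ)) : Set (Fin d → ℝ)) = ⊤
      · exact ⟨c, bb, hdom, fun x _ h => h, hsp⟩
      · obtain ⟨c', bb', hdom', htight', x₀, hx₀A, hx₀old, hx₀new⟩ := improve c bb hdom hsp
        have hss : A.filter (fun x => lam x ≠ (∑ j, c' j * x j) + bb') ⊂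
            A.filter (fun x => lam x ≠ (∑ j, c j * x j) + bb) := by
          rw [Finset.ssubset_def]
          constructor
          · intro x hx
            rw [Finset.mem_filter] at hx ⊢
            exact ⟨hx.1, fun h => hx.2 (htight' x hx.1 h)⟩
          · intro hsub
            have hx₀mem : x₀ ∈ A.filter (fun x => lam x ≠ (∑ j, c j * x j) + bb) :=
              Finset.mem_filter.mpr ⟨hx₀A, hx₀old⟩
            have h2 := hsub hx₀mem
            rw [Finset.mem_filter] at h2
            exact h2.2 hx₀new
        have hcard' : (A.filter (fun x => lam x ≠ (∑ j, c' j * x j) + bb')).card ≤ n := by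
          exact Nat.lt_succ_iff.mp (lt_of_lt_of_le (Finset.card_lt_card hss) hcard)
        obtain ⟨c'', bb'', h1, h2, h3⟩ := ih c' bb' hdom' hcard'
        exact ⟨c'', bb'', h1, fun x hx h => h2 x hx (htight' x hx h), h3⟩
  -- ===== Primal optimum =====
  set K : Set ({x // x ∈ A} → ℝ) :=
    {γ | (∀ g, 0 ≤ γ g) ∧ ∑ g, γ g = 1 ∧ ∑ g, γ g • (g : Fin d → ℝ) = m} with hK
  have hKclosed : IsClosed K := by
    have hrep : K = (⋂ g, {γ : {x // x ∈ A} → ℝ | 0 ≤ γ g}) ∩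
        ({γ : {x // x ∈ A} → ℝ | ∑ g, γ g = 1} ∩
         {γ : {x // x ∈ A} → ℝ | ∑ g, γ g • (g : Fin d → ℝ) = m}) := by
      ext γ
      constructor
      · rintro ⟨h1, h2, h3⟩
        exact ⟨Set.mem_iInter.mpr h1, h2, h3⟩
      · rintro ⟨h1, h2, h3⟩
        exact ⟨fun g => Set.mem_iInter.mp h1 g, h2, h3⟩
    rw [hrep]
    refine IsClosed.inter (isClosed_iInter fun g =>
      isClosed_le continuous_const (continuous_apply g)) (IsClosed.inter ?_ ?_)
    · exact isClosed_eq (continuous_finset_sum _ fun g _ => continuous_apply g) continuous_const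
    · exact isClosed_eq (continuous_finset_sum _ fun g _ =>
        (continuous_apply g).smul continuous_const) continuous_const
  have hKbdd : Bornology.IsBounded K := by
    rw [isBounded_iff_forall_norm_le]
    refine ⟨1, fun γ hγ => ?_⟩
    obtain ⟨hγ0, hγ1, -⟩ := hγ
    rw [pi_norm_le_iff_of_nonneg zero_le_one]
    intro g
    rw [Real.norm_eq_abs, abs_le]
    constructor
    · linarith [hγ0 g]
    · calc γ g ≤ ∑ g', γ g' := Finset.single_le_sum (fun i _ => hγ0 i) (Finset.mem_univ g)
        _ = 1 := hγ1
  have hKne : K.Nonempty := by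
    refine ⟨fun g => (if g = (⟨a, ha⟩ : {x // x ∈ A}) then (1:ℝ)/2 else 0) +
      (if g = (⟨b, hb⟩ : {x // x ∈ A}) then (1:ℝ)/2 else 0), ?_, ?_, ?_⟩
    · intro g
      dsimp only
      split <;> split <;> norm_num
    · rw [Finset.sum_add_distrib]
      simp only [Finset.sum_ite_eq', Finset.mem_univ, if_true]
      norm_num
    · rw [Finset.sum_congr rfl (fun g _ => add_smul _ _ _), Finset.sum_add_distrib]
      simp only [ite_smul, zero_smul, Finset.sum_ite_eq', Finset.mem_univ, if_true]
      exact hm.symm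
  obtain ⟨γ, hγK, hγmax⟩ := (Metric.isCompact_of_isClosed_isBounded hKclosed hKbdd).exists_isMaxOn
    hKne ((continuous_finset_sum _ fun g _ =>
      (continuous_apply g).mul continuous_const).continuousOn
      (s := K) (f := fun γ : {x // x ∈ A} → ℝ => ∑ g, γ g * lam (g : Fin d → ℝ)))
  obtain ⟨hγ0, hγ1, hγm⟩ := hγK
  -- ===== Dual via Farkas =====
  set w : ({x // x ∈ A} × Bool) → (Fin d → ℝ) × ℝ := fun p =>
    if γ p.1 ≠ 0 ∧ p.2 = false then (-(p.1 : Fin d → ℝ), (-1:ℝ))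
    else ((p.1 : Fin d → ℝ), (1:ℝ)) with hw
  set βv : ({x // x ∈ A} × Bool) → ℝ := fun p =>
    if γ p.1 ≠ 0 ∧ p.2 = false then -lam (p.1 : Fin d → ℝ) else lam (p.1 : Fin d → ℝ) with hβv
  have hcert : ¬ ∃ ν : ({x // x ∈ A} × Bool) → ℝ,
      (∀ i, 0 ≤ ν i) ∧ ∑ i, ν i • w i = 0 ∧ 0 < ∑ i, ν i * βv i := by
    rintro ⟨ν, hν0, hνsum, hνβ⟩
    set lb : {x // x ∈ A} → ℝ :=
      fun g => ν (g, true) + (if γ g ≠ 0 then -ν (g, false) else ν (g, false)) with hlb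
    have hwsum : ∑ i : {x // x ∈ A} × Bool, ν i • w i
        = ∑ g : {x // x ∈ A}, lb g • (((g : Fin d → ℝ), (1:ℝ)) : (Fin d → ℝ) × ℝ) := by
      rw [Fintype.sum_prod_type]
      refine Finset.sum_congr rfl (fun g _ => ?_)
      rw [Fintype.sum_bool]
      by_cases hg : γ g ≠ 0
      · have e1 : w (g, true) = (((g : Fin d → ℝ), (1:ℝ)) : (Fin d → ℝ) × ℝ) := by simp [hw]
        have e2 : w (g, false) = ((-(g : Fin d → ℝ), (-1:ℝ)) : (Fin d → ℝ) × ℝ) := by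
          simp [hw, hg]
        have e3 : lb g = ν (g, true) - ν (g, false) := by simp [hlb, hg, sub_eq_add_neg]
        have e4 : ((-(g : Fin d → ℝ), (-1:ℝ)) : (Fin d → ℝ) × ℝ)
            = -(((g : Fin d → ℝ), (1:ℝ)) : (Fin d → ℝ) × ℝ) := by simp [Prod.ext_iff]
        rw [e1, e2, e3, e4, smul_neg, sub_smul]
        abel
      · have e1 : w (g, true) = (((g : Fin d → ℝ), (1:ℝ)) : (Fin d → ℝ) × ℝ) := by simp [hw]
        have e2 : w (g, false) = (((g : Fin d → ℝ), (1:ℝ)) : (Fin d → ℝ) × ℝ) := by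
          simp [hw, hg]
        have e3 : lb g = ν (g, true) + ν (g, false) := by simp [hlb, hg]
        rw [e1, e2, e3, add_smul]
    have hβsum : ∑ i : {x // x ∈ A} × Bool, ν i * βv i
        = ∑ g : {x // x ∈ A}, lb g * lam (g : Fin d → ℝ) := by
      rw [Fintype.sum_prod_type]
      refine Finset.sum_congr rfl (fun g _ => ?_)
      rw [Fintype.sum_bool]
      by_cases hg : γ g ≠ 0
      · have e1 : βv (g, true) = lam (g : Fin d → ℝ) := by simp [hβv]
        have e2 : βv (g, false) = -lam (g : Fin d → ℝ) := by simp [hβv, hg]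
        have e3 : lb g = ν (g, true) - ν (g, false) := by simp [hlb, hg, sub_eq_add_neg]
        rw [e1, e2, e3]; ring
      · have e1 : βv (g, true) = lam (g : Fin d → ℝ) := by simp [hβv]
        have e2 : βv (g, false) = lam (g : Fin d → ℝ) := by simp [hβv, hg]
        have e3 : lb g = ν (g, true) + ν (g, false) := by simp [hlb, hg]
        rw [e1, e2, e3]; ring
    rw [hwsum] at hνsum
    rw [hβsum] at hνβ
    have hfst : ∑ g : {x // x ∈ A}, lb g • (g : Fin d → ℝ) = 0 := by
      have h := congrArg Prod.fst hνsum
      rw [Prod.fst_sum] at h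
      simpa using h
    have hsnd : ∑ g : {x // x ∈ A}, lb g = 0 := by
      have h := congrArg Prod.snd hνsum
      rw [Prod.snd_sum] at h
      simpa using h
    have hlbpos : ∀ g, lb g < 0 → 0 < γ g := by
      intro g hneg
      by_contra hng
      push_neg at hng
      have h0 : γ g = 0 := le_antisymm hng (hγ0 g)
      rw [hlb] at hneg
      simp only [h0, ne_eq, not_true_eq_false, if_false, not_false_iff] at hneg
      have h1 := hν0 (g, true)
      have h2 := hν0 (g, false)
      linarith
    have hstep : ∃ t : ℝ, 0 < t ∧ ∀ g, 0 ≤ γ g + t * lb g := by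
      by_cases hTe : (Finset.univ.filter (fun g : {x // x ∈ A} => lb g < 0)).Nonempty
      · obtain ⟨g₀, hg₀T, hg₀min⟩ :=
          Finset.exists_min_image _ (fun g => γ g / (-lb g)) hTe
        rw [Finset.mem_filter] at hg₀T
        have hg₀neg : lb g₀ < 0 := hg₀T.2
        have hγg₀ : 0 < γ g₀ := hlbpos g₀ hg₀neg
        refine ⟨γ g₀ / (-lb g₀), div_pos hγg₀ (by linarith), fun g => ?_⟩
        by_cases hg : lb g < 0
        · have hmin := hg₀min g (Finset.mem_filter.mpr ⟨Finset.mem_univ g, hg⟩)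
          have h2 : 0 < -lb g := by linarith
          have h3 : (γ g₀ / (-lb g₀)) * (-lb g) ≤ γ g := by
            calc (γ g₀ / (-lb g₀)) * (-lb g) ≤ (γ g / (-lb g)) * (-lb g) :=
                  mul_le_mul_of_nonneg_right hmin (le_of_lt h2)
              _ = γ g := div_mul_cancel₀ _ (ne_of_gt h2)
          have h4 : (γ g₀ / (-lb g₀)) * lb g = -((γ g₀ / (-lb g₀)) * (-lb g)) := by ring
          linarith
        · push_neg at hg
          have h5 : 0 ≤ (γ g₀ / (-lb g₀)) * lb g :=
            mul_nonneg (le_of_lt (div_pos hγg₀ (by linarith))) hg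
          linarith [hγ0 g]
      · refine ⟨1, one_pos, fun g => ?_⟩
        have hgg : ¬ lb g < 0 := fun h =>
          hTe ⟨g, Finset.mem_filter.mpr ⟨Finset.mem_univ g, h⟩⟩
        push_neg at hgg
        have := hγ0 g
        linarith
    obtain ⟨t, ht0, htγ⟩ := hstep
    have hmemK : (fun g => γ g + t * lb g) ∈ K := by
      refine ⟨htγ, ?_, ?_⟩
      · rw [Finset.sum_add_distrib, hγ1, ← Finset.mul_sum, hsnd, mul_zero, add_zero]
      · rw [Finset.sum_congr rfl (fun g _ => by rw [add_smul, mul_smul]),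
          Finset.sum_add_distrib, ← Finset.smul_sum, hfst, smul_zero, add_zero]
        exact hγm
    have hobj := isMaxOn_iff.mp hγmax _ hmemK
    have hexp : ∑ g : {x // x ∈ A}, (γ g + t * lb g) * lam (g : Fin d → ℝ)
        = (∑ g : {x // x ∈ A}, γ g * lam (g : Fin d → ℝ))
          + t * ∑ g : {x // x ∈ A}, lb g * lam (g : Fin d → ℝ) := by
      rw [Finset.mul_sum, ← Finset.sum_add_distrib]
      exact Finset.sum_congr rfl (fun g _ => by ring)
    rw [hexp] at hobj
    have := mul_pos ht0 hνβ
    linarith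
  obtain ⟨y, hy⟩ := farkas w βv hcert
  have hkey : ∀ x : Fin d → ℝ, y ((x, (1:ℝ)) : (Fin d → ℝ) × ℝ)
      = (∑ j, y ((Pi.single j (1:ℝ) : Fin d → ℝ), (0:ℝ)) * x j)
        + y (((0 : Fin d → ℝ), (1:ℝ))) := by
    intro x
    have hdec : ((x, (1:ℝ)) : (Fin d → ℝ) × ℝ)
        = (((x, (0:ℝ)) : (Fin d → ℝ) × ℝ)) + (((0 : Fin d → ℝ), (1:ℝ))) := by
      simp [Prod.ext_iff]
    rw [hdec, map_add]
    congr 1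
    have hinl : y (((x, (0:ℝ)) : (Fin d → ℝ) × ℝ))
        = (y ∘ₗ LinearMap.inl ℝ (Fin d → ℝ) ℝ) x := by
      rw [LinearMap.comp_apply, LinearMap.inl_apply]
    rw [hinl, LinearMap.pi_apply_eq_sum_univ (y ∘ₗ LinearMap.inl ℝ (Fin d → ℝ) ℝ) x]
    refine Finset.sum_congr rfl (fun j _ => ?_)
    rw [LinearMap.comp_apply, LinearMap.inl_apply, smul_eq_mul, mul_comm]
    have hsingle : (fun k => if j = k then (1:ℝ) else 0) = (Pi.single j (1:ℝ) : Fin d → ℝ) := by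
      funext k; simp [Pi.single_apply, eq_comm]
    rw [hsingle]
  have hdom0 : ∀ x ∈ A, lam x ≤ (∑ j, y ((Pi.single j (1:ℝ) : Fin d → ℝ), (0:ℝ)) * x j)
      + y (((0 : Fin d → ℝ), (1:ℝ))) := by
    intro x hx
    have h1 := hy ((⟨x, hx⟩ : {x // x ∈ A}), true)
    have e1 : w ((⟨x, hx⟩ : {x // x ∈ A}), true) = ((x, (1:ℝ)) : (Fin d → ℝ) × ℝ) := by
      simp [hw]
    have e2 : βv ((⟨x, hx⟩ : {x // x ∈ A}), true) = lam x := by simp [hβv]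
    rw [e1, e2, hkey x] at h1
    exact h1
  have htight0 : ∀ g : {x // x ∈ A}, γ g ≠ 0 →
      lam (g : Fin d → ℝ) = (∑ j, y ((Pi.single j (1:ℝ) : Fin d → ℝ), (0:ℝ)) * (g : Fin d → ℝ) j)
        + y (((0 : Fin d → ℝ), (1:ℝ))) := by
    intro g hg
    have h1 := hy (g, true)
    have h2 := hy (g, false)
    have e1 : w (g, true) = (((g : Fin d → ℝ), (1:ℝ)) : (Fin d → ℝ) × ℝ) := by simp [hw]
    have e2 : βv (g, true) = lam (g : Fin d → ℝ) := by simp [hβv]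
    have e3 : w (g, false) = ((-(g : Fin d → ℝ), (-1:ℝ)) : (Fin d → ℝ) × ℝ) := by simp [hw, hg]
    have e4 : βv (g, false) = -lam (g : Fin d → ℝ) := by simp [hβv, hg]
    have e5 : ((-(g : Fin d → ℝ), (-1:ℝ)) : (Fin d → ℝ) × ℝ)
        = -(((g : Fin d → ℝ), (1:ℝ)) : (Fin d → ℝ) × ℝ) := by simp [Prod.ext_iff]
    rw [e1, e2, hkey] at h1
    rw [e3, e4, e5, map_neg, hkey] at h2
    linarith
  -- ===== Grow to a facet =====
  obtain ⟨c₁, b₁, hdom1, htight1, hspan1⟩ := grow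
    ((A.filter (fun x => lam x ≠ (∑ j, y ((Pi.single j (1:ℝ) : Fin d → ℝ), (0:ℝ)) * x j)
      + y (((0 : Fin d → ℝ), (1:ℝ))))).card)
    (fun j => y ((Pi.single j (1:ℝ) : Fin d → ℝ), (0:ℝ))) (y (((0 : Fin d → ℝ), (1:ℝ))))
    hdom0 le_rfl
  set G : Finset (Fin d → ℝ) := A.filter (fun x => lam x = (∑ j, c₁ j * x j) + b₁) with hG
  have hface : IsFaceOfRegSubdiv d A lam G := by
    refine ⟨Finset.filter_subset _ _, c₁, b₁, hdom1, fun x hx => ?_⟩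
    constructor
    · intro h; exact Finset.mem_filter.mpr ⟨hx, h⟩
    · intro h; exact (Finset.mem_filter.mp h).2
  have hnot := hnotface G hface
  have hstrict2 : lam a + lam b < ((∑ j, c₁ j * a j) + b₁) + ((∑ j, c₁ j * b j) + b₁) := by
    by_cases hta : lam a = (∑ j, c₁ j * a j) + b₁
    · have htb : lam b ≠ (∑ j, c₁ j * b j) + b₁ := by
        intro h
        exact hnot ⟨Finset.mem_filter.mpr ⟨ha, hta⟩, Finset.mem_filter.mpr ⟨hb, h⟩⟩
      have := lt_of_le_of_ne (hdom1 b hb) htb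
      linarith
    · have := lt_of_le_of_ne (hdom1 a ha) hta
      linarith [hdom1 b hb]
  set α : (Fin d → ℝ) → ℝ := fun x => if h : x ∈ A then γ ⟨x, h⟩ else 0 with hα
  have hcoe : ∀ g : {x // x ∈ A}, α (g : Fin d → ℝ) = γ g := by
    intro g
    simp only [hα, dif_pos g.2]
  have hαnn : ∀ g ∈ G, 0 ≤ α g := by
    intro g hgG
    have hgA : g ∈ A := Finset.filter_subset _ _ hgG
    simp only [hα, dif_pos hgA]
    exact hγ0 _
  have hsupp : ∀ x ∈ A, x ∉ G → α x = 0 := by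
    intro x hx hxG
    have h0 : γ ⟨x, hx⟩ = 0 := by
      by_contra hne
      exact hxG (Finset.mem_filter.mpr ⟨hx, htight1 x hx (htight0 ⟨x, hx⟩ hne)⟩)
    simp only [hα, dif_pos hx]
    exact h0
  have hsum1 : ∑ g ∈ G, α g = 1 := by
    rw [Finset.sum_subset (Finset.filter_subset _ A) (fun x hx hxG => hsupp x hx hxG)]
    rw [← Finset.sum_attach A (fun x => α x)]
    rw [Finset.sum_congr rfl (fun g _ => hcoe g)]
    rw [← Finset.univ_eq_attach]
    exact hγ1
  have hsum2 : ∑ g ∈ G, α g • g = m := by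
    rw [Finset.sum_subset (Finset.filter_subset _ A)
      (fun x hx hxG => by rw [hsupp x hx hxG, zero_smul])]
    rw [← Finset.sum_attach A (fun x => α x • x)]
    rw [Finset.sum_congr rfl (fun g _ => by rw [hcoe g])]
    rw [← Finset.univ_eq_attach]
    exact hγm
  have hsum3 : ∑ g ∈ G, α g * lam g = ∑ g : {x // x ∈ A}, γ g * lam (g : Fin d → ℝ) := by
    rw [Finset.sum_subset (Finset.filter_subset _ A)
      (fun x hx hxG => by rw [hsupp x hx hxG, zero_mul])]
    rw [← Finset.sum_attach A (fun x => α x * lam x)]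
    rw [Finset.sum_congr rfl (fun g _ => by rw [hcoe g])]
    rw [← Finset.univ_eq_attach]
  have hmj : ∀ j, ∑ g : {x // x ∈ A}, γ g * (g : Fin d → ℝ) j = m j := by
    intro j
    have h := congrFun hγm j
    rw [Finset.sum_apply] at h
    simpa using h
  have hval : ∑ g : {x // x ∈ A}, γ g * lam (g : Fin d → ℝ) = (∑ j, c₁ j * m j) + b₁ := by
    have h1 : ∑ g : {x // x ∈ A}, γ g * lam (g : Fin d → ℝ)
        = ∑ g : {x // x ∈ A}, γ g * ((∑ j, c₁ j * (g : Fin d → ℝ) j) + b₁) := by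
      refine Finset.sum_congr rfl (fun g _ => ?_)
      by_cases hg : γ g = 0
      · rw [hg, zero_mul, zero_mul]
      · rw [htight1 (g : Fin d → ℝ) g.2 (htight0 g hg)]
    rw [h1]
    calc ∑ g : {x // x ∈ A}, γ g * ((∑ j, c₁ j * (g : Fin d → ℝ) j) + b₁)
        = ∑ g : {x // x ∈ A}, ((∑ j, γ g * (c₁ j * (g : Fin d → ℝ) j)) + γ g * b₁) := by
          refine Finset.sum_congr rfl (fun g _ => ?_)
          rw [mul_add, Finset.mul_sum]
      _ = (∑ g : {x // x ∈ A}, ∑ j, γ g * (c₁ j * (g : Fin d → ℝ) j))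
          + ∑ g : {x // x ∈ A}, γ g * b₁ := Finset.sum_add_distrib
      _ = (∑ j, ∑ g : {x // x ∈ A}, γ g * (c₁ j * (g : Fin d → ℝ) j)) + b₁ := by
          rw [Finset.sum_comm, ← Finset.sum_mul, hγ1, one_mul]
      _ = (∑ j, c₁ j * m j) + b₁ := by
          congr 1
          refine Finset.sum_congr rfl (fun j _ => ?_)
          rw [← hmj j, Finset.mul_sum]
          exact Finset.sum_congr rfl (fun g _ => by ring)
  have hmsplit : (∑ j, c₁ j * m j) + b₁
      = (1/2) * ((∑ j, c₁ j * a j) + b₁) + (1/2) * ((∑ j, c₁ j * b j) + b₁) := by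
    have h1 : ∑ j, c₁ j * m j = ∑ j, ((1/2) * (c₁ j * a j) + (1/2) * (c₁ j * b j)) := by
      refine Finset.sum_congr rfl (fun j _ => ?_)
      have hmm : m j = (1/2) * a j + (1/2) * b j := by
        rw [hm]; simp [Pi.add_apply, Pi.smul_apply, smul_eq_mul]
      rw [hmm]; ring
    rw [h1, Finset.sum_add_distrib, ← Finset.mul_sum, ← Finset.mul_sum]
    ring
  refine ⟨G, hface, hspan1, 1/2, 1/2, α, by norm_num, by norm_num, by norm_num,
    hαnn, hsum1, ?_, ?_⟩
  · rw [hsum2]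
  · rw [hsum3, hval, hmsplit]
    linarith
end

section
/- Let 𝒜 ⊂ ℝ^d be finite and define φ_𝒜 : ℝ^d_{>0} → ▵^𝒜 by φ_𝒜(x) = [x^a : a ∈ 𝒜] (homogeneous coordinates, i.e., the vector (x^a)_{a∈𝒜} normalized to sum 1), where x^a = x_1^{a_1}···x_d^{a_d} with real exponents. Let X_𝒜 be the closure of the image of φ_𝒜. Then the map taut_𝒜 : ▵^𝒜 → ℝ^d, z ↦ Σ_{a∈𝒜} z_a·a, restricts to a homeomorphism from X_𝒜 onto the convex hull Δ_𝒜 of 𝒜 (Birch's Theorem). -/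
open Finset

noncomputable def toricMonomial (d : ℕ) (A : Finset (Fin d → ℝ)) (x : Fin d → ℝ) :
    ↥A → ℝ := fun a => ∏ j, (x j) ^ ((a : Fin d → ℝ) j)

noncomputable def simplexNormalize (d : ℕ) (A : Finset (Fin d → ℝ)) (z : ↥A → ℝ) :
    ↥A → ℝ := fun a => z a / ∑ b : ↥A, z b

noncomputable def toricVariety (d : ℕ) (A : Finset (Fin d → ℝ)) : Set (↥A → ℝ) :=
  closure {z | ∃ x : Fin d → ℝ, (∀ j, 0 < x j) ∧
    z = simplexNormalize d A (toricMonomial d A x)}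

noncomputable def tautMap (d : ℕ) (A : Finset (Fin d → ℝ)) (z : ↥A → ℝ) :
    Fin d → ℝ := ∑ a : ↥A, z a • (a : Fin d → ℝ)

namespace Birch

open Real Set Filter Topology

/-- dot product on `Fin d → ℝ`. -/
noncomputable def dotp {d : ℕ} (y x : Fin d → ℝ) : ℝ := ∑ j, y j * x j

lemma dotp_self_eq_zero {y : Fin d → ℝ} (h : dotp y y = 0) : y = 0 := by
  have : ∀ j ∈ Finset.univ, y j * y j = 0 := by
    intro j _
    have := (Finset.sum_eq_zero_iff_of_nonneg (fun j _ => mul_self_nonneg (y j))).mp h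
    exact this j (Finset.mem_univ j)
  funext j
  exact mul_self_eq_zero.mp (this j (Finset.mem_univ j))

variable (d : ℕ) (A : Finset (Fin d → ℝ))

/-- the standard simplex in `↥A → ℝ`. -/
def simp' : Set (↥A → ℝ) := {z | (∀ a, 0 ≤ z a) ∧ ∑ a : ↥A, z a = 1}

/-- the image of the normalized monomial map. -/
def MSet : Set (↥A → ℝ) := {z | ∃ x : Fin d → ℝ, (∀ j, 0 < x j) ∧
    z = simplexNormalize d A (toricMonomial d A x)}

/-- entropy -/
noncomputable def Ent (z : ↥A → ℝ) : ℝ := ∑ a : ↥A, Real.negMulLog (z a)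

variable {d A}

lemma toricVariety_eq : toricVariety d A = closure (MSet d A) := rfl

lemma toricMonomial_pos {x : Fin d → ℝ} (hx : ∀ j, 0 < x j) (a : ↥A) :
    0 < toricMonomial d A x a :=
  Finset.prod_pos fun j _ => Real.rpow_pos_of_pos (hx j) _

lemma MSet_subset_simp (hA : A.Nonempty) : MSet d A ⊆ simp' d A := by
  rintro z ⟨x, hx, rfl⟩
  have : Nonempty ↥A := hA.to_subtype
  have hT : 0 < ∑ b : ↥A, toricMonomial d A x b :=
    Finset.sum_pos (fun b _ => toricMonomial_pos hx b) Finset.univ_nonempty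
  constructor
  · intro a
    exact div_nonneg (toricMonomial_pos hx a).le hT.le
  · simp only [simplexNormalize]
    rw [← Finset.sum_div, div_self hT.ne']

lemma isClosed_simp : IsClosed (simp' d A) := by
  have h1 : IsClosed {z : ↥A → ℝ | ∀ a, 0 ≤ z a} := by
    have he : {z : ↥A → ℝ | ∀ a, 0 ≤ z a} = ⋂ a, {z | 0 ≤ z a} := by
      ext z; simp [Set.mem_iInter]
    rw [he]
    exact isClosed_iInter fun a => isClosed_le continuous_const (continuous_apply a)
  have h2 : IsClosed {z : ↥A → ℝ | ∑ a : ↥A, z a = 1} :=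
    isClosed_eq (continuous_finset_sum _ fun a _ => continuous_apply a) continuous_const
  exact h1.inter h2

lemma isCompact_simp : IsCompact (simp' d A) := by
  have hsub : simp' d A ⊆ Set.Icc (0 : ↥A → ℝ) 1 := by
    rintro z ⟨h0, h1⟩
    constructor
    · intro a; exact h0 a
    · intro a
      calc z a ≤ ∑ b : ↥A, z b :=
            Finset.single_le_sum (fun b _ => h0 b) (Finset.mem_univ a)
        _ = 1 := h1
  exact (isCompact_Icc).of_isClosed_subset isClosed_simp hsub

lemma toricVariety_subset_simp (hA : A.Nonempty) : toricVariety d A ⊆ simp' d A :=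
  closure_minimal (MSet_subset_simp hA) isClosed_simp

lemma isCompact_toricVariety (hA : A.Nonempty) : IsCompact (toricVariety d A) :=
  isCompact_simp.of_isClosed_subset isClosed_closure (toricVariety_subset_simp hA)

lemma continuous_taut : Continuous (tautMap d A) := by
  refine continuous_finset_sum _ fun a _ => ?_
  exact (continuous_apply a).smul continuous_const

lemma taut_mem_hull {z : ↥A → ℝ} (hz : z ∈ simp' d A) :
    tautMap d A z ∈ convexHull ℝ (A : Set (Fin d → ℝ)) := by
  have h := Finset.centerMass_mem_convexHull (Finset.univ : Finset ↥A)
    (w := z) (fun a _ => hz.1 a) (by rw [hz.2]; norm_num)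
    (z := fun a : ↥A => (a : Fin d → ℝ)) (fun a _ => a.2)
  rwa [Finset.centerMass_eq_of_sum_1 _ _ hz.2] at h

lemma exists_simplex_taut {q : Fin d → ℝ} (hq : q ∈ convexHull ℝ (A : Set (Fin d → ℝ))) :
    ∃ z ∈ simp' d A, tautMap d A z = q := by
  rw [Finset.convexHull_eq] at hq
  obtain ⟨w, hw0, hw1, hwq⟩ := hq
  refine ⟨fun a => w ↑a, ⟨fun a => hw0 _ a.2, ?_⟩, ?_⟩
  · rw [Finset.sum_coe_sort A w]; exact hw1
  · rw [← hwq, Finset.centerMass_eq_of_sum_1 _ _ hw1]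
    unfold tautMap
    rw [Finset.sum_coe_sort A (fun y => w y • y)]
    rfl

-- coordinates of tautMap
lemma taut_apply (u : ↥A → ℝ) (j : Fin d) :
    tautMap d A u j = ∑ a : ↥A, u a * (a : Fin d → ℝ) j := by
  simp [tautMap, Finset.sum_apply]

lemma sum_mul_dotp (u : ↥A → ℝ) (y : Fin d → ℝ) :
    ∑ a : ↥A, u a * dotp y (a : Fin d → ℝ) = dotp y (tautMap d A u) := by
  simp only [dotp, taut_apply, Finset.mul_sum]
  rw [Finset.sum_comm]
  congr 1; funext j; congr 1; funext a; ring

lemma toricMonomial_exp (y : Fin d → ℝ) (a : ↥A) :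
    toricMonomial d A (fun j => Real.exp (y j)) a = Real.exp (dotp y (a : Fin d → ℝ)) := by
  unfold toricMonomial dotp
  simp only [Real.rpow_def_of_pos (Real.exp_pos _), Real.log_exp]
  rw [← Real.exp_sum]

lemma gibbs (hA : A.Nonempty) {z w : ↥A → ℝ} (hz : z ∈ MSet d A) (hw : w ∈ simp' d A)
    (ht : tautMap d A w = tautMap d A z) : Ent d A w ≤ Ent d A z := by
  have : Nonempty ↥A := hA.to_subtype
  obtain ⟨x, hx, rfl⟩ := hz
  set lx : Fin d → ℝ := fun j => Real.log (x j) with hlx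
  have hxe : x = fun j => Real.exp (lx j) := by
    funext j; rw [hlx]; exact (Real.exp_log (hx j)).symm
  set T : ℝ := ∑ b : ↥A, toricMonomial d A x b with hT
  have hTpos : 0 < T :=
    Finset.sum_pos (fun b _ => toricMonomial_pos hx b) Finset.univ_nonempty
  set z : ↥A → ℝ := simplexNormalize d A (toricMonomial d A x) with hzdef
  have hzval : ∀ a, z a = Real.exp (dotp lx (a : Fin d → ℝ)) / T := by
    intro a
    rw [hzdef]
    show toricMonomial d A x a / T = _
    rw [hxe, toricMonomial_exp]
  have hzpos : ∀ a, 0 < z a := fun a => by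
    rw [hzval a]; exact div_pos (Real.exp_pos _) hTpos
  have hzS : z ∈ simp' d A := MSet_subset_simp hA ⟨x, hx, hzdef⟩
  have hlog : ∀ a, Real.log (z a) = dotp lx (a : Fin d → ℝ) - Real.log T := by
    intro a
    rw [hzval a, Real.log_div (Real.exp_ne_zero _) hTpos.ne', Real.log_exp]
  -- key: ∑ u a * log (z a) only depends on tautMap u (for u in simplex)
  have key : ∀ u : ↥A → ℝ, u ∈ simp' d A →
      ∑ a : ↥A, u a * Real.log (z a) = dotp lx (tautMap d A u) - Real.log T := by
    intro u hu
    have : ∑ a : ↥A, u a * Real.log (z a)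
        = (∑ a : ↥A, u a * dotp lx (a : Fin d → ℝ)) - (∑ a : ↥A, u a) * Real.log T := by
      rw [Finset.sum_mul, ← Finset.sum_sub_distrib]
      congr 1; funext a; rw [hlog a]; ring
    rw [this, hu.2, sum_mul_dotp, one_mul]
  have key2 : ∑ a : ↥A, w a * Real.log (z a) = ∑ a : ↥A, z a * Real.log (z a) := by
    rw [key w hw, key z hzS, ht]
  -- termwise bound
  have hterm : ∀ a : ↥A, w a * Real.log (z a) - w a * Real.log (w a) ≤ z a - w a := by
    intro a
    rcases eq_or_lt_of_le (hw.1 a) with h0 | hpos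
    · rw [← h0]; simpa using (hzpos a).le
    · have hdiv : 0 < z a / w a := div_pos (hzpos a) hpos
      have := Real.log_le_sub_one_of_pos hdiv
      have hlogdiv : Real.log (z a) - Real.log (w a) = Real.log (z a / w a) :=
        (Real.log_div (hzpos a).ne' hpos.ne').symm
      calc w a * Real.log (z a) - w a * Real.log (w a)
          = w a * Real.log (z a / w a) := by rw [← mul_sub, hlogdiv]
        _ ≤ w a * (z a / w a - 1) := by
            exact mul_le_mul_of_nonneg_left this hpos.le
        _ = z a - w a := by field_simp
  have hsum : ∑ a : ↥A, (w a * Real.log (z a) - w a * Real.log (w a))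
      ≤ ∑ a : ↥A, (z a - w a) := Finset.sum_le_sum fun a _ => hterm a
  have hrhs : ∑ a : ↥A, (z a - w a) = 0 := by
    rw [Finset.sum_sub_distrib, hzS.2, hw.2, sub_self]
  rw [Finset.sum_sub_distrib, key2] at hsum
  have H : ∑ a : ↥A, z a * Real.log (z a) - ∑ a : ↥A, w a * Real.log (w a) ≤ 0 :=
    hsum.trans (le_of_eq hrhs)
  unfold Ent
  simp only [Real.negMulLog, neg_mul, Finset.sum_neg_distrib]
  linarith

/-- `tautMap` as a linear map. -/
noncomputable def tautLin (d : ℕ) (A : Finset (Fin d → ℝ)) :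
    (↥A → ℝ) →ₗ[ℝ] (Fin d → ℝ) where
  toFun := tautMap d A
  map_add' u v := by
    unfold tautMap
    simp [add_smul, Finset.sum_add_distrib]
  map_smul' c u := by
    unfold tautMap
    simp [mul_smul, Finset.smul_sum]

lemma tautLin_apply (u : ↥A → ℝ) : tautLin d A u = tautMap d A u := rfl

/-- Lower hemicontinuity of the fibers of `tautMap` over the simplex. -/
lemma lhc (hA : A.Nonempty) {w : ↥A → ℝ} (hw : w ∈ simp' d A) {ε : ℝ} (hε : 0 < ε) :
    ∃ δ > 0, ∀ q ∈ convexHull ℝ (A : Set (Fin d → ℝ)), dist q (tautMap d A w) < δ →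
      ∃ w' ∈ simp' d A, tautMap d A w' = q ∧ dist w' w < ε := by
  by_contra hcon
  push_neg at hcon
  have hq : ∀ n : ℕ, ∃ q ∈ convexHull ℝ (A : Set (Fin d → ℝ)),
      dist q (tautMap d A w) < 1 / (n + 1) ∧
      ∀ w' ∈ simp' d A, tautMap d A w' = q → ε ≤ dist w' w := by
    intro n
    obtain ⟨q, hq1, hq2, hq3⟩ := hcon (1 / (n + 1)) (by positivity)
    exact ⟨q, hq1, hq2, hq3⟩
  choose q hqhull hqdist hqbad using hq
  have hv : ∀ n, ∃ v, v ∈ simp' d A ∧ tautMap d A v = q n := by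
    intro n
    obtain ⟨v, h1, h2⟩ := exists_simplex_taut (hqhull n)
    exact ⟨v, h1, h2⟩
  choose v hvS hvq using hv
  obtain ⟨vl, hvlS, φ, hφ, hconv⟩ := isCompact_simp.tendsto_subseq hvS
  -- q tends to tautMap w
  have hqlim : Tendsto q atTop (𝓝 (tautMap d A w)) := by
    rw [tendsto_iff_dist_tendsto_zero]
    refine squeeze_zero (fun n => dist_nonneg) (fun n => (hqdist n).le) ?_
    exact tendsto_one_div_add_atTop_nhds_zero_nat
  -- hence tautMap vl = tautMap w
  have hvlq : tautMap d A vl = tautMap d A w := by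
    have h1 : Tendsto (fun k => tautMap d A (v (φ k))) atTop (𝓝 (tautMap d A vl)) :=
      (continuous_taut.tendsto vl).comp hconv
    have h2 : Tendsto (fun k => tautMap d A (v (φ k))) atTop (𝓝 (tautMap d A w)) := by
      simp only [hvq]
      exact hqlim.comp hφ.tendsto_atTop
    exact tendsto_nhds_unique h1 h2
  set D : ℝ := dist w vl with hD
  set t : ℝ := min (1/2) (ε / (2 * (D + 1))) with hto
  have hD0 : 0 ≤ D := dist_nonneg
  have ht0 : 0 < t := by
    apply lt_min (by norm_num)
    positivity
  have ht1 : t < 1 := lt_of_le_of_lt (min_le_left _ _) (by norm_num)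
  have htD : t * D < ε / 2 := by
    calc t * D ≤ (ε / (2 * (D + 1))) * D := by
          apply mul_le_mul_of_nonneg_right (min_le_right _ _) hD0
      _ < ε / 2 := by
          rw [div_mul_eq_mul_div, div_lt_div_iff₀ (by positivity) (by norm_num)]
          nlinarith
  set W : ℕ → (↥A → ℝ) := fun k => v (φ k) + (1 - t) • (w - vl) with hW
  -- taut of W
  have hWtaut : ∀ k, tautMap d A (W k) = q (φ k) := by
    intro k
    have : tautLin d A (W k)
        = tautLin d A (v (φ k)) + (1 - t) • (tautLin d A w - tautLin d A vl) := by
      rw [hW]; simp [map_add, map_smul, map_sub]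
    rw [tautLin_apply, tautLin_apply, tautLin_apply, tautLin_apply] at this
    rw [this, hvlq, sub_self, smul_zero, add_zero, hvq]
  -- coordinate sum of W
  have hWsum : ∀ k, ∑ a : ↥A, W k a = 1 := by
    intro k
    have : ∑ a : ↥A, W k a
        = ∑ a : ↥A, v (φ k) a + (1 - t) * (∑ a : ↥A, w a - ∑ a : ↥A, vl a) := by
      simp only [hW, Pi.add_apply, Pi.smul_apply, Pi.sub_apply, smul_eq_mul]
      rw [Finset.sum_add_distrib, ← Finset.mul_sum, Finset.sum_sub_distrib]
    rw [this, (hvS (φ k)).2, hw.2, hvlS.2, sub_self, mul_zero, add_zero]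
  -- nonnegativity eventually
  have hWpos : ∀ᶠ k in atTop, ∀ a : ↥A, 0 ≤ W k a := by
    rw [Filter.eventually_all]
    intro a
    by_cases hcase : w a = 0 ∧ vl a = 0
    · filter_upwards with k
      simp only [hW, Pi.add_apply, Pi.smul_apply, Pi.sub_apply, smul_eq_mul, hcase.1, hcase.2]
      simpa using (hvS (φ k)).1 a
    · have hca : 0 < vl a + (1 - t) * (w a - vl a) := by
        have hwa := hw.1 a
        have hvla := hvlS.1 a
        rcases lt_or_eq_of_le hvla with hv1 | hv1
        · nlinarith
        · have hwa' : 0 < w a := by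
            rcases lt_or_eq_of_le hwa with h | h
            · exact h
            · exact absurd ⟨h.symm, hv1.symm⟩ hcase
          nlinarith
      have hcoord : Tendsto (fun k => W k a) atTop (𝓝 (vl a + (1 - t) * (w a - vl a))) := by
        have : Tendsto (fun k => v (φ k) a) atTop (𝓝 (vl a)) :=
          ((continuous_apply a).tendsto vl).comp hconv
        simpa only [hW, Pi.add_apply, Pi.smul_apply, Pi.sub_apply, smul_eq_mul] using
          this.add tendsto_const_nhds
      filter_upwards [hcoord.eventually (eventually_gt_nhds hca)] with k hk
      exact hk.le
  -- distance eventually small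
  have hWdist : ∀ᶠ k in atTop, dist (W k) w < ε := by
    have hvclose : ∀ᶠ k in atTop, dist (v (φ k)) vl < ε / 2 - t * D := by
      have : Tendsto (fun k => dist (v (φ k)) vl) atTop (𝓝 0) :=
        tendsto_iff_dist_tendsto_zero.mp hconv
      have hgap : 0 < ε / 2 - t * D := by linarith
      exact (this.eventually (eventually_lt_nhds hgap))
    filter_upwards [hvclose] with k hk
    have hsub : W k - w = (v (φ k) - vl) - t • (w - vl) := by
      rw [hW]
      module
    have : dist (W k) w ≤ dist (v (φ k)) vl + t * D := by
      rw [dist_eq_norm, hsub]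
      calc ‖(v (φ k) - vl) - t • (w - vl)‖
          ≤ ‖v (φ k) - vl‖ + ‖t • (w - vl)‖ := norm_sub_le _ _
        _ = dist (v (φ k)) vl + t * D := by
            rw [norm_smul, ← dist_eq_norm, ← dist_eq_norm, Real.norm_eq_abs,
              abs_of_pos ht0, hD]
    linarith
  obtain ⟨k, hk1, hk2⟩ := ((hWpos.and hWdist).exists)
  exact absurd hk2 (not_lt.mpr (hqbad (φ k) (W k) ⟨hk1, hWsum k⟩ (hWtaut k)))

lemma ent_continuous : Continuous (Ent d A) :=
  continuous_finset_sum _ fun a _ => Real.continuous_negMulLog.comp (continuous_apply a)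

/-- Every point of the toric variety maximizes entropy on its `tautMap`-fiber. -/
lemma maxent (hA : A.Nonempty) {z : ↥A → ℝ} (hz : z ∈ toricVariety d A)
    {w : ↥A → ℝ} (hw : w ∈ simp' d A) (ht : tautMap d A w = tautMap d A z) :
    Ent d A w ≤ Ent d A z := by
  refine le_of_forall_pos_le_add ?_
  intro ε hε
  -- continuity of Ent at w
  obtain ⟨η, hη0, hη⟩ := Metric.continuous_iff.mp ent_continuous w (ε/2) (by positivity)
  -- lower hemicontinuity at w
  obtain ⟨δ, hδ0, hδ⟩ := lhc hA hw hη0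
  -- approximate z by a point of MSet
  set U : Set (↥A → ℝ) := {u | dist (tautMap d A u) (tautMap d A z) < δ ∧
      dist (Ent d A u) (Ent d A z) < ε/2} with hU
  have hUopen : IsOpen U := by
    apply IsOpen.inter
    · exact isOpen_lt ((continuous_taut.dist continuous_const)) continuous_const
    · exact isOpen_lt ((ent_continuous.dist continuous_const)) continuous_const
  have hzU : z ∈ U := by
    constructor <;> simp [hδ0, hε, half_pos]
  obtain ⟨z', hz'U, hz'M⟩ := _root_.mem_closure_iff.mp hz U hUopen hzU
  have hz'S : z' ∈ simp' d A := MSet_subset_simp hA hz'M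
  have hz'hull : tautMap d A z' ∈ convexHull ℝ (A : Set (Fin d → ℝ)) := taut_mem_hull hz'S
  have hz'dist : dist (tautMap d A z') (tautMap d A w) < δ := by
    rw [ht]; exact hz'U.1
  obtain ⟨w', hw'S, hw'taut, hw'dist⟩ := hδ (tautMap d A z') hz'hull hz'dist
  have hgibbs : Ent d A w' ≤ Ent d A z' := gibbs hA hz'M hw'S hw'taut
  have h1 : dist (Ent d A w') (Ent d A w) < ε/2 := hη w' hw'dist
  rw [Real.dist_eq, abs_sub_lt_iff] at h1
  have h2 : dist (Ent d A z') (Ent d A z) < ε/2 := hz'U.2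
  rw [Real.dist_eq, abs_sub_lt_iff] at h2
  linarith [h1.2, h2.1, hgibbs]

/-- Injectivity of the moment map on the toric variety. -/
lemma taut_injOn (hA : A.Nonempty) : Set.InjOn (tautMap d A) (toricVariety d A) := by
  intro z hz z' hz' he
  by_contra hne
  have hzS : z ∈ simp' d A := toricVariety_subset_simp hA hz
  have hz'S : z' ∈ simp' d A := toricVariety_subset_simp hA hz'
  have hEeq : Ent d A z = Ent d A z' :=
    le_antisymm (maxent hA hz' hzS he) (maxent hA hz hz'S he.symm)
  set m : ↥A → ℝ := fun a => (1/2 : ℝ) * z a + (1/2 : ℝ) * z' a with hm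
  have hmS : m ∈ simp' d A := by
    constructor
    · intro a
      have := hzS.1 a; have := hz'S.1 a
      rw [hm]; positivity
    · rw [hm]
      simp only
      rw [Finset.sum_add_distrib, ← Finset.mul_sum, ← Finset.mul_sum, hzS.2, hz'S.2]
      norm_num
  have hmt : tautMap d A m = tautMap d A z := by
    have hmv : m = (1/2 : ℝ) • z + (1/2 : ℝ) • z' := by
      funext a; simp [hm, smul_eq_mul]
    have : tautLin d A m = (1/2 : ℝ) • tautLin d A z + (1/2 : ℝ) • tautLin d A z' := by
      rw [hmv]; simp [map_add, map_smul]
    rw [tautLin_apply, tautLin_apply, tautLin_apply] at this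
    rw [this, he]
    funext j
    simp only [Pi.add_apply, Pi.smul_apply, smul_eq_mul]
    ring
  have hle : Ent d A m ≤ Ent d A z := maxent hA hz hmS hmt
  -- strict concavity gives the contradiction
  obtain ⟨a₀, ha₀⟩ : ∃ a, z a ≠ z' a := by
    by_contra h; push_neg at h; exact hne (funext h)
  have hlt : ∑ a : ↥A, ((1/2 : ℝ) * Real.negMulLog (z a) + (1/2 : ℝ) * Real.negMulLog (z' a))
      < ∑ a : ↥A, Real.negMulLog (m a) := by
    apply Finset.sum_lt_sum
    · intro a _
      have := Real.concaveOn_negMulLog.2 (Set.mem_Ici.mpr (hzS.1 a))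
        (Set.mem_Ici.mpr (hz'S.1 a)) (by norm_num : (0:ℝ) ≤ 1/2) (by norm_num : (0:ℝ) ≤ 1/2)
        (by norm_num : (1/2 : ℝ) + 1/2 = 1)
      simpa [smul_eq_mul, hm] using this
    · refine ⟨a₀, Finset.mem_univ _, ?_⟩
      have := Real.strictConcaveOn_negMulLog.2 (Set.mem_Ici.mpr (hzS.1 a₀))
        (Set.mem_Ici.mpr (hz'S.1 a₀)) ha₀ (by norm_num : (0:ℝ) < 1/2)
        (by norm_num : (0:ℝ) < 1/2) (by norm_num : (1/2 : ℝ) + 1/2 = 1)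
      simpa [smul_eq_mul, hm] using this
  have hsplit : ∑ a : ↥A, ((1/2 : ℝ) * Real.negMulLog (z a) + (1/2 : ℝ) * Real.negMulLog (z' a))
      = (1/2 : ℝ) * Ent d A z + (1/2 : ℝ) * Ent d A z' := by
    rw [Finset.sum_add_distrib, ← Finset.mul_sum, ← Finset.mul_sum]
    rfl
  rw [hsplit, ← hEeq] at hlt
  have : Ent d A z < Ent d A m := by
    unfold Ent; unfold Ent at hlt; linarith
  linarith

/- ### dot product linearity -/

lemma dotp_add_left (y y' x : Fin d → ℝ) : dotp (y + y') x = dotp y x + dotp y' x := by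
  simp [dotp, add_mul, Finset.sum_add_distrib]

lemma dotp_smul_left (c : ℝ) (y x : Fin d → ℝ) : dotp (c • y) x = c * dotp y x := by
  simp [dotp, Finset.mul_sum, mul_assoc]

lemma dotp_add_right (y u v : Fin d → ℝ) : dotp y (u + v) = dotp y u + dotp y v := by
  simp [dotp, mul_add, Finset.sum_add_distrib]

lemma dotp_smul_right (c : ℝ) (y u : Fin d → ℝ) : dotp y (c • u) = c * dotp y u := by
  simp only [dotp, Pi.smul_apply, smul_eq_mul, Finset.mul_sum]
  congr 1; funext j; ring

lemma dotp_sub_right (y u v : Fin d → ℝ) : dotp y (u - v) = dotp y u - dotp y v := by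
  simp [dotp, mul_sub, Finset.sum_sub_distrib]

/- ### the direction space -/

variable (A)

/-- The linear span of the differences `a - a₀`. -/
noncomputable def Vsp (a₀ : Fin d → ℝ) : Submodule ℝ (Fin d → ℝ) :=
  Submodule.span ℝ (Set.range (fun a : ↥A => (a : Fin d → ℝ) - a₀))

variable {A}

lemma taut_sub_mem {a₀ : Fin d → ℝ} {u v : ↥A → ℝ}
    (hu : ∑ a : ↥A, u a = 1) (hv : ∑ a : ↥A, v a = 1) :
    tautMap d A u - tautMap d A v ∈ Vsp A a₀ := by
  have key : ∑ a : ↥A, (u a - v a) • ((a : Fin d → ℝ) - a₀)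
      = tautMap d A u - tautMap d A v := by
    calc ∑ a : ↥A, (u a - v a) • ((a : Fin d → ℝ) - a₀)
        = ∑ a : ↥A, (u a • (a : Fin d → ℝ) - v a • (a : Fin d → ℝ) - (u a - v a) • a₀) := by
          apply Finset.sum_congr rfl; intro a _
          module
      _ = tautMap d A u - tautMap d A v - (∑ a : ↥A, (u a - v a)) • a₀ := by
          rw [Finset.sum_sub_distrib, Finset.sum_sub_distrib, Finset.sum_smul]
          rfl
      _ = tautMap d A u - tautMap d A v := by
          rw [Finset.sum_sub_distrib, hu, hv, sub_self, zero_smul, sub_zero]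
  rw [← key]
  apply Submodule.sum_mem
  intro a _
  exact Submodule.smul_mem _ _ (Submodule.subset_span ⟨a, rfl⟩)

/-- A nonzero vector of the span is not `dotp`-constant on `A`. -/
lemma exists_dotp_ne {a₀ : Fin d → ℝ} (ha₀ : a₀ ∈ A) {y : Fin d → ℝ}
    (hy : y ∈ Vsp A a₀) (hy0 : y ≠ 0) :
    ∃ a b : ↥A, dotp y (b : Fin d → ℝ) < dotp y (a : Fin d → ℝ) := by
  by_contra hcon
  push_neg at hcon
  have hconst : ∀ a : ↥A, dotp y (a : Fin d → ℝ) = dotp y a₀ := by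
    intro a
    exact le_antisymm (hcon a (⟨a₀, ha₀⟩ : ↥A)) (hcon (⟨a₀, ha₀⟩ : ↥A) a)
  apply hy0
  apply dotp_self_eq_zero
  let L : (Fin d → ℝ) →ₗ[ℝ] ℝ :=
    { toFun := fun x => dotp y x
      map_add' := fun u v => dotp_add_right y u v
      map_smul' := fun c u => dotp_smul_right c y u }
  have hgen : Set.range (fun a : ↥A => (a : Fin d → ℝ) - a₀)
      ⊆ (LinearMap.ker L : Set (Fin d → ℝ)) := by
    rintro _ ⟨a, rfl⟩
    have h0 : dotp y ((a : Fin d → ℝ) - a₀) = 0 := by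
      rw [dotp_sub_right, hconst a, sub_self]
    simpa [L, LinearMap.mem_ker] using h0
  have hVker : Vsp A a₀ ≤ LinearMap.ker L := Submodule.span_le.mpr hgen
  have hLy : L y = 0 := hVker hy
  simpa [L] using hLy

/-- Core lemma: points strictly below the max on every span direction are attained by `MSet`. -/
lemma exists_M_taut (hA : A.Nonempty) {a₀ : Fin d → ℝ} (ha₀ : a₀ ∈ A) {r : Fin d → ℝ}
    (hrS : ∃ u ∈ simp' d A, tautMap d A u = r)
    (hstrict : ∀ y : Fin d → ℝ, y ∈ Vsp A a₀ → y ≠ 0 →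
      ∃ a : ↥A, dotp y r < dotp y (a : Fin d → ℝ)) :
    ∃ z ∈ MSet d A, tautMap d A z = r := by
  have : Nonempty ↥A := hA.to_subtype
  set V := Vsp A a₀ with hV
  have hVclosed : IsClosed (V : Set (Fin d → ℝ)) := Submodule.closed_of_finiteDimensional V
  set T : (Fin d → ℝ) → ℝ := fun y => ∑ a : ↥A, Real.exp (dotp y (a : Fin d → ℝ)) with hTdef
  have hTpos : ∀ y, 0 < T y := fun y =>
    Finset.sum_pos (fun a _ => Real.exp_pos _) Finset.univ_nonempty
  set G : (Fin d → ℝ) → ℝ := fun y => Real.log (T y) - dotp y r with hGdef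
  have hdotcont : ∀ x : Fin d → ℝ, Continuous (fun y : Fin d → ℝ => dotp y x) := by
    intro x
    exact continuous_finset_sum _ fun j _ => (continuous_apply j).mul continuous_const
  have hTcont : Continuous T :=
    continuous_finset_sum _ fun a _ => Real.continuous_exp.comp (hdotcont _)
  have hGcont : Continuous G := (hTcont.log fun y => (hTpos y).ne').sub (hdotcont r)
  -- coercivity constant
  have hcoerc : ∃ δ : ℝ, 0 < δ ∧ ∀ y : Fin d → ℝ, y ∈ V → y ≠ 0 →
      ∃ a : ↥A, dotp y r + δ * ‖y‖ ≤ dotp y (a : Fin d → ℝ) := by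
    by_cases hK : ((V : Set (Fin d → ℝ)) ∩ Metric.sphere 0 1).Nonempty
    · set f : (Fin d → ℝ) → ℝ :=
        fun u => ∑ a : ↥A, max (dotp u (a : Fin d → ℝ) - dotp u r) 0 with hf
      have hfcont : Continuous f :=
        continuous_finset_sum _ fun a _ => ((hdotcont _).sub (hdotcont r)).max continuous_const
      have hKcomp : IsCompact ((V : Set (Fin d → ℝ)) ∩ Metric.sphere 0 1) :=
        (isCompact_sphere 0 1).inter_left hVclosed
      obtain ⟨u₀, hu₀, hu₀min⟩ := hKcomp.exists_isMinOn hK hfcont.continuousOn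
      have hu₀pos : 0 < f u₀ := by
        have hu₀n : u₀ ≠ 0 := by
          intro h
          have h2 := hu₀.2
          rw [h] at h2
          simp at h2
        obtain ⟨a, ha⟩ := hstrict u₀ hu₀.1 hu₀n
        refine Finset.sum_pos' (fun b _ => le_max_right _ _) ⟨a, Finset.mem_univ a, ?_⟩
        exact lt_max_iff.mpr (Or.inl (by linarith))
      set N : ℝ := (Fintype.card ↥A : ℝ) with hNdef
      have hN : 0 < N := by
        rw [hNdef]
        exact_mod_cast Fintype.card_pos
      refine ⟨f u₀ / N, by positivity, ?_⟩
      intro y hyV hy0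
      set u : Fin d → ℝ := ‖y‖⁻¹ • y with hu
      have hyn : 0 < ‖y‖ := norm_pos_iff.mpr hy0
      have huV : u ∈ V := Submodule.smul_mem _ _ hyV
      have hus : u ∈ Metric.sphere (0 : Fin d → ℝ) 1 := by
        rw [mem_sphere_zero_iff_norm, hu, norm_smul, norm_inv, norm_norm,
          inv_mul_cancel₀ hyn.ne']
      have hmin : f u₀ ≤ f u := hu₀min ⟨huV, hus⟩
      have hex : ∃ a : ↥A, f u₀ / N ≤ max (dotp u (a : Fin d → ℝ) - dotp u r) 0 := by
        by_contra hc
        push_neg at hc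
        have hlt : f u < N * (f u₀ / N) := by
          calc f u < ∑ _a : ↥A, f u₀ / N :=
                Finset.sum_lt_sum_of_nonempty Finset.univ_nonempty fun a _ => hc a
            _ = N * (f u₀ / N) := by
                rw [Finset.sum_const, Finset.card_univ, nsmul_eq_mul, hNdef]
        rw [mul_div_cancel₀ _ hN.ne'] at hlt
        linarith
      obtain ⟨a, ha⟩ := hex
      have hposq : 0 < f u₀ / N := by positivity
      have ha' : f u₀ / N ≤ dotp u (a : Fin d → ℝ) - dotp u r := by
        rcases le_or_gt (dotp u (a : Fin d → ℝ) - dotp u r) 0 with h | h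
        · rw [max_eq_right h] at ha; linarith
        · rwa [max_eq_left h.le] at ha
      refine ⟨a, ?_⟩
      have hscale : ∀ x : Fin d → ℝ, dotp u x = ‖y‖⁻¹ * dotp y x := fun x => by
        rw [hu, dotp_smul_left]
      rw [hscale, hscale] at ha'
      have hmul := mul_le_mul_of_nonneg_left ha' hyn.le
      rw [mul_sub, ← mul_assoc, ← mul_assoc, mul_inv_cancel₀ hyn.ne', one_mul, one_mul] at hmul
      nlinarith
    · refine ⟨1, one_pos, ?_⟩
      intro y hyV hy0
      exfalso
      apply hK
      have hyn : 0 < ‖y‖ := norm_pos_iff.mpr hy0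
      refine ⟨‖y‖⁻¹ • y, Submodule.smul_mem _ _ hyV, ?_⟩
      rw [Metric.mem_sphere, dist_zero_right, norm_smul, norm_inv, norm_norm,
        inv_mul_cancel₀ hyn.ne']
  obtain ⟨δ, hδ0, hδ⟩ := hcoerc
  -- lower bound for G
  have hlb : ∀ y : Fin d → ℝ, ∀ a : ↥A, dotp y (a : Fin d → ℝ) - dotp y r ≤ G y := by
    intro y a
    have h1 : Real.exp (dotp y (a : Fin d → ℝ)) ≤ T y := by
      show Real.exp (dotp y (a : Fin d → ℝ)) ≤ ∑ b : ↥A, Real.exp (dotp y (b : Fin d → ℝ))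
      exact Finset.single_le_sum (f := fun b : ↥A => Real.exp (dotp y (b : Fin d → ℝ)))
        (fun b _ => (Real.exp_pos (dotp y (b : Fin d → ℝ))).le) (Finset.mem_univ a)
    have h2 : dotp y (a : Fin d → ℝ) ≤ Real.log (T y) := by
      rw [← Real.log_exp (dotp y (a : Fin d → ℝ))]
      exact (Real.log_le_log_iff (Real.exp_pos _) (hTpos y)).mpr h1
    simp only [hGdef]
    linarith
  have hGge : ∀ y : Fin d → ℝ, y ∈ V → y ≠ 0 → δ * ‖y‖ ≤ G y := by
    intro y hyV hy0
    obtain ⟨a, ha⟩ := hδ y hyV hy0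
    have := hlb y a
    linarith
  -- existence of a global minimizer over V
  set R : ℝ := |G 0| / δ + 1 with hR
  have hR0 : 0 < R := by positivity
  set B := (V : Set (Fin d → ℝ)) ∩ Metric.closedBall 0 R with hB
  have hBcomp : IsCompact B := (isCompact_closedBall 0 R).inter_left hVclosed
  have hBne : B.Nonempty := ⟨0, Submodule.zero_mem V, Metric.mem_closedBall_self hR0.le⟩
  obtain ⟨yh, hyhB, hyhmin⟩ := hBcomp.exists_isMinOn hBne hGcont.continuousOn
  have hglobal : ∀ y ∈ V, G yh ≤ G y := by
    intro y hyV
    rcases le_or_gt ‖y‖ R with h | h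
    · exact hyhmin ⟨hyV, Metric.mem_closedBall.mpr (by rwa [dist_zero_right])⟩
    · have hy0 : y ≠ 0 := by
        intro h0
        rw [h0] at h
        simp at h
        linarith
      have h1 : δ * ‖y‖ ≤ G y := hGge y hyV hy0
      have h2 : G yh ≤ G 0 := hyhmin ⟨Submodule.zero_mem V, Metric.mem_closedBall_self hR0.le⟩
      have hdR : δ * R = |G 0| + δ := by
        rw [hR]; field_simp
      have h3 : δ * R < δ * ‖y‖ := mul_lt_mul_of_pos_left h hδ0
      refine le_of_lt ?_
      calc G yh ≤ G 0 := h2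
        _ ≤ |G 0| := le_abs_self _
        _ < δ * ‖y‖ := by linarith
        _ ≤ G y := h1
  -- first order condition
  have hfo : ∀ v ∈ V,
      (∑ a : ↥A, Real.exp (dotp yh (a : Fin d → ℝ)) * dotp v (a : Fin d → ℝ)) / T yh
        - dotp v r = 0 := by
    intro v hvV
    set ψ : ℝ → ℝ := fun s => G (yh + s • v) with hψ
    have hψmin : IsLocalMin ψ 0 := by
      have hall : ∀ s : ℝ, ψ 0 ≤ ψ s := by
        intro s
        have hmem : yh + s • v ∈ V := Submodule.add_mem _ hyhB.1 (Submodule.smul_mem _ _ hvV)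
        have h1 : G yh ≤ G (yh + s • v) := hglobal _ hmem
        have h0 : ψ 0 = G yh := by rw [hψ]; simp
        rw [h0]
        exact h1
      exact Filter.Eventually.of_forall hall
    -- compute derivative of ψ at 0
    have hψeq : ψ = fun s : ℝ =>
        Real.log (∑ a : ↥A, Real.exp (dotp yh (a : Fin d → ℝ) + s * dotp v (a : Fin d → ℝ)))
          - (dotp yh r + s * dotp v r) := by
      funext s
      rw [hψ]
      simp only [hGdef, hTdef]
      congr 1
      · congr 1
        apply Finset.sum_congr rfl
        intro a _
        rw [dotp_add_left, dotp_smul_left]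
      · rw [dotp_add_left, dotp_smul_left]
    have hTd : HasDerivAt
        (fun s : ℝ => ∑ a : ↥A, Real.exp (dotp yh (a : Fin d → ℝ) + s * dotp v (a : Fin d → ℝ)))
        (∑ a : ↥A, Real.exp (dotp yh (a : Fin d → ℝ)) * dotp v (a : Fin d → ℝ)) 0 := by
      apply HasDerivAt.fun_sum
      intro a _
      have h1 : HasDerivAt (fun s : ℝ => dotp yh (a : Fin d → ℝ) + s * dotp v (a : Fin d → ℝ))
          (dotp v (a : Fin d → ℝ)) 0 := (hasDerivAt_mul_const _).const_add _
      have h2 := h1.exp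
      simpa using h2
    have hT0 : (∑ a : ↥A, Real.exp (dotp yh (a : Fin d → ℝ) + 0 * dotp v (a : Fin d → ℝ)))
        = T yh := by
      rw [hTdef]
      congr 1
      funext a
      rw [zero_mul, add_zero]
    have hlog : HasDerivAt
        (fun s : ℝ => Real.log (∑ a : ↥A,
          Real.exp (dotp yh (a : Fin d → ℝ) + s * dotp v (a : Fin d → ℝ))))
        ((∑ a : ↥A, Real.exp (dotp yh (a : Fin d → ℝ)) * dotp v (a : Fin d → ℝ)) / T yh) 0 := by
      have := hTd.log (by rw [hT0]; exact (hTpos yh).ne')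
      rwa [hT0] at this
    have hlin : HasDerivAt (fun s : ℝ => dotp yh r + s * dotp v r) (dotp v r) 0 :=
      (hasDerivAt_mul_const _).const_add _
    have hd : HasDerivAt ψ
        ((∑ a : ↥A, Real.exp (dotp yh (a : Fin d → ℝ)) * dotp v (a : Fin d → ℝ)) / T yh
          - dotp v r) 0 := by
      rw [hψeq]
      exact hlog.sub hlin
    exact hψmin.hasDerivAt_eq_zero hd
  -- construct the point of MSet
  set x : Fin d → ℝ := fun j => Real.exp (yh j) with hx
  have hxpos : ∀ j, 0 < x j := fun j => Real.exp_pos _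
  set z := simplexNormalize d A (toricMonomial d A x) with hzdef
  have hzM : z ∈ MSet d A := ⟨x, hxpos, hzdef⟩
  refine ⟨z, hzM, ?_⟩
  have hmono : ∀ a : ↥A, toricMonomial d A x a = Real.exp (dotp yh (a : Fin d → ℝ)) :=
    fun a => toricMonomial_exp yh a
  have hzval : ∀ a, z a = Real.exp (dotp yh (a : Fin d → ℝ)) / T yh := by
    intro a
    rw [hzdef]
    show toricMonomial d A x a / (∑ b : ↥A, toricMonomial d A x b) = _
    rw [hmono a, hTdef]
    congr 2
    funext b
    rw [hmono b]
  have hdot : ∀ v ∈ V, dotp v (tautMap d A z - r) = 0 := by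
    intro v hvV
    rw [dotp_sub_right]
    have h1 := hfo v hvV
    have h2 : dotp v (tautMap d A z) = ∑ a : ↥A, z a * dotp v (a : Fin d → ℝ) :=
      (sum_mul_dotp z v).symm
    have h3 : ∑ a : ↥A, z a * dotp v (a : Fin d → ℝ)
        = (∑ a : ↥A, Real.exp (dotp yh (a : Fin d → ℝ)) * dotp v (a : Fin d → ℝ)) / T yh := by
      rw [Finset.sum_div]
      apply Finset.sum_congr rfl
      intro a _
      rw [hzval a]
      ring
    rw [h2, h3]
    linarith
  obtain ⟨u, huS, hur⟩ := hrS
  have hzS : z ∈ simp' d A := MSet_subset_simp hA hzM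
  have hmem : tautMap d A z - r ∈ V := by
    rw [← hur]
    exact taut_sub_mem hzS.2 huS.2
  have h0 := dotp_self_eq_zero (hdot _ hmem)
  exact sub_eq_zero.mp h0

/-- Surjectivity of the moment map onto the convex hull. -/
lemma taut_surj (hA : A.Nonempty) {p : Fin d → ℝ}
    (hp : p ∈ convexHull ℝ (A : Set (Fin d → ℝ))) :
    ∃ z ∈ toricVariety d A, tautMap d A z = p := by
  have : Nonempty ↥A := hA.to_subtype
  obtain ⟨a₀, ha₀⟩ := hA
  have hA : A.Nonempty := ⟨a₀, ha₀⟩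
  set N : ℝ := (Fintype.card ↥A : ℝ) with hN
  have hN0 : 0 < N := by rw [hN]; exact_mod_cast Fintype.card_pos
  set zc : ↥A → ℝ := fun _ => N⁻¹ with hzc
  have hzcS : zc ∈ simp' d A := by
    constructor
    · intro a; rw [hzc]; positivity
    · rw [hzc]
      rw [Finset.sum_const, Finset.card_univ, nsmul_eq_mul]
      rw [hN] at *
      field_simp
  set c := tautMap d A zc with hc
  obtain ⟨up, hupS, hupt⟩ := exists_simplex_taut hp
  set t : ℕ → ℝ := fun n => 1 / (n + 1) with ht
  have ht0 : ∀ n : ℕ, 0 < t n := by intro n; rw [ht]; positivity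
  have ht1 : ∀ n : ℕ, t n ≤ 1 := by
    intro n; rw [ht]
    rw [div_le_one (by positivity)]
    simp
  set r : ℕ → (Fin d → ℝ) := fun n => (1 - t n) • p + t n • c with hr
  have key : ∀ n : ℕ, ∃ z ∈ MSet d A, tautMap d A z = r n := by
    intro n
    apply exists_M_taut hA ha₀
    · -- r n is in the taut image of the simplex
      set un : ↥A → ℝ := fun a => (1 - t n) * up a + t n * zc a with hun
      have hunS : un ∈ simp' d A := by
        constructor
        · intro a
          have h1 := hupS.1 a
          have h2 := hzcS.1 a
          have h3 := ht0 n
          have h4 := ht1 n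
          rw [hun]
          have : 0 ≤ 1 - t n := by linarith
          positivity
        · rw [hun]
          simp only
          rw [Finset.sum_add_distrib, ← Finset.mul_sum, ← Finset.mul_sum, hupS.2, hzcS.2]
          ring
      refine ⟨un, hunS, ?_⟩
      have hunv : un = (1 - t n) • up + t n • zc := by
        funext a; simp [hun, smul_eq_mul]
      have hlin : tautLin d A un = (1 - t n) • tautLin d A up + t n • tautLin d A zc := by
        rw [hunv]; simp [map_add, map_smul]
      rw [tautLin_apply, tautLin_apply, tautLin_apply] at hlin
      rw [hlin, hupt, hr]
    · -- strict max property
      intro y hyV hy0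
      obtain ⟨amax, _, hamax⟩ := Finset.exists_max_image Finset.univ
        (fun a : ↥A => dotp y (a : Fin d → ℝ)) Finset.univ_nonempty
      obtain ⟨a1, b1, hab⟩ := exists_dotp_ne ha₀ hyV hy0
      refine ⟨amax, ?_⟩
      have hM : ∀ a : ↥A, dotp y (a : Fin d → ℝ) ≤ dotp y (amax : Fin d → ℝ) :=
        fun a => hamax a (Finset.mem_univ a)
      have hp' : dotp y p ≤ dotp y (amax : Fin d → ℝ) := by
        rw [← hupt, ← sum_mul_dotp up y]
        calc ∑ a : ↥A, up a * dotp y (a : Fin d → ℝ)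
            ≤ ∑ a : ↥A, up a * dotp y (amax : Fin d → ℝ) :=
              Finset.sum_le_sum fun a _ => mul_le_mul_of_nonneg_left (hM a) (hupS.1 a)
          _ = dotp y (amax : Fin d → ℝ) := by rw [← Finset.sum_mul, hupS.2, one_mul]
      have hc' : dotp y c < dotp y (amax : Fin d → ℝ) := by
        rw [hc, ← sum_mul_dotp zc y]
        have hstrict1 : zc b1 * dotp y (b1 : Fin d → ℝ) < zc b1 * dotp y (amax : Fin d → ℝ) := by
          apply mul_lt_mul_of_pos_left _ (by rw [hzc]; positivity)
          exact lt_of_lt_of_le hab (hM a1)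
        calc ∑ a : ↥A, zc a * dotp y (a : Fin d → ℝ)
            < ∑ a : ↥A, zc a * dotp y (amax : Fin d → ℝ) := by
              apply Finset.sum_lt_sum
              · intro a _
                exact mul_le_mul_of_nonneg_left (hM a) (hzcS.1 a)
              · exact ⟨b1, Finset.mem_univ b1, hstrict1⟩
          _ = dotp y (amax : Fin d → ℝ) := by rw [← Finset.sum_mul, hzcS.2, one_mul]
      have hrn : dotp y (r n) = (1 - t n) * dotp y p + t n * dotp y c := by
        rw [hr]
        simp only
        rw [dotp_add_right, dotp_smul_right, dotp_smul_right]
      rw [hrn]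
      have h3 := ht0 n
      have h4 := ht1 n
      nlinarith
  choose zseq hzM hzt using key
  have hzX : ∀ n, zseq n ∈ toricVariety d A := fun n => subset_closure (hzM n)
  obtain ⟨z, hzX', φ, hφ, hconv⟩ := (isCompact_toricVariety hA).tendsto_subseq hzX
  refine ⟨z, hzX', ?_⟩
  have h1 : Tendsto (fun k => tautMap d A (zseq (φ k))) atTop (𝓝 (tautMap d A z)) :=
    (continuous_taut.tendsto z).comp hconv
  have hrlim : Tendsto r atTop (𝓝 p) := by
    have hre : r = fun n => p + t n • (c - p) := by
      funext n
      rw [hr]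
      module
    rw [hre]
    have h0 : Tendsto (fun n : ℕ => t n • (c - p)) atTop (𝓝 ((0 : ℝ) • (c - p))) := by
      apply Filter.Tendsto.smul_const
      rw [ht]
      exact tendsto_one_div_add_atTop_nhds_zero_nat
    rw [zero_smul] at h0
    simpa using tendsto_const_nhds.add h0
  have h2 : Tendsto (fun k => tautMap d A (zseq (φ k))) atTop (𝓝 p) := by
    have : (fun k => tautMap d A (zseq (φ k))) = fun k => r (φ k) := by
      funext k; rw [hzt]
    rw [this]
    exact hrlim.comp hφ.tendsto_atTop
  exact tendsto_nhds_unique h1 h2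

end Birch

/-- Birch's Theorem. -/
theorem birch_theorem (d : ℕ) (A : Finset (Fin d → ℝ)) (hA : A.Nonempty) :
    ∃ h : ↥(toricVariety d A) ≃ₜ ↥(convexHull ℝ (A : Set (Fin d → ℝ))),
      ∀ z : ↥(toricVariety d A), (h z : Fin d → ℝ) = tautMap d A (z : ↥A → ℝ) := by
  have hXc : IsCompact (toricVariety d A) := Birch.isCompact_toricVariety hA
  have hmapsto : ∀ z : ↥(toricVariety d A),
      tautMap d A (z : ↥A → ℝ) ∈ convexHull ℝ (A : Set (Fin d → ℝ)) :=
    fun z => Birch.taut_mem_hull (Birch.toricVariety_subset_simp hA z.2)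
  set f : ↥(toricVariety d A) → ↥(convexHull ℝ (A : Set (Fin d → ℝ))) :=
    fun z => ⟨tautMap d A (z : ↥A → ℝ), hmapsto z⟩ with hf
  have hfc : Continuous f :=
    Continuous.subtype_mk (Birch.continuous_taut.comp continuous_subtype_val) _
  have hfbij : Function.Bijective f := by
    constructor
    · intro z z' h
      apply Subtype.ext
      exact Birch.taut_injOn hA z.2 z'.2 (congrArg Subtype.val h)
    · rintro ⟨q, hq⟩
      obtain ⟨z, hzX, hzt⟩ := Birch.taut_surj hA hq
      exact ⟨⟨z, hzX⟩, Subtype.ext hzt⟩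
  haveI : CompactSpace ↥(toricVariety d A) := isCompact_iff_compactSpace.mp hXc
  refine ⟨Continuous.homeoOfEquivCompactToT2 (f := Equiv.ofBijective f hfbij) hfc, ?_⟩
  intro z
  rfl
end

section
/- Let 𝒜 ⊂ ℝ^d be finite and X_𝒜 ⊂ ▵^𝒜 the real irrational toric variety, the closure of {[x^a : a ∈ 𝒜] : x ∈ ℝ^d_{>0}}. For w, w' ∈ ℝ^𝒜_{>0}, the translates satisfy w.X_𝒜 = w'.X_𝒜 if and only if Log(w) − Log(w') ∈ Aff(𝒜), where Log is the coordinatewise logarithm and Aff(𝒜) ⊂ ℝ^𝒜 is the subspace of restrictions to 𝒜 of affine functions on ℝ^d. -/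
open Finset

/-- The torus action on the simplex: coordinatewise multiplication followed by
normalization. -/
noncomputable def torusAct (d : ℕ) (A : Finset (Fin d → ℝ)) (w z : ↥A → ℝ) :
    ↥A → ℝ := simplexNormalize d A (fun a => w a * z a)

/-- `Aff(𝒜)`: restrictions to `𝒜` of affine functions on `ℝ^d`. -/
def AffSet (d : ℕ) (A : Finset (Fin d → ℝ)) : Set (↥A → ℝ) :=
  {μ | ∃ (t₀ : ℝ) (t : Fin d → ℝ), ∀ a : ↥A, μ a = t₀ + ∑ j, t j * (a : Fin d → ℝ) j}

namespace RITVaux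

def orbit (d : ℕ) (A : Finset (Fin d → ℝ)) : Set (↥A → ℝ) :=
  {z | ∃ x : Fin d → ℝ, (∀ j, 0 < x j) ∧
    z = simplexNormalize d A (toricMonomial d A x)}

variable {d : ℕ} {A : Finset (Fin d → ℝ)}

lemma variety_eq : toricVariety d A = closure (orbit d A) := rfl

lemma monomial_pos {x : Fin d → ℝ} (hx : ∀ j, 0 < x j) (a : ↥A) :
    0 < toricMonomial d A x a :=
  Finset.prod_pos fun j _ => Real.rpow_pos_of_pos (hx j) _

lemma sum_monomial_pos (hA : A.Nonempty) {x : Fin d → ℝ} (hx : ∀ j, 0 < x j) :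
    0 < ∑ b : ↥A, toricMonomial d A x b := by
  have : Nonempty ↥A := ⟨⟨hA.choose, hA.choose_spec⟩⟩
  exact Finset.sum_pos (fun b _ => monomial_pos hx b) Finset.univ_nonempty

lemma normalize_scale {c : ℝ} (hc : c ≠ 0) (v : ↥A → ℝ) :
    simplexNormalize d A (fun a => c * v a) = simplexNormalize d A v := by
  funext a
  simp only [simplexNormalize]
  rw [← Finset.mul_sum, mul_div_mul_left _ _ hc]

lemma act_pt (hA : A.Nonempty) (w : ↥A → ℝ) {x : Fin d → ℝ} (hx : ∀ j, 0 < x j) :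
    torusAct d A w (simplexNormalize d A (toricMonomial d A x)) =
      simplexNormalize d A (fun a => w a * toricMonomial d A x a) := by
  have hM := sum_monomial_pos hA hx
  have h1 : (fun a => w a * simplexNormalize d A (toricMonomial d A x) a)
      = fun a => (∑ b : ↥A, toricMonomial d A x b)⁻¹ * (w a * toricMonomial d A x a) := by
    funext a
    simp only [simplexNormalize]
    field_simp
  show simplexNormalize d A (fun a => w a * simplexNormalize d A (toricMonomial d A x) a) = _
  rw [h1, normalize_scale (inv_ne_zero hM.ne')]

lemma orbit_subset (hA : A.Nonempty) : orbit d A ⊆ stdSimplex ℝ ↥A := by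
  rintro z ⟨x, hx, rfl⟩
  have hM := sum_monomial_pos hA hx
  constructor
  · intro a; exact div_nonneg (monomial_pos hx a).le hM.le
  · simp only [simplexNormalize]
    rw [← Finset.sum_div, div_self hM.ne']

lemma variety_subset (hA : A.Nonempty) : toricVariety d A ⊆ stdSimplex ℝ ↥A :=
  closure_minimal (orbit_subset hA) (isClosed_stdSimplex _ _)

lemma exists_pos (hA : A.Nonempty) {z : ↥A → ℝ} (hz : z ∈ stdSimplex ℝ ↥A) :
    ∃ a, 0 < z a := by
  by_contra h
  push_neg at h
  have h2 : ∑ a : ↥A, z a ≤ 0 := Finset.sum_nonpos fun a _ => h a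
  rw [hz.2] at h2
  linarith

lemma sum_mul_pos' (hA : A.Nonempty) {w z : ↥A → ℝ} (hw : ∀ a, 0 < w a)
    (hz : z ∈ stdSimplex ℝ ↥A) : 0 < ∑ b : ↥A, w b * z b := by
  obtain ⟨a, ha⟩ := exists_pos hA hz
  exact Finset.sum_pos' (fun b _ => mul_nonneg (hw b).le (hz.1 b))
    ⟨a, Finset.mem_univ a, mul_pos (hw a) ha⟩

lemma contOn (hA : A.Nonempty) {w : ↥A → ℝ} (hw : ∀ a, 0 < w a) :
    ContinuousOn (torusAct d A w) (stdSimplex ℝ ↥A) := by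
  show ContinuousOn (fun (z : ↥A → ℝ) (a : ↥A) => (w a * z a) / ∑ b : ↥A, w b * z b) _
  rw [continuousOn_pi]
  intro a
  exact (continuous_const.mul (continuous_apply a)).continuousOn.div
    (continuous_finset_sum _ fun b _ => continuous_const.mul (continuous_apply b)).continuousOn
    (fun z hz => (sum_mul_pos' hA hw hz).ne')

lemma variety_compact (hA : A.Nonempty) : IsCompact (toricVariety d A) :=
  (isCompact_stdSimplex _ _).of_isClosed_subset isClosed_closure (variety_subset hA)

lemma image_subset_of_aff (hA : A.Nonempty) {w w' : ↥A → ℝ} (hw : ∀ a, 0 < w a)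
    (hw' : ∀ a, 0 < w' a)
    (hμ : (fun a => Real.log (w a) - Real.log (w' a)) ∈ AffSet d A) :
    torusAct d A w '' toricVariety d A ⊆ torusAct d A w' '' toricVariety d A := by
  obtain ⟨t₀, t, ht⟩ := hμ
  set y : Fin d → ℝ := fun j => Real.exp (t j) with hy
  have hypos : ∀ j, 0 < y j := fun j => Real.exp_pos _
  have hw_eq : ∀ a : ↥A, w a = Real.exp t₀ * (w' a * toricMonomial d A y a) := by
    intro a
    have h2 : Real.log (w a) - Real.log (w' a) = t₀ + ∑ j, t j * (a : Fin d → ℝ) j := ht a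
    have h1 : w a = Real.exp (Real.log (w' a) + (t₀ + ∑ j, t j * (a : Fin d → ℝ) j)) := by
      rw [← Real.exp_log (hw a)]
      congr 1
      linarith
    rw [h1, Real.exp_add, Real.exp_add, Real.exp_log (hw' a), Real.exp_sum]
    have h3 : toricMonomial d A y a = ∏ j, Real.exp (t j * (a : Fin d → ℝ) j) := by
      simp only [toricMonomial]
      refine Finset.prod_congr rfl fun j _ => ?_
      rw [hy, Real.rpow_def_of_pos (Real.exp_pos _), Real.log_exp]
    rw [h3]; ring
  have key : ∀ x : Fin d → ℝ, (∀ j, 0 < x j) →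
      torusAct d A w (simplexNormalize d A (toricMonomial d A x)) ∈
        torusAct d A w' '' orbit d A := by
    intro x hx
    have hyx : ∀ j, 0 < y j * x j := fun j => mul_pos (hypos j) (hx j)
    refine ⟨simplexNormalize d A (toricMonomial d A (fun j => y j * x j)),
      ⟨_, hyx, rfl⟩, ?_⟩
    rw [act_pt hA _ hyx, act_pt hA _ hx]
    have hmm : (fun a => w a * toricMonomial d A x a)
        = fun a => Real.exp t₀ * (w' a * toricMonomial d A (fun j => y j * x j) a) := by
      funext a
      have hm : toricMonomial d A (fun j => y j * x j) a
          = toricMonomial d A y a * toricMonomial d A x a := by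
        simp only [toricMonomial]
        rw [← Finset.prod_mul_distrib]
        exact Finset.prod_congr rfl fun j _ =>
          Real.mul_rpow (hypos j).le (hx j).le
      rw [hm, hw_eq a]; ring
    rw [hmm, normalize_scale (Real.exp_ne_zero t₀)]
  rintro _ ⟨u, hu, rfl⟩
  have h1 : torusAct d A w u ∈ closure (torusAct d A w '' orbit d A) :=
    ContinuousOn.image_closure ((contOn hA hw).mono (variety_subset hA))
      ⟨u, hu, rfl⟩
  have h2 : torusAct d A w '' orbit d A ⊆ torusAct d A w' '' toricVariety d A := by
    rintro _ ⟨v, ⟨x, hx, rfl⟩, rfl⟩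
    obtain ⟨v', hv', hev⟩ := key x hx
    exact ⟨v', subset_closure hv', hev⟩
  have hcl : IsClosed (torusAct d A w' '' toricVariety d A) :=
    ((variety_compact hA).image_of_continuousOn
      ((contOn hA hw').mono (variety_subset hA))).isClosed
  exact closure_minimal h2 hcl h1

lemma log_rel (hA : A.Nonempty) {z : ↥A → ℝ} (hz : z ∈ toricVariety d A)
    (hzpos : ∀ a, 0 < z a) (l : ↥A → ℝ) (h0 : ∑ a : ↥A, l a = 0)
    (h1 : ∀ j, ∑ a : ↥A, l a * (a : Fin d → ℝ) j = 0) :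
    ∑ a : ↥A, l a * Real.log (z a) = 0 := by
  set F : (↥A → ℝ) → ℝ := fun u => ∑ a : ↥A, l a * Real.log (u a) with hF
  have hFc : ContinuousAt F z := by
    refine tendsto_finset_sum _ fun a _ => ?_
    have h : ContinuousAt (fun r : ℝ => l a * Real.log r) (z a) :=
      continuousAt_const.mul (Real.continuousAt_log (hzpos a).ne')
    exact ContinuousAt.comp (f := fun u : ↥A → ℝ => u a) (x := z) h
      (continuous_apply a).continuousAt
  have hF0 : ∀ u ∈ orbit d A, F u = 0 := by
    rintro u ⟨x, hx, rfl⟩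
    have hM := sum_monomial_pos hA hx
    have hlog : ∀ a : ↥A, Real.log (simplexNormalize d A (toricMonomial d A x) a)
        = (∑ j, (a : Fin d → ℝ) j * Real.log (x j))
          - Real.log (∑ b : ↥A, toricMonomial d A x b) := by
      intro a
      show Real.log (toricMonomial d A x a / _) = _
      rw [Real.log_div (monomial_pos hx a).ne' hM.ne']
      congr 1
      rw [toricMonomial, Real.log_prod (fun j _ => (Real.rpow_pos_of_pos (hx j) _).ne')]
      exact Finset.sum_congr rfl fun j _ => by rw [Real.log_rpow (hx j)]
    have : F (simplexNormalize d A (toricMonomial d A x))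
        = ∑ a : ↥A, l a * ((∑ j, (a : Fin d → ℝ) j * Real.log (x j))
            - Real.log (∑ b : ↥A, toricMonomial d A x b)) :=
      Finset.sum_congr rfl fun a _ => by rw [hlog a]
    rw [this]
    have hsplit : ∑ a : ↥A, l a * ((∑ j, (a : Fin d → ℝ) j * Real.log (x j))
            - Real.log (∑ b : ↥A, toricMonomial d A x b))
        = (∑ a : ↥A, ∑ j, l a * ((a : Fin d → ℝ) j * Real.log (x j)))
          - (∑ a : ↥A, l a) * Real.log (∑ b : ↥A, toricMonomial d A x b) := by
      rw [Finset.sum_mul, ← Finset.sum_sub_distrib]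
      refine Finset.sum_congr rfl fun a _ => ?_
      rw [mul_sub, Finset.mul_sum]
    rw [hsplit, h0, Finset.sum_comm]
    have hz0 : ∀ j ∈ Finset.univ, ∑ a : ↥A, l a * ((a : Fin d → ℝ) j * Real.log (x j)) = 0 := by
      intro j _
      have : ∑ a : ↥A, l a * ((a : Fin d → ℝ) j * Real.log (x j))
          = (∑ a : ↥A, l a * (a : Fin d → ℝ) j) * Real.log (x j) := by
        rw [Finset.sum_mul]
        exact Finset.sum_congr rfl fun a _ => by ring
      rw [this, h1 j, zero_mul]
    rw [Finset.sum_congr rfl hz0]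
    simp
  have hne : (nhdsWithin z (orbit d A)).NeBot := mem_closure_iff_nhdsWithin_neBot.mp hz
  have t1 : Filter.Tendsto F (nhdsWithin z (orbit d A)) (nhds (F z)) :=
    hFc.continuousWithinAt.tendsto
  have t2 : Filter.Tendsto F (nhdsWithin z (orbit d A)) (nhds 0) := by
    refine Filter.Tendsto.congr' ?_ tendsto_const_nhds
    filter_upwards [self_mem_nhdsWithin] with u hu
    exact (hF0 u hu).symm
  exact tendsto_nhds_unique t1 t2

lemma mem_aff_of_orth (μ : ↥A → ℝ)
    (h : ∀ l : ↥A → ℝ, (∑ a : ↥A, l a = 0) →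
      (∀ j, ∑ a : ↥A, l a * (a : Fin d → ℝ) j = 0) → ∑ a : ↥A, l a * μ a = 0) :
    μ ∈ AffSet d A := by
  classical
  let E := EuclideanSpace ℝ ↥A
  let T : (ℝ × (Fin d → ℝ)) →ₗ[ℝ] E :=
    { toFun := fun p => WithLp.toLp 2 (fun a => p.1 + ∑ j, p.2 j * (a : Fin d → ℝ) j : ↥A → ℝ)
      map_add' := by
        intro p q
        ext a
        show (p.1 + q.1) + ∑ j, (p.2 j + q.2 j) * (a : Fin d → ℝ) j = _
        rw [PiLp.add_apply]
        simp only [add_mul, Finset.sum_add_distrib]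
        ring
      map_smul' := by
        intro c p
        ext a
        show (c * p.1) + ∑ j, (c * p.2 j) * (a : Fin d → ℝ) j
          = c * (p.1 + ∑ j, p.2 j * (a : Fin d → ℝ) j)
        simp only [mul_assoc, ← Finset.mul_sum, mul_add] }
  set W : Submodule ℝ E := LinearMap.range T with hW
  have hinner : ∀ (v : ℝ × (Fin d → ℝ)) (l : E),
      inner (𝕜 := ℝ) (T v) l
        = ∑ a : ↥A, (v.1 + ∑ j, v.2 j * (a : Fin d → ℝ) j) * l a := by
    intro v l
    rw [PiLp.inner_apply]
    simp [RCLike.inner_apply, T, mul_comm]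
  have hμW : (WithLp.toLp 2 μ : E) ∈ Wᗮᗮ := by
    rw [Submodule.mem_orthogonal]
    intro l hl
    have hl0 : ∑ a : ↥A, l a = 0 := by
      have h2 := (Submodule.mem_orthogonal W l).mp hl (T (1, 0)) ⟨(1, 0), rfl⟩
      rw [hinner] at h2
      simpa using h2
    have hl1 : ∀ j, ∑ a : ↥A, l a * (a : Fin d → ℝ) j = 0 := by
      intro j
      have h2 := (Submodule.mem_orthogonal W l).mp hl
        (T (0, (Pi.single j 1 : Fin d → ℝ))) ⟨(0, Pi.single j 1), rfl⟩
      rw [hinner] at h2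
      have h3 : ∑ a : ↥A, ((0:ℝ) + ∑ j', (Pi.single j 1 : Fin d → ℝ) j' * (a : Fin d → ℝ) j')
          * l a = ∑ a : ↥A, l a * (a : Fin d → ℝ) j := by
        refine Finset.sum_congr rfl fun a _ => ?_
        rw [zero_add, Finset.sum_eq_single j]
        · simp [mul_comm]
        · intro b _ hb; simp [Pi.single_eq_of_ne hb]
        · intro hj; exact absurd (Finset.mem_univ j) hj
      rw [h3] at h2
      exact h2
    have h4 := h l hl0 hl1
    have h5 : inner (𝕜 := ℝ) l (WithLp.toLp 2 μ : E) = ∑ a : ↥A, l a * μ a := by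
      rw [PiLp.inner_apply]
      simp [RCLike.inner_apply, mul_comm]
    rw [h5]
    exact h4
  rw [Submodule.orthogonal_orthogonal] at hμW
  obtain ⟨⟨t₀, t⟩, hT⟩ := hμW
  exact ⟨t₀, t, fun a => (congrFun (congrArg WithLp.ofLp hT) a).symm⟩

end RITVaux

/-- Two torus translates of `X_𝒜` coincide iff the difference of the coordinatewise
logarithms of the weights is the restriction of an affine function. -/
theorem translate_eq_iff_log_diff_affine (d : ℕ) (A : Finset (Fin d → ℝ))
    (hA : A.Nonempty) (w w' : ↥A → ℝ) (hw : ∀ a, 0 < w a) (hw' : ∀ a, 0 < w' a) :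
    torusAct d A w '' toricVariety d A = torusAct d A w' '' toricVariety d A ↔
      (fun a => Real.log (w a) - Real.log (w' a)) ∈ AffSet d A := by
  constructor
  · intro heq
    have hp0 : simplexNormalize d A (toricMonomial d A (fun _ => 1)) ∈ toricVariety d A :=
      subset_closure ⟨fun _ => 1, fun _ => one_pos, rfl⟩
    have hact : torusAct d A w (simplexNormalize d A (toricMonomial d A (fun _ => 1)))
        = simplexNormalize d A w := by
      rw [RITVaux.act_pt hA w (fun _ => one_pos)]
      congr 1
      funext a
      simp [toricMonomial, Real.one_rpow]
    have hmem : simplexNormalize d A w ∈ torusAct d A w' '' toricVariety d A := by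
      rw [← heq]
      exact ⟨_, hp0, hact⟩
    obtain ⟨z, hzX, hz⟩ := hmem
    have hzs : z ∈ stdSimplex ℝ ↥A := RITVaux.variety_subset hA hzX
    have hW : 0 < ∑ b : ↥A, w b := by
      have : Nonempty ↥A := ⟨⟨hA.choose, hA.choose_spec⟩⟩
      exact Finset.sum_pos (fun b _ => hw b) Finset.univ_nonempty
    have hS : 0 < ∑ b : ↥A, w' b * z b := RITVaux.sum_mul_pos' hA hw' hzs
    have hz_eq : ∀ a, z a
        = w a * (∑ b : ↥A, w' b * z b) / (w' a * (∑ b : ↥A, w b)) := by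
      intro a
      have h' : (w' a * z a) / (∑ b : ↥A, w' b * z b) = w a / (∑ b : ↥A, w b) :=
        congrFun hz a
      rw [div_eq_div_iff hS.ne' hW.ne'] at h'
      rw [eq_div_iff (mul_pos (hw' a) hW).ne']
      linear_combination h'
    have hzpos : ∀ a, 0 < z a := fun a => by
      rw [hz_eq a]
      exact div_pos (mul_pos (hw a) hS) (mul_pos (hw' a) hW)
    have hlog : ∀ a, Real.log (z a)
        = (Real.log (w a) - Real.log (w' a))
          + (Real.log (∑ b : ↥A, w' b * z b) - Real.log (∑ b : ↥A, w b)) := by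
      intro a
      rw [hz_eq a, Real.log_div (mul_pos (hw a) hS).ne' (mul_pos (hw' a) hW).ne',
        Real.log_mul (hw a).ne' hS.ne', Real.log_mul (hw' a).ne' hW.ne']
      ring
    apply RITVaux.mem_aff_of_orth
    intro l h0 h1
    have h2 := RITVaux.log_rel hA hzX hzpos l h0 h1
    show ∑ a : ↥A, l a * (Real.log (w a) - Real.log (w' a)) = 0
    have h3 : ∑ a : ↥A, l a * (Real.log (w a) - Real.log (w' a))
        = ∑ a : ↥A, l a * Real.log (z a)
          - (∑ a : ↥A, l a) * (Real.log (∑ b : ↥A, w' b * z b)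
            - Real.log (∑ b : ↥A, w b)) := by
      rw [Finset.sum_mul, ← Finset.sum_sub_distrib]
      refine Finset.sum_congr rfl fun a _ => ?_
      rw [hlog a]
      ring
    rw [h3, h2, h0]
    ring
  · intro hμ
    refine Set.Subset.antisymm (RITVaux.image_subset_of_aff hA hw hw' hμ)
      (RITVaux.image_subset_of_aff hA hw' hw ?_)
    obtain ⟨t₀, t, ht⟩ := hμ
    refine ⟨-t₀, fun j => -(t j), fun a => ?_⟩
    have h' : Real.log (w a) - Real.log (w' a) = t₀ + ∑ j, t j * (a : Fin d → ℝ) j := ht a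
    show Real.log (w' a) - Real.log (w a) = -t₀ + ∑ j, -(t j) * (a : Fin d → ℝ) j
    have hsum : ∑ j, -(t j) * (a : Fin d → ℝ) j = -∑ j, t j * (a : Fin d → ℝ) j := by
      rw [← Finset.sum_neg_distrib]
      exact Finset.sum_congr rfl fun j _ => neg_mul _ _
    rw [hsum]
    linarith
end

section
/- Let 𝒜 ⊂ ℝ^d be finite and X_𝒜 ⊂ ▵^𝒜 the closure of the image of φ_𝒜(x) = [x^a : a ∈ 𝒜]. Suppose α, β ∈ ℝ^𝒜_{≥0} satisfy Σ_a α_a a = Σ_a β_a a and Σ_a α_a = Σ_a β_a. Then every point z ∈ X_𝒜 satisfies ∏_{a∈𝒜} z_a^{α_a} = ∏_{a∈𝒜} z_a^{β_a} (with the convention 0^0 = 1, 0^t = 0 for t > 0). -/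
open Finset

private lemma rpow_sum_of_pos' {ι : Type*} [Fintype ι] {b : ℝ} (hb : 0 < b) (f : ι → ℝ) :
    b ^ (∑ i, f i) = ∏ i, b ^ f i := by
  rw [Real.rpow_def_of_pos hb, Finset.mul_sum, Real.exp_sum]
  exact Finset.prod_congr rfl fun i _ => (Real.rpow_def_of_pos hb _).symm

private lemma key_prod (d : ℕ) (A : Finset (Fin d → ℝ)) (x : Fin d → ℝ)
    (hx : ∀ j, 0 < x j) (γ : ↥A → ℝ) :
    ∏ a : ↥A, (∏ j, x j ^ ((a : Fin d → ℝ) j)) ^ γ a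
      = ∏ j, x j ^ ((∑ a : ↥A, γ a • (a : Fin d → ℝ)) j) := by
  have hp : ∀ a : ↥A, (0:ℝ) < ∏ j, x j ^ ((a : Fin d → ℝ) j) :=
    fun a => Finset.prod_pos fun j _ => Real.rpow_pos_of_pos (hx j) _
  have hlog : ∀ a : ↥A, Real.log (∏ j, x j ^ ((a : Fin d → ℝ) j))
      = ∑ j, (a : Fin d → ℝ) j * Real.log (x j) := by
    intro a
    rw [Real.log_prod fun j _ => (Real.rpow_pos_of_pos (hx j) _).ne']
    exact Finset.sum_congr rfl fun j _ => Real.log_rpow (hx j) _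
  calc ∏ a : ↥A, (∏ j, x j ^ ((a : Fin d → ℝ) j)) ^ γ a
      = ∏ a : ↥A, Real.exp ((∑ j, (a : Fin d → ℝ) j * Real.log (x j)) * γ a) := by
        refine Finset.prod_congr rfl fun a _ => ?_
        rw [Real.rpow_def_of_pos (hp a), hlog a]
    _ = Real.exp (∑ a : ↥A, (∑ j, (a : Fin d → ℝ) j * Real.log (x j)) * γ a) :=
        (Real.exp_sum _ _).symm
    _ = Real.exp (∑ j, Real.log (x j) * ((∑ a : ↥A, γ a • (a : Fin d → ℝ)) j)) := by
        congr 1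
        simp only [Finset.sum_apply, Pi.smul_apply, smul_eq_mul, Finset.sum_mul, Finset.mul_sum]
        rw [Finset.sum_comm]
        exact Finset.sum_congr rfl fun j _ => Finset.sum_congr rfl fun a _ => by ring
    _ = ∏ j, x j ^ ((∑ a : ↥A, γ a • (a : Fin d → ℝ)) j) := by
        rw [Real.exp_sum]
        exact Finset.prod_congr rfl fun j _ => (Real.rpow_def_of_pos (hx j) _).symm

/-- Every nonnegative affine relation `Σ α_a a = Σ β_a a`, `Σ α_a = Σ β_a` among the
points of `𝒜` yields a valid binomial equation `∏ z_a^{α_a} = ∏ z_a^{β_a}` on the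
real irrational toric variety `X_𝒜` (real powers, with `0^0 = 1`, `0^t = 0` for `t>0`). -/
theorem binomial_equation_of_affine_relation (d : ℕ) (A : Finset (Fin d → ℝ))
    (α β : ↥A → ℝ) (hα : ∀ a, 0 ≤ α a) (hβ : ∀ a, 0 ≤ β a)
    (hrel : (∑ a : ↥A, α a • (a : Fin d → ℝ)) = ∑ a : ↥A, β a • (a : Fin d → ℝ))
    (hsum : (∑ a : ↥A, α a) = ∑ a : ↥A, β a)
    (z : ↥A → ℝ) (hz : z ∈ toricVariety d A) :
    (∏ a : ↥A, z a ^ α a) = ∏ a : ↥A, z a ^ β a := by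
  have hC : ∀ γ : ↥A → ℝ, (∀ a, 0 ≤ γ a) →
      Continuous fun w : ↥A → ℝ => ∏ a : ↥A, w a ^ γ a := fun γ hγ =>
    continuous_finset_prod _ fun a _ =>
      (continuous_apply a).rpow_const fun w => Or.inr (hγ a)
  have hclosed : IsClosed {w : ↥A → ℝ | (∏ a : ↥A, w a ^ α a) = ∏ a : ↥A, w a ^ β a} :=
    isClosed_eq (hC α hα) (hC β hβ)
  refine closure_minimal ?_ hclosed hz
  rintro w ⟨x, hx, rfl⟩
  show (∏ a : ↥A, _ ^ α a) = ∏ a : ↥A, _ ^ β a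
  cases isEmpty_or_nonempty ↥A with
  | inl h => simp
  | inr h =>
    have hp : ∀ a : ↥A, (0:ℝ) < ∏ j, x j ^ ((a : Fin d → ℝ) j) :=
      fun a => Finset.prod_pos fun j _ => Real.rpow_pos_of_pos (hx j) _
    have hS : (0:ℝ) < ∑ b : ↥A, ∏ j, x j ^ ((b : Fin d → ℝ) j) :=
      Finset.sum_pos (fun b _ => hp b) Finset.univ_nonempty
    have hsplit : ∀ γ : ↥A → ℝ,
        (∏ a : ↥A, simplexNormalize d A (toricMonomial d A x) a ^ γ a)
          = (∏ a : ↥A, (∏ j, x j ^ ((a : Fin d → ℝ) j)) ^ γ a) /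
            (∑ b : ↥A, ∏ j, x j ^ ((b : Fin d → ℝ) j)) ^ (∑ a : ↥A, γ a) := by
      intro γ
      rw [rpow_sum_of_pos' hS, ← Finset.prod_div_distrib]
      refine Finset.prod_congr rfl fun a _ => ?_
      simp only [simplexNormalize, toricMonomial]
      rw [Real.div_rpow (hp a).le hS.le]
    rw [hsplit α, hsplit β, key_prod d A x hx α, key_prod d A x hx β, hrel, hsum]
end

section
/- Let 𝒜 ⊂ ℝ^d be finite, w_i ∈ ℝ^𝒜_{>0} a sequence with w_i → w in ℝ^𝒜_{>0}, and X_{𝒜,w} := w.X_𝒜 the translated real irrational toric variety. Then X_{𝒜,w_i} → X_{𝒜,w} in the Hausdorff metric on closed subsets of ▵^𝒜. -/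
open Finset Filter

/-- The ℓ¹-distance on `ℝ^𝒜`. -/
noncomputable def l1dist (d : ℕ) (A : Finset (Fin d → ℝ)) (y z : ↥A → ℝ) : ℝ :=
  ∑ a : ↥A, |y a - z a|

/-- Convergence of a sequence of subsets of `▵^𝒜` to `Y` in the Hausdorff metric
associated to the ℓ¹-distance. -/
def HausdorffTendsto (d : ℕ) (A : Finset (Fin d → ℝ)) (X : ℕ → Set (↥A → ℝ))
    (Y : Set (↥A → ℝ)) : Prop :=
  ∀ ε > (0 : ℝ), ∀ᶠ i in atTop,
    (∀ z ∈ X i, ∃ y ∈ Y, l1dist d A z y < ε) ∧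
    (∀ y ∈ Y, ∃ z ∈ X i, l1dist d A z y < ε)

lemma l1dist_comm (d : ℕ) (A : Finset (Fin d → ℝ)) (y z : ↥A → ℝ) :
    l1dist d A y z = l1dist d A z y := by
  unfold l1dist
  exact Finset.sum_congr rfl fun a _ => abs_sub_comm _ _

lemma toricVariety_nonempty (d : ℕ) (A : Finset (Fin d → ℝ)) :
    (toricVariety d A).Nonempty :=
  ⟨simplexNormalize d A (toricMonomial d A (fun _ => 1)),
    subset_closure ⟨fun _ => 1, fun _ => one_pos, rfl⟩⟩

lemma mem_simplex_of_mem_toricVariety (d : ℕ) (A : Finset (Fin d → ℝ)) (hA : A.Nonempty)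
    {z : ↥A → ℝ} (hz : z ∈ toricVariety d A) :
    (∀ a, 0 ≤ z a) ∧ ∑ a : ↥A, z a = 1 := by
  have hNE : Nonempty ↥A := hA.to_subtype
  have h1 : IsClosed {z : ↥A → ℝ | ∀ a, 0 ≤ z a} := by
    have : {z : ↥A → ℝ | ∀ a, 0 ≤ z a} = ⋂ a, {z | 0 ≤ z a} := by
      ext; simp [Set.mem_iInter]
    rw [this]
    exact isClosed_iInter fun a => isClosed_le continuous_const (continuous_apply a)
  have h2 : IsClosed {z : ↥A → ℝ | ∑ a : ↥A, z a = 1} :=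
    isClosed_eq (continuous_finset_sum _ fun a _ => continuous_apply a) continuous_const
  have hsub : {z : ↥A → ℝ | ∃ x : Fin d → ℝ, (∀ j, 0 < x j) ∧
      z = simplexNormalize d A (toricMonomial d A x)} ⊆
      {z : ↥A → ℝ | ∀ a, 0 ≤ z a} ∩ {z : ↥A → ℝ | ∑ a : ↥A, z a = 1} := by
    rintro z ⟨x, hx, rfl⟩
    have ht : ∀ a : ↥A, 0 < toricMonomial d A x a := fun a =>
      Finset.prod_pos fun j _ => Real.rpow_pos_of_pos (hx j) _
    have hT : 0 < ∑ b : ↥A, toricMonomial d A x b :=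
      Finset.sum_pos (fun b _ => ht b) Finset.univ_nonempty
    constructor
    · intro a
      exact div_nonneg (ht a).le hT.le
    · show ∑ a : ↥A, toricMonomial d A x a / (∑ b : ↥A, toricMonomial d A x b) = 1
      rw [← Finset.sum_div, div_self hT.ne']
  have := closure_minimal hsub (h1.inter h2) hz
  exact ⟨this.1, this.2⟩

lemma key_estimate (d : ℕ) (A : Finset (Fin d → ℝ)) (z u v : ↥A → ℝ)
    (hz : ∀ a, 0 ≤ z a) (hz1 : ∑ a : ↥A, z a = 1)
    (m δ : ℝ) (hm : 0 < m) (hu : ∀ a, m ≤ u a) (hv : ∀ a, 0 < v a)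
    (hδ : ∀ a, |u a - v a| ≤ δ) :
    l1dist d A (torusAct d A u z) (torusAct d A v z) ≤ 2 * δ / m := by
  set Su := ∑ a : ↥A, u a * z a with hSu
  set Sv := ∑ a : ↥A, v a * z a with hSv
  have hSum : m ≤ Su := by
    calc m = ∑ a : ↥A, m * z a := by rw [← Finset.mul_sum, hz1, mul_one]
      _ ≤ Su := Finset.sum_le_sum fun a _ => mul_le_mul_of_nonneg_right (hu a) (hz a)
  have hSu0 : 0 < Su := lt_of_lt_of_le hm hSum
  obtain ⟨a0, ha0⟩ : ∃ a, 0 < z a := by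
    by_contra h
    push_neg at h
    have : ∑ a : ↥A, z a ≤ 0 := Finset.sum_nonpos fun a _ => h a
    linarith
  have hSv0 : 0 < Sv :=
    lt_of_lt_of_le (mul_pos (hv a0) ha0)
      (Finset.single_le_sum (fun a _ => mul_nonneg (hv a).le (hz a)) (Finset.mem_univ a0))
  set D := ∑ a : ↥A, |u a - v a| * z a with hDdef
  have hD : D ≤ δ := by
    calc D ≤ ∑ a : ↥A, δ * z a :=
        Finset.sum_le_sum fun a _ => mul_le_mul_of_nonneg_right (hδ a) (hz a)
      _ = δ := by rw [← Finset.mul_sum, hz1, mul_one]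
  have hD0 : 0 ≤ D := Finset.sum_nonneg fun a _ => mul_nonneg (abs_nonneg _) (hz a)
  have hSdiff : |Sv - Su| ≤ D := by
    have heq : Sv - Su = ∑ a : ↥A, (v a - u a) * z a := by
      rw [hSv, hSu, ← Finset.sum_sub_distrib]
      exact Finset.sum_congr rfl fun a _ => by ring
    rw [heq]
    calc |∑ a : ↥A, (v a - u a) * z a| ≤ ∑ a : ↥A, |(v a - u a) * z a| :=
        Finset.abs_sum_le_sum_abs _ _
      _ = D := Finset.sum_congr rfl fun a _ => by
          rw [abs_mul, abs_of_nonneg (hz a), abs_sub_comm]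
  have hterm : ∀ a : ↥A, |u a * z a / Su - v a * z a / Sv| ≤
      |u a - v a| * z a / Su + v a * z a * |Sv - Su| / (Su * Sv) := by
    intro a
    have heq : u a * z a / Su - v a * z a / Sv
        = (u a - v a) * z a / Su + v a * z a * (Sv - Su) / (Su * Sv) := by
      field_simp
      ring
    rw [heq]
    refine le_trans (abs_add_le _ _) (le_of_eq ?_)
    rw [abs_div, abs_div, abs_mul, abs_mul, abs_mul,
      abs_of_nonneg (hz a), abs_of_pos hSu0, abs_of_pos (mul_pos hSu0 hSv0),
      abs_of_pos (hv a)]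
  have hmain : l1dist d A (torusAct d A u z) (torusAct d A v z)
      ≤ ∑ a : ↥A, (|u a - v a| * z a / Su + v a * z a * |Sv - Su| / (Su * Sv)) := by
    unfold l1dist torusAct simplexNormalize
    exact Finset.sum_le_sum fun a _ => hterm a
  have hsplit : ∑ a : ↥A, (|u a - v a| * z a / Su + v a * z a * |Sv - Su| / (Su * Sv))
      = D / Su + Sv * |Sv - Su| / (Su * Sv) := by
    rw [Finset.sum_add_distrib, ← Finset.sum_div]
    congr 1
    rw [← Finset.sum_div, ← Finset.sum_mul]
  have hsecond : Sv * |Sv - Su| / (Su * Sv) = |Sv - Su| / Su := by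
    field_simp
  calc l1dist d A (torusAct d A u z) (torusAct d A v z)
      ≤ D / Su + Sv * |Sv - Su| / (Su * Sv) := by rw [← hsplit]; exact hmain
    _ = D / Su + |Sv - Su| / Su := by rw [hsecond]
    _ ≤ D / Su + D / Su := by gcongr
    _ = 2 * D / Su := by ring
    _ ≤ 2 * δ / m := div_le_div₀ (by linarith) (by linarith) hm hSum

/-- If the weights `w_i ∈ ℝ^𝒜_{>0}` converge to `w ∈ ℝ^𝒜_{>0}`, then the translated
toric varieties `X_{𝒜,w_i}` converge to `X_{𝒜,w}` in the Hausdorff metric. -/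
theorem translate_tendsto_of_weights_tendsto (d : ℕ) (A : Finset (Fin d → ℝ))
    (w : ℕ → ↥A → ℝ) (hw : ∀ i a, 0 < w i a)
    (wlim : ↥A → ℝ) (hwlim : ∀ a, 0 < wlim a)
    (hconv : Tendsto w atTop (nhds wlim)) :
    HausdorffTendsto d A (fun i => torusAct d A (w i) '' toricVariety d A)
      (torusAct d A wlim '' toricVariety d A) := by
  intro ε hε
  rcases A.eq_empty_or_nonempty with hA | hA
  · have hE : IsEmpty ↥A := by
      subst hA
      exact ⟨fun a => absurd a.2 (Finset.notMem_empty _)⟩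
    have hzero : ∀ y z : ↥A → ℝ, l1dist d A y z = 0 := by
      intro y z
      unfold l1dist
      simp
    obtain ⟨p, hp⟩ := toricVariety_nonempty d A
    filter_upwards with i
    refine ⟨fun z _ => ⟨torusAct d A wlim p, ⟨p, hp, rfl⟩, by rw [hzero]; exact hε⟩,
      fun y _ => ⟨torusAct d A (w i) p, ⟨p, hp, rfl⟩, by rw [hzero]; exact hε⟩⟩
  · have hNE : Nonempty ↥A := hA.to_subtype
    set m := Finset.univ.inf' Finset.univ_nonempty wlim with hm
    have hm0 : 0 < m := (Finset.lt_inf'_iff _).mpr fun a _ => hwlim a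
    have hmle : ∀ a, m ≤ wlim a := fun a => Finset.inf'_le _ (Finset.mem_univ a)
    set δ := ε * m / 4 with hδdef
    have hδ0 : 0 < δ := by positivity
    have hev : ∀ᶠ i in atTop, ∀ a, |w i a - wlim a| ≤ δ := by
      refine Filter.eventually_all.mpr fun a => ?_
      have h1 : Tendsto (fun i => w i a) atTop (nhds (wlim a)) :=
        tendsto_pi_nhds.mp hconv a
      have h2 := h1.eventually (Metric.ball_mem_nhds (wlim a) hδ0)
      filter_upwards [h2] with i hi
      rw [Real.dist_eq] at hi
      exact hi.le
    have hlt : 2 * δ / m < ε := by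
      have : 2 * δ / m = ε / 2 := by
        rw [hδdef]
        field_simp
        ring
      rw [this]
      linarith
    filter_upwards [hev] with i hi
    have hbound : ∀ z ∈ toricVariety d A,
        l1dist d A (torusAct d A wlim z) (torusAct d A (w i) z) < ε := by
      intro z hz
      obtain ⟨hz0, hz1⟩ := mem_simplex_of_mem_toricVariety d A hA hz
      exact lt_of_le_of_lt
        (key_estimate d A z wlim (w i) hz0 hz1 m δ hm0 hmle (hw i) (fun a => by rw [abs_sub_comm]; exact hi a)) hlt
    constructor
    · rintro z' ⟨z, hz, rfl⟩
      exact ⟨torusAct d A wlim z, ⟨z, hz, rfl⟩,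
        by rw [l1dist_comm]; exact hbound z hz⟩
    · rintro y ⟨z, hz, rfl⟩
      exact ⟨torusAct d A (w i) z, ⟨z, hz, rfl⟩,
        by rw [l1dist_comm]; exact hbound z hz⟩
end

section
/- Let φ : ℝ^N → ℝ be a linear functional, τ ⊂ ℝ^N a polyhedral cone with φ ≤ 0 on τ, σ a face of τ with φ < 0 on the relative interior of σ, and {v_i} ⊂ τ a sequence such that for every v ∈ σ all but finitely many v_i − v lie in τ. If all but finitely many v_i lie in the relative interior of τ and φ < 0 on the relative interior of τ, then φ(v_i) → −∞. -/
open Filter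

/-- Key analytic step: if `φ ≤ 0` on the polyhedral cone `τ`, `φ < 0` on the relative
interiors of `τ` and of a face `σ`, the sequence `{v_i} ⊂ τ` eventually satisfies
`v_i − v ∈ τ` for every `v ∈ σ`, and all but finitely many `v_i` lie in the relative
interior of `τ`, then `φ(v_i) → −∞`. -/
theorem tendsto_atBot_of_min_face (N : ℕ) (φ : (Fin N → ℝ) →ₗ[ℝ] ℝ)
    (Ψ S : Finset ((Fin N → ℝ) →ₗ[ℝ] ℝ)) (hS : S ⊆ Ψ)
    (hφτ : ∀ x ∈ polyCone N Ψ, φ x ≤ 0)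
    (hφσ : ∀ x ∈ intrinsicInterior ℝ (polyFace N Ψ S), φ x < 0)
    (v : ℕ → (Fin N → ℝ)) (hv : ∀ i, v i ∈ polyCone N Ψ)
    (hsub : ∀ v₀ ∈ polyFace N Ψ S, ∀ᶠ i in atTop, v i - v₀ ∈ polyCone N Ψ)
    (hrelint : ∀ᶠ i in atTop, v i ∈ intrinsicInterior ℝ (polyCone N Ψ))
    (hφrelint : ∀ x ∈ intrinsicInterior ℝ (polyCone N Ψ), φ x < 0) :
    Tendsto (fun i => φ (v i)) atTop atBot := by

  have hconv : Convex ℝ (polyFace N Ψ S) := by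
    intro x hx y hy a b ha hb hab
    refine ⟨fun ψ hψ => ?_, fun ψ hψ => ?_⟩
    · have h1 := hx.1 ψ hψ
      have h2 := hy.1 ψ hψ
      simp only [map_add, map_smul, smul_eq_mul]
      nlinarith
    · simp [map_add, map_smul, hx.2 ψ hψ, hy.2 ψ hψ]
  have hne : (polyFace N Ψ S).Nonempty := ⟨0, by simp [polyFace]⟩
  obtain ⟨v₀, hv₀⟩ := (intrinsicInterior_nonempty hconv).mpr hne
  have hφv₀ : φ v₀ < 0 := hφσ v₀ hv₀
  have hv₀σ : v₀ ∈ polyFace N Ψ S := intrinsicInterior_subset hv₀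
  rw [tendsto_atBot]
  intro b
  rcases le_or_gt 0 b with hb | hb
  · filter_upwards with i using le_trans (hφτ _ (hv i)) hb
  · set t := b / φ v₀ with ht
    have ht0 : 0 ≤ t := le_of_lt (div_pos_of_neg_of_neg hb hφv₀)
    have hmem : t • v₀ ∈ polyFace N Ψ S := by
      refine ⟨fun ψ hψ => ?_, fun ψ hψ => ?_⟩
      · simp only [map_smul, smul_eq_mul]
        exact mul_nonneg ht0 (hv₀σ.1 ψ hψ)
      · simp [map_smul, hv₀σ.2 ψ hψ]
    filter_upwards [hsub (t • v₀) hmem] with i hi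
    have h1 : φ (v i - t • v₀) ≤ 0 := hφτ _ hi
    have h2 : t * φ v₀ = b := div_mul_cancel₀ b hφv₀.ne
    simp only [map_sub, map_smul, smul_eq_mul] at h1
    linarith
end

section
/- Let 𝒜 ⊂ ℝ^d be finite, 𝒮 a polyhedral subdivision of 𝒜, w, w_i ∈ ℝ^𝒜_{>0} with X_{ℱ,w_i} → X_{ℱ,w} (Hausdorff) for every face ℱ of 𝒮. If y ∈ ▵^ℱ for some face ℱ of 𝒮 is an accumulation point of the sequence of sets {X_{𝒜,w_i}}, then y ∈ X_{ℱ,w} ⊆ X(𝒮,w). -/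
open Finset Filter

def IsPolySubdiv (d : ℕ) (A : Finset (Fin d → ℝ)) (S : Finset (Finset (Fin d → ℝ))) :
    Prop :=
  (∀ F ∈ S, F ⊆ A) ∧
  (convexHull ℝ (A : Set (Fin d → ℝ)) = ⋃ F ∈ S, convexHull ℝ (F : Set (Fin d → ℝ))) ∧
  (∀ F ∈ S, ∀ G ∈ S, F ∩ G ∈ S ∧
    convexHull ℝ ((F ∩ G : Finset (Fin d → ℝ)) : Set (Fin d → ℝ)) =
      convexHull ℝ (F : Set (Fin d → ℝ)) ∩ convexHull ℝ (G : Set (Fin d → ℝ))) ∧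
  (∀ F ∈ S, ∀ (c : Fin d → ℝ) (b : ℝ),
    (∀ x ∈ F, (∑ j, c j * x j) ≤ b) → F.filter (fun x => (∑ j, c j * x j) = b) ∈ S)

noncomputable def subMonomial (d : ℕ) (A F : Finset (Fin d → ℝ)) (x : Fin d → ℝ) :
    ↥A → ℝ := fun a =>
  if (a : Fin d → ℝ) ∈ F then ∏ j, (x j) ^ ((a : Fin d → ℝ) j) else 0

noncomputable def toricSubVariety (d : ℕ) (A F : Finset (Fin d → ℝ)) : Set (↥A → ℝ) :=
  closure {z | ∃ x : Fin d → ℝ, (∀ j, 0 < x j) ∧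
    z = simplexNormalize d A (subMonomial d A F x)}

/-- The face `▵^ℱ` of the standard simplex `▵^𝒜` supported on `ℱ`. -/
def simplexFace (d : ℕ) (A F : Finset (Fin d → ℝ)) : Set (↥A → ℝ) :=
  {z | z ∈ stdSimplex ℝ ↥A ∧ ∀ a : ↥A, (a : Fin d → ℝ) ∉ F → z a = 0}


section Helpers

variable {d : ℕ} {A F : Finset (Fin d → ℝ)}

/-- Restriction of a vector to the coordinates supported on `F` (zero elsewhere). -/
noncomputable def resv (d : ℕ) (A F : Finset (Fin d → ℝ)) (z : ↥A → ℝ) : ↥A → ℝ :=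
  fun a => (if (a : Fin d → ℝ) ∈ F then (1 : ℝ) else 0) * z a

lemma resv_nonneg {z : ↥A → ℝ} (hz : ∀ a, 0 ≤ z a) (a : ↥A) : 0 ≤ resv d A F z a := by
  unfold resv; split <;> simp [hz a]

lemma resv_le {z : ↥A → ℝ} (hz : ∀ a, 0 ≤ z a) (a : ↥A) : resv d A F z a ≤ z a := by
  unfold resv; split <;> simp [hz a]

lemma simplexNormalize_smul (u : ↥A → ℝ) {c : ℝ} (hc : c ≠ 0) :
    simplexNormalize d A (fun a => c * u a) = simplexNormalize d A u := by
  funext a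
  simp only [simplexNormalize, ← Finset.mul_sum]
  exact mul_div_mul_left _ _ hc

lemma simplexNormalize_mem (u : ↥A → ℝ) (h0 : ∀ a, 0 ≤ u a) (hs : 0 < ∑ a : ↥A, u a) :
    simplexNormalize d A u ∈ stdSimplex ℝ ↥A := by
  refine ⟨fun a => div_nonneg (h0 a) hs.le, ?_⟩
  simp only [simplexNormalize]
  rw [← Finset.sum_div, div_self hs.ne']

lemma toricMonomial_pos {x : Fin d → ℝ} (hx : ∀ j, 0 < x j) (a : ↥A) :
    0 < toricMonomial d A x a :=
  Finset.prod_pos fun j _ => Real.rpow_pos_of_pos (hx j) _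

lemma toricVariety_subset (hA : Nonempty ↥A) : toricVariety d A ⊆ stdSimplex ℝ ↥A := by
  apply closure_minimal _ (isCompact_stdSimplex _ _).isClosed
  rintro z ⟨x, hx, rfl⟩
  exact simplexNormalize_mem _ (fun a => (toricMonomial_pos hx a).le)
    (Finset.sum_pos (fun a _ => toricMonomial_pos hx a) Finset.univ_nonempty)

lemma subMonomial_nonneg {x : Fin d → ℝ} (hx : ∀ j, 0 < x j) (a : ↥A) :
    0 ≤ subMonomial d A F x a := by
  unfold subMonomial; split
  · exact (Finset.prod_pos fun j _ => Real.rpow_pos_of_pos (hx j) _).le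
  · exact le_refl 0

lemma toricSubVariety_subset (hF : ∃ a : ↥A, (a : Fin d → ℝ) ∈ F) :
    toricSubVariety d A F ⊆ stdSimplex ℝ ↥A := by
  apply closure_minimal _ (isCompact_stdSimplex _ _).isClosed
  rintro z ⟨x, hx, rfl⟩
  obtain ⟨a0, ha0⟩ := hF
  refine simplexNormalize_mem _ (subMonomial_nonneg hx) (Finset.sum_pos' (fun a _ => subMonomial_nonneg hx a) ⟨a0, Finset.mem_univ _, ?_⟩)
  unfold subMonomial
  rw [if_pos ha0]
  exact Finset.prod_pos fun j _ => Real.rpow_pos_of_pos (hx j) _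

lemma sum_mul_pos' {w z : ↥A → ℝ} (hw : ∀ a, 0 < w a) (hz : z ∈ stdSimplex ℝ ↥A) :
    0 < ∑ a : ↥A, w a * z a := by
  obtain ⟨a, ha⟩ : ∃ a, 0 < z a := by
    by_contra h
    push_neg at h
    have h2 : (∑ a : ↥A, z a) ≤ 0 := Finset.sum_nonpos fun a _ => h a
    rw [hz.2] at h2; linarith
  exact Finset.sum_pos' (fun a _ => mul_nonneg (hw a).le (hz.1 a))
    ⟨a, Finset.mem_univ a, mul_pos (hw a) ha⟩

lemma torusAct_mem {w z : ↥A → ℝ} (hw : ∀ a, 0 < w a) (hz : z ∈ stdSimplex ℝ ↥A) :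
    torusAct d A w z ∈ stdSimplex ℝ ↥A :=
  simplexNormalize_mem _ (fun a => mul_nonneg (hw a).le (hz.1 a)) (sum_mul_pos' hw hz)

lemma torusAct_continuousOn {w : ↥A → ℝ} (hw : ∀ a, 0 < w a) :
    ContinuousOn (torusAct d A w) (stdSimplex ℝ ↥A) := by
  rw [continuousOn_pi]
  intro a
  simp only [torusAct, simplexNormalize]
  apply ContinuousOn.div
  · exact (continuous_const.mul (continuous_apply a)).continuousOn
  · exact (continuous_finset_sum _ fun b _ => continuous_const.mul (continuous_apply b)).continuousOn
  · intro z hz; exact (sum_mul_pos' hw hz).ne'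

lemma proj_torusAct {w v : ↥A → ℝ} (hT : (∑ a : ↥A, w a * v a) ≠ 0)
    (hR : (∑ a : ↥A, resv d A F v a) ≠ 0) :
    simplexNormalize d A (resv d A F (torusAct d A w v)) =
      torusAct d A w (simplexNormalize d A (resv d A F v)) := by
  have h1 : resv d A F (torusAct d A w v) =
      fun a => (∑ b : ↥A, w b * v b)⁻¹ * resv d A F (fun b => w b * v b) a := by
    funext a
    simp only [resv, torusAct, simplexNormalize]
    rw [div_eq_inv_mul]; ring
  have h2 : (fun a => w a * simplexNormalize d A (resv d A F v) a) =
      fun a => (∑ b : ↥A, resv d A F v b)⁻¹ * resv d A F (fun b => w b * v b) a := by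
    funext a
    simp only [resv, simplexNormalize]
    rw [div_eq_inv_mul]; ring
  have h3 : resv d A F (fun b => w b * v b) = fun a => resv d A F (fun b => w b * v b) a := rfl
  rw [h1, simplexNormalize_smul _ (inv_ne_zero hT), torusAct, h2,
    simplexNormalize_smul _ (inv_ne_zero hR)]

lemma proj_mem_sub (hF : ∃ a : ↥A, (a : Fin d → ℝ) ∈ F) {v : ↥A → ℝ}
    (hv : v ∈ toricVariety d A) (hR : (∑ a : ↥A, resv d A F v a) ≠ 0) :
    simplexNormalize d A (resv d A F v) ∈ toricSubVariety d A F := by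
  have hcont : ContinuousAt (fun z => simplexNormalize d A (resv d A F z)) v := by
    rw [continuousAt_pi]
    intro a
    simp only [simplexNormalize, resv]
    apply ContinuousAt.div
    · exact (continuous_const.mul (continuous_apply a)).continuousAt
    · exact (continuous_finset_sum _ fun b _ => continuous_const.mul (continuous_apply b)).continuousAt
    · exact hR
  have hmem := mem_closure_image hcont hv
  refine closure_mono ?_ hmem
  rintro _ ⟨u, ⟨x, hx, rfl⟩, rfl⟩
  refine ⟨x, hx, ?_⟩
  show simplexNormalize d A (resv d A F (simplexNormalize d A (toricMonomial d A x))) = _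
  have hT : (∑ a : ↥A, toricMonomial d A x a) ≠ 0 := by
    obtain ⟨a0, _⟩ := hF
    exact (Finset.sum_pos (fun a _ => toricMonomial_pos hx a) ⟨a0, Finset.mem_univ a0⟩).ne'
  have h1 : resv d A F (simplexNormalize d A (toricMonomial d A x)) =
      fun a => (∑ b : ↥A, toricMonomial d A x b)⁻¹ * resv d A F (toricMonomial d A x) a := by
    funext a
    simp only [resv, simplexNormalize]
    rw [div_eq_inv_mul]; ring
  have h2 : resv d A F (toricMonomial d A x) = subMonomial d A F x := by
    funext a
    simp only [resv, toricMonomial, subMonomial]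
    split <;> simp
  rw [h1, simplexNormalize_smul _ (inv_ne_zero hT), h2]

lemma l1dist_proj {z : ↥A → ℝ} (hz : z ∈ stdSimplex ℝ ↥A)
    (hs0 : 0 < ∑ a : ↥A, resv d A F z a) :
    l1dist d A z (simplexNormalize d A (resv d A F z)) =
      2 * (1 - ∑ a : ↥A, resv d A F z a) := by
  set s := ∑ a : ↥A, resv d A F z a with hsdef
  have hs1 : s ≤ 1 := by
    rw [hsdef, ← hz.2]
    exact Finset.sum_le_sum fun a _ => resv_le hz.1 a
  have key : ∀ a : ↥A, |z a - resv d A F z a / s| =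
      ((1 - s) / s) * resv d A F z a + (z a - resv d A F z a) := by
    intro a
    unfold resv
    by_cases h : (a : Fin d → ℝ) ∈ F
    · rw [if_pos h]
      have hza := hz.1 a
      rw [abs_of_nonpos]
      · field_simp; ring
      · rw [sub_nonpos, one_mul, le_div_iff₀ hs0]
        nlinarith
    · rw [if_neg h]
      rw [zero_mul, zero_div, sub_zero, abs_of_nonneg (hz.1 a)]
      ring
  unfold l1dist simplexNormalize
  rw [Finset.sum_congr rfl fun a _ => key a]
  rw [Finset.sum_add_distrib, ← Finset.mul_sum, Finset.sum_sub_distrib, ← hsdef, hz.2]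
  field_simp
  ring

lemma l1dist_triangle (y z z' : ↥A → ℝ) :
    l1dist d A y z' ≤ l1dist d A y z + l1dist d A z z' := by
  unfold l1dist
  rw [← Finset.sum_add_distrib]
  exact Finset.sum_le_sum fun a _ => (abs_sub_le _ _ _)

end Helpers
/-- If `X_{ℱ,w_i} → X_{ℱ,w}` for every face `ℱ` of the subdivision `𝒮` and
`y ∈ ▵^ℱ` is an accumulation point of the translated toric varieties `X_{𝒜,w_i}`,
then `y ∈ X_{ℱ,w} ⊆ X(𝒮,w)`. -/
theorem accumulation_point_in_face_variety (d : ℕ) (A : Finset (Fin d → ℝ))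
    (S : Finset (Finset (Fin d → ℝ))) (hS : IsPolySubdiv d A S)
    (w : ℕ → ↥A → ℝ) (hw : ∀ i a, 0 < w i a)
    (wlim : ↥A → ℝ) (hwlim : ∀ a, 0 < wlim a)
    (hfaceconv : ∀ F ∈ S, HausdorffTendsto d A
      (fun i => torusAct d A (w i) '' toricSubVariety d A F)
      (torusAct d A wlim '' toricSubVariety d A F))
    (F₀ : Finset (Fin d → ℝ)) (hF₀ : F₀ ∈ S)
    (y : ↥A → ℝ) (hyF : y ∈ simplexFace d A F₀)
    (hy : ∀ ε > (0 : ℝ),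
      {i : ℕ | ∃ z ∈ torusAct d A (w i) '' toricVariety d A,
        l1dist d A y z < ε}.Infinite) :
    y ∈ torusAct d A wlim '' toricSubVariety d A F₀ ∧
      y ∈ ⋃ F ∈ S, torusAct d A wlim '' toricSubVariety d A F := by
  obtain ⟨hystd, hysupp⟩ := hyF
  have hresy : resv d A F₀ y = y := by
    funext a
    unfold resv
    by_cases h : (a : Fin d → ℝ) ∈ F₀
    · rw [if_pos h, one_mul]
    · rw [if_neg h, zero_mul, hysupp a h]
  have hyF0sum : (∑ a : ↥A, resv d A F₀ y a) = 1 := by rw [hresy, hystd.2]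
  have hFA : ∃ a : ↥A, (a : Fin d → ℝ) ∈ F₀ := by
    by_contra h
    push_neg at h
    have h0 : (∑ a : ↥A, resv d A F₀ y a) = 0 :=
      Finset.sum_eq_zero fun a _ => by unfold resv; rw [if_neg (h a), zero_mul]
    rw [hyF0sum] at h0; norm_num at h0
  have hAne : Nonempty ↥A := ⟨hFA.choose⟩
  have hsubcl : toricSubVariety d A F₀ ⊆ stdSimplex ℝ ↥A := toricSubVariety_subset hFA
  have hYcomp : IsCompact (torusAct d A wlim '' toricSubVariety d A F₀) :=
    ((isCompact_stdSimplex _ _).of_isClosed_subset isClosed_closure hsubcl).image_of_continuousOn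
      ((torusAct_continuousOn hwlim).mono hsubcl)
  have hyY : y ∈ torusAct d A wlim '' toricSubVariety d A F₀ := by
    refine hYcomp.isClosed.closure_subset ?_
    rw [Metric.mem_closure_iff]
    intro ε hε
    set δ := min (ε / 6) (1 / 4 : ℝ) with hδdef
    have hδpos : 0 < δ := lt_min (by linarith) (by norm_num)
    have hδε : δ ≤ ε / 6 := min_le_left _ _
    have hδ4 : δ ≤ 1 / 4 := min_le_right _ _
    obtain ⟨N, hN⟩ := eventually_atTop.1 (hfaceconv F₀ hF₀ (ε / 2) (by linarith))
    obtain ⟨i, hiN, hzex⟩ : ∃ i, N ≤ i ∧ ∃ z ∈ torusAct d A (w i) '' toricVariety d A,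
        l1dist d A y z < δ := by
      by_contra h
      push_neg at h
      refine hy δ hδpos (Set.Finite.subset (Set.finite_Iio N) ?_)
      intro i hi
      simp only [Set.mem_setOf_eq] at hi
      by_contra hlt
      simp only [Set.mem_Iio, not_lt] at hlt
      obtain ⟨zz, hzz, hlt2⟩ := hi
      exact absurd hlt2 (not_lt.2 (h i hlt zz hzz))
    obtain ⟨z, hzmem, hzdist⟩ := hzex
    obtain ⟨v, hv, rfl⟩ := hzmem
    set z := torusAct d A (w i) v with hzdef
    have hvstd : v ∈ stdSimplex ℝ ↥A := toricVariety_subset hAne hv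
    have hzstd : z ∈ stdSimplex ℝ ↥A := torusAct_mem (hw i) hvstd
    set s := ∑ a : ↥A, resv d A F₀ z a with hsdef
    have hsge : 1 - δ ≤ s := by
      have h1 : (∑ a : ↥A, resv d A F₀ y a) - s ≤ l1dist d A y z := by
        rw [hsdef, ← Finset.sum_sub_distrib,
          show l1dist d A y z = ∑ b : ↥A, |y b - z b| from rfl]
        refine Finset.sum_le_sum fun a _ => ?_
        unfold resv
        split
        · rw [one_mul, one_mul]; exact le_abs_self _
        · rw [zero_mul, zero_mul, sub_zero]; exact abs_nonneg _
      rw [hyF0sum] at h1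
      linarith
    have hs0 : 0 < s := by linarith
    have hT : (∑ a : ↥A, w i a * v a) ≠ 0 := (sum_mul_pos' (hw i) hvstd).ne'
    have hR : (∑ a : ↥A, resv d A F₀ v a) ≠ 0 := by
      intro h0
      have hall : ∀ a : ↥A, resv d A F₀ v a = 0 := by
        intro a
        have := (Finset.sum_eq_zero_iff_of_nonneg
          (fun a _ => resv_nonneg hvstd.1 a)).1 h0 a (Finset.mem_univ a)
        exact this
      have hz0 : s = 0 := by
        rw [hsdef]
        refine Finset.sum_eq_zero fun a _ => ?_
        have ha := hall a
        unfold resv at ha ⊢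
        by_cases hmem : (a : Fin d → ℝ) ∈ F₀
        · rw [if_pos hmem, one_mul] at ha
          rw [if_pos hmem, one_mul, hzdef]
          simp only [torusAct, simplexNormalize]
          rw [ha, mul_zero, zero_div]
        · rw [if_neg hmem, zero_mul]
      rw [hz0] at hs0; exact lt_irrefl 0 hs0
    set z' := simplexNormalize d A (resv d A F₀ z) with hz'def
    have hz'mem : z' ∈ torusAct d A (w i) '' toricSubVariety d A F₀ := by
      rw [hz'def, hzdef, proj_torusAct hT hR]
      exact ⟨_, proj_mem_sub hFA hv hR, rfl⟩
    have hdzz' : l1dist d A z z' = 2 * (1 - s) := l1dist_proj hzstd hs0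
    obtain ⟨y', hy'Y, hy'dist⟩ := (hN i hiN).1 z' hz'mem
    refine ⟨y', hy'Y, ?_⟩
    have htri : l1dist d A y y' ≤ l1dist d A y z + (l1dist d A z z' + l1dist d A z' y') := by
      calc l1dist d A y y' ≤ l1dist d A y z + l1dist d A z y' := l1dist_triangle y z y'
      _ ≤ l1dist d A y z + (l1dist d A z z' + l1dist d A z' y') := by
          have := l1dist_triangle z z' y'
          linarith
    have hfinal : l1dist d A y y' < ε := by
      have h2s : 2 * (1 - s) ≤ 2 * δ := by linarith
      calc l1dist d A y y' ≤ l1dist d A y z + (l1dist d A z z' + l1dist d A z' y') := htri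
      _ < δ + (2 * δ + ε / 2) := by rw [hdzz'];linarith
      _ ≤ ε / 6 + (2 * (ε / 6) + ε / 2) := by linarith
      _ = ε := by ring
    rw [dist_pi_lt_iff hε]
    intro a
    rw [Real.dist_eq]
    calc |y a - y' a| ≤ l1dist d A y y' := by
          rw [show l1dist d A y y' = ∑ b : ↥A, |y b - y' b| from rfl]
          exact Finset.single_le_sum (f := fun b => |y b - y' b|)
            (fun b _ => abs_nonneg _) (Finset.mem_univ a)
    _ < ε := hfinal
  exact ⟨hyY, Set.mem_biUnion hF₀ hyY⟩
end
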